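/- arXiv:math/0206268 — 8 statements merged into one kernel-verified Lean document; each statement's English description precedes it below -/
import Mathlib

section
/- Let K be a field of characteristic zero, let r ≥ 0, let s ∈ K, and let g₀, g₁, …, g_r ∈ K[x] be nonzero polynomials whose orders of vanishing at s are α₀ < α₁ < ⋯ < α_r (a strictly increasing sequence of natural numbers). Then the Wronskian W = det((d/dx)^i g_j)_{0 ≤ i,j ≤ r} is a nonzero polynomial, and its order of vanishing at s is exactly Σ_{i=0}^{r} (α_i − i). -/
open Polynomial

/-- The Wronskian of a family of `r+1` polynomials: the determinant of the
`(r+1) × (r+1)` matrix whose `(i,j)` entry is the `i`-th formal derivative of the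
`j`-th polynomial. -/
noncomputable def wronskianFam {K : Type*} [CommRing K] {r : ℕ}
    (g : Fin (r + 1) → K[X]) : K[X] :=
  Matrix.det (Matrix.of fun i j : Fin (r + 1) => derivative^[(i : ℕ)] (g j))

lemma coeff_mul_low {K : Type*} [CommRing K] (p q : K[X]) (a b : ℕ)
    (hp : ∀ k < a, p.coeff k = 0) (hq : ∀ k < b, q.coeff k = 0) :
    (∀ k < a + b, (p * q).coeff k = 0) ∧ (p * q).coeff (a + b) = p.coeff a * q.coeff b := by
  constructor
  · intro k hk
    rw [coeff_mul]
    apply Finset.sum_eq_zero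
    rintro ⟨x, y⟩ hxy
    rw [Finset.HasAntidiagonal.mem_antidiagonal] at hxy
    rcases lt_or_ge x a with h | h
    · rw [hp x h, zero_mul]
    · rw [hq y (by omega), mul_zero]
  · rw [coeff_mul, Finset.sum_eq_single (a, b)]
    · rintro ⟨x, y⟩ hxy hne
      rw [Finset.HasAntidiagonal.mem_antidiagonal] at hxy
      rcases lt_or_ge x a with h | h
      · rw [hp x h, zero_mul]
      · have hy : y < b := by
          rcases lt_or_eq_of_le h with h' | h'
          · omega
          · exfalso; apply hne; subst h'; simp at hxy ⊢; omega
        rw [hq y hy, mul_zero]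
    · intro h
      simp [Finset.HasAntidiagonal.mem_antidiagonal] at h

lemma coeff_prod_low {K : Type*} [CommRing K] {ι : Type*} (s : Finset ι)
    (f : ι → K[X]) (a : ι → ℕ)
    (h : ∀ i ∈ s, ∀ k < a i, (f i).coeff k = 0) :
    (∀ k < ∑ i ∈ s, a i, (∏ i ∈ s, f i).coeff k = 0) ∧
      (∏ i ∈ s, f i).coeff (∑ i ∈ s, a i) = ∏ i ∈ s, (f i).coeff (a i) := by
  induction s using Finset.cons_induction with
  | empty => exact ⟨fun k hk => absurd hk (by simp), by simp⟩
  | cons i s his ih =>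
    obtain ⟨ih1, ih2⟩ := ih (fun j hj => h j (Finset.mem_cons_of_mem hj))
    rw [Finset.prod_cons, Finset.sum_cons]
    obtain ⟨m1, m2⟩ := coeff_mul_low (f i) (∏ j ∈ s, f j) (a i) (∑ j ∈ s, a j)
      (h i (Finset.mem_cons_self i s)) ih1
    exact ⟨m1, by rw [m2, ih2, Finset.prod_cons]⟩

lemma wronskian_ntd {K : Type*} [Field K] [CharZero K] (r : ℕ)
    (h : Fin (r + 1) → K[X]) (α : Fin (r + 1) → ℕ)
    (hh : ∀ i, h i ≠ 0) (hntd : ∀ i, (h i).natTrailingDegree = α i)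
    (hmono : StrictMono α) :
    wronskianFam h ≠ 0 ∧
      (wronskianFam h).natTrailingDegree = ∑ i : Fin (r + 1), (α i - (i : ℕ)) := by
  classical
  set N := ∑ i : Fin (r + 1), (α i - (i : ℕ)) with hN
  -- (i : ℕ) ≤ α i
  have hαi : ∀ i : Fin (r + 1), (i : ℕ) ≤ α i := by
    intro i
    induction i using Fin.induction with
    | zero => exact Nat.zero_le _
    | succ i ihp =>
      have h1 := hmono (Fin.castSucc_lt_succ (i := i))
      simp only [Fin.coe_castSucc] at ihp
      simp only [Fin.val_succ]
      omega
  have hsumN : (∑ i : Fin (r + 1), α i) = N + ∑ i : Fin (r + 1), (i : ℕ) := by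
    rw [hN, Finset.sum_tsub_distrib _ (fun i _ => hαi i)]
    have : (∑ i : Fin (r + 1), (i : ℕ)) ≤ ∑ i : Fin (r + 1), α i :=
      Finset.sum_le_sum fun i _ => hαi i
    omega
  -- trailing coefficients
  set c : Fin (r + 1) → K := fun j => (h j).coeff (α j) with hc
  have hcne : ∀ j, c j ≠ 0 := by
    intro j
    have : (h j).coeff (α j) = (h j).trailingCoeff := by
      rw [trailingCoeff, hntd j]
    rw [hc]; simp only []; rw [this]
    exact trailingCoeff_nonzero_iff_nonzero.mpr (hh j)
  set M : Matrix (Fin (r + 1)) (Fin (r + 1)) K :=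
    Matrix.of (fun i j => ((α j).descFactorial (i : ℕ) : K) * c j) with hM
  -- per-permutation analysis
  have key : ∀ σ : Equiv.Perm (Fin (r + 1)),
      (∀ k < N, (∏ i, derivative^[(σ i : ℕ)] (h i)).coeff k = 0) ∧
        (∏ i, derivative^[(σ i : ℕ)] (h i)).coeff N = ∏ i, M (σ i) i := by
    intro σ
    set a : Fin (r + 1) → ℕ := fun i => α i - (σ i : ℕ) with ha
    have hlow : ∀ i ∈ Finset.univ, ∀ k < a i, (derivative^[(σ i : ℕ)] (h i)).coeff k = 0 := by
      intro i _ k hk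
      rw [coeff_iterate_derivative]
      have : (h i).coeff (k + (σ i : ℕ)) = 0 := by
        apply coeff_eq_zero_of_lt_natTrailingDegree
        have haa : a i = α i - (σ i : ℕ) := rfl
        rw [hntd i]; omega
      rw [this, smul_zero]
    obtain ⟨p1, p2⟩ := coeff_prod_low Finset.univ _ a hlow
    have hsumσ : (∑ i : Fin (r + 1), ((σ i : ℕ))) = ∑ i : Fin (r + 1), (i : ℕ) :=
      Equiv.sum_comp σ (fun i => (i : ℕ))
    by_cases hA : ∀ i, (σ i : ℕ) ≤ α i
    · -- good permutation
      have hsa : (∑ i, a i) = N := by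
        rw [ha]
        rw [Finset.sum_tsub_distrib _ (fun i _ => hA i), hsumσ, hsumN]
        omega
      refine ⟨fun k hk => by rw [← hsa] at hk; exact p1 k hk, ?_⟩
      rw [← hsa, p2]
      apply Finset.prod_congr rfl
      intro i _
      rw [coeff_iterate_derivative]
      have hai : a i + (σ i : ℕ) = α i := by
        have : a i = α i - (σ i : ℕ) := rfl
        have := hA i
        omega
      rw [hai, hM]
      simp [nsmul_eq_mul, hc]
    · -- bad permutation: strictly higher trailing degree, and descFactorial vanishes
      push_neg at hA
      obtain ⟨i₀, hi₀⟩ := hA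
      have hlt : N < ∑ i, a i := by
        have h1 : ∀ i : Fin (r + 1), α i ≤ a i + (σ i : ℕ) := by
          intro i
          have : a i = α i - (σ i : ℕ) := rfl
          omega
        have h2 : α i₀ < a i₀ + (σ i₀ : ℕ) := by
          have : a i₀ = α i₀ - (σ i₀ : ℕ) := rfl
          omega
        have h3 : (∑ i, α i) < ∑ i, (a i + (σ i : ℕ)) :=
          Finset.sum_lt_sum (fun i _ => h1 i) ⟨i₀, Finset.mem_univ _, h2⟩
        rw [Finset.sum_add_distrib, hsumσ, hsumN] at h3
        omega
      constructor
      · intro k hk; exact p1 k (lt_trans hk hlt)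
      · rw [p1 N hlt]
        have : M (σ i₀) i₀ = 0 := by
          rw [hM]
          simp only [Matrix.of_apply]
          rw [Nat.descFactorial_eq_zero_iff_lt.mpr hi₀]
          simp
        rw [eq_comm]
        exact Finset.prod_eq_zero (f := fun i => M (σ i) i) (Finset.mem_univ i₀) this
  -- coefficient facts about the wronskian
  have hdet : wronskianFam h =
      ∑ σ : Equiv.Perm (Fin (r + 1)),
        Equiv.Perm.sign σ • ∏ i, derivative^[(σ i : ℕ)] (h i) := by
    rw [wronskianFam, Matrix.det_apply]
    rfl
  have hcoeff_low : ∀ k < N, (wronskianFam h).coeff k = 0 := by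
    intro k hk
    rw [hdet, finset_sum_coeff]
    apply Finset.sum_eq_zero
    intro σ _
    rw [coeff_smul, (key σ).1 k hk, smul_zero]
  have hcoeffN : (wronskianFam h).coeff N = M.det := by
    rw [hdet, finset_sum_coeff, Matrix.det_apply]
    apply Finset.sum_congr rfl
    intro σ _
    rw [coeff_smul, (key σ).2]
  -- the determinant is nonzero
  have hMdet : M.det ≠ 0 := by
    have hfact : M = Matrix.of (fun i j : Fin (r + 1) => c j *
        ((descPochhammer K (i : ℕ)).eval ((α j : K)))) := by
      ext i j
      rw [hM]
      simp only [Matrix.of_apply]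
      rw [descPochhammer_eval_eq_descFactorial, mul_comm]
    have hdm := Matrix.det_mul_row c (Matrix.of fun i j : Fin (r + 1) =>
      (descPochhammer K (i : ℕ)).eval ((α j : K)))
    simp only [Matrix.of_apply] at hdm
    rw [hfact, hdm]
    apply mul_ne_zero
    · exact Finset.prod_ne_zero_iff.mpr fun j _ => hcne j
    · have := Matrix.det_eval_matrixOfPolynomials_eq_det_vandermonde
        (fun j : Fin (r + 1) => (α j : K))
        (fun i => descPochhammer K (i : ℕ))
        (fun i => descPochhammer_natDegree K (i : ℕ))
        (fun i => monic_descPochhammer K (i : ℕ))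
      have hT : (Matrix.of fun i j : Fin (r + 1) =>
          (descPochhammer K (i : ℕ)).eval ((α j : K))) =
          Matrix.transpose (Matrix.of fun i j : Fin (r + 1) =>
            (descPochhammer K (j : ℕ)).eval ((α i : K))) := by
        ext i j; rfl
      have hgoal : (Matrix.of fun i j : Fin (r + 1) =>
          (descPochhammer K (i : ℕ)).eval ((α j : K))).det ≠ 0 := by
        rw [hT, Matrix.det_transpose, ← this, Matrix.det_vandermonde_ne_zero_iff]
        intro i j hij
        exact hmono.injective (Nat.cast_injective hij)
      exact hgoal
  have hWne : (wronskianFam h).coeff N ≠ 0 := by rw [hcoeffN]; exact hMdet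
  have hW0 : wronskianFam h ≠ 0 := fun h0 => hWne (by rw [h0, coeff_zero])
  refine ⟨hW0, le_antisymm (natTrailingDegree_le_of_ne_zero hWne)
    (le_natTrailingDegree hW0 hcoeff_low)⟩

lemma iterate_derivative_comp_X_add_C' {K : Type*} [CommRing K] (p : K[X]) (s : K) (i : ℕ) :
    (derivative^[i] p).comp (X + C s) = derivative^[i] (p.comp (X + C s)) := by
  induction i with
  | zero => rfl
  | succ i ih =>
    rw [Function.iterate_succ_apply', Function.iterate_succ_apply', ← ih, derivative_comp]
    simp

/-- If `g₀, …, g_r` are nonzero polynomials over a field of characteristic zero whose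
orders of vanishing at `s` form a strictly increasing sequence `α₀ < α₁ < ⋯ < α_r`,
then their Wronskian is nonzero and vanishes at `s` to order exactly `Σ (αᵢ − i)`. -/
theorem wronskian_rootMultiplicity {K : Type*} [Field K] [CharZero K] (r : ℕ) (s : K)
    (g : Fin (r + 1) → K[X]) (α : Fin (r + 1) → ℕ)
    (hg : ∀ i, g i ≠ 0)
    (hord : ∀ i, rootMultiplicity s (g i) = α i)
    (hmono : StrictMono α) :
    wronskianFam g ≠ 0 ∧
      rootMultiplicity s (wronskianFam g) = ∑ i : Fin (r + 1), (α i - (i : ℕ)) := by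
  set h : Fin (r + 1) → K[X] := fun j => (g j).comp (X + C s) with hdef
  have hcomp : wronskianFam h = (wronskianFam g).comp (X + C s) := by
    rw [wronskianFam, wronskianFam]
    have hmap := RingHom.map_det (eval₂RingHom C (X + C s))
      (Matrix.of fun i j : Fin (r + 1) => derivative^[(i : ℕ)] (g j))
    have h1 : (eval₂RingHom C (X + C s)) (Matrix.of fun i j : Fin (r + 1) =>
        derivative^[(i : ℕ)] (g j)).det = (wronskianFam g).comp (X + C s) := rfl
    rw [wronskianFam] at h1
    rw [← h1, hmap]
    congr 1
    refine Matrix.ext fun i j => ?_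
    simp only [RingHom.mapMatrix_apply, Matrix.map_apply, Matrix.of_apply, coe_eval₂RingHom]
    exact (iterate_derivative_comp_X_add_C' (g j) s (i : ℕ)).symm
  have hh : ∀ i, h i ≠ 0 := fun i => comp_X_add_C_ne_zero_iff.mpr (hg i)
  have hntd : ∀ i, (h i).natTrailingDegree = α i := fun i => by
    rw [hdef]
    simp only []
    rw [← rootMultiplicity_eq_natTrailingDegree, hord i]
  obtain ⟨hW, hN⟩ := wronskian_ntd r h α hh hntd hmono
  constructor
  · intro h0
    apply hW
    rw [hcomp, h0, zero_comp]
  · rw [rootMultiplicity_eq_natTrailingDegree, ← hcomp, hN]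
end

section
/- Let r ≤ d be natural numbers and let p₀, p₁, …, p_r ∈ ℂ[x] be linearly independent polynomials, each of degree at most d. Then their Wronskian W = det((d/dx)^i p_j)_{0 ≤ i,j ≤ r} is a nonzero polynomial of degree at most (r+1)(d−r). -/
open Polynomial

/-- Nonzero polynomials with pairwise distinct `natDegree`s are linearly independent. -/
private lemma linIndep_of_deg {ι : Type*} (f : ι → ℂ[X]) (h0 : ∀ i, f i ≠ 0)
    (hinj : Function.Injective fun i => (f i).natDegree) :
    LinearIndependent ℂ f := by
  classical
  rw [linearIndependent_iff']
  intro t g hsum i hit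
  by_contra hgi
  have hne : (t.filter fun i => g i ≠ 0).Nonempty := ⟨i, Finset.mem_filter.mpr ⟨hit, hgi⟩⟩
  obtain ⟨i0, hi0, hmax⟩ := Finset.exists_max_image _ (fun i => (f i).natDegree) hne
  obtain ⟨hi0t, hgi0⟩ := Finset.mem_filter.mp hi0
  have hco := congrArg (fun q : ℂ[X] => q.coeff (f i0).natDegree) hsum
  simp only [finset_sum_coeff, coeff_smul, coeff_zero, smul_eq_mul] at hco
  rw [Finset.sum_eq_single i0] at hco
  · rcases mul_eq_zero.mp hco with h | h
    · exact hgi0 h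
    · exact h0 i0 (leadingCoeff_eq_zero.mp h)
  · intro j hjt hji
    by_cases hgj : g j = 0
    · simp [hgj]
    · have hjf : j ∈ t.filter fun i => g i ≠ 0 := Finset.mem_filter.mpr ⟨hjt, hgj⟩
      have hle : (f j).natDegree ≤ (f i0).natDegree := hmax j hjf
      have hne' : (f j).natDegree ≠ (f i0).natDegree := fun h => hji (hinj h)
      rw [coeff_eq_zero_of_natDegree_lt (lt_of_le_of_ne hle hne'), mul_zero]
  · intro h; exact absurd hi0t h

/-- coefficient of a product at the sum of degree bounds. -/
private lemma coeff_prod_of_le {ι : Type*} (s : Finset ι) (f : ι → ℂ[X]) (n : ι → ℕ)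
    (h : ∀ i ∈ s, (f i).natDegree ≤ n i) :
    (∏ i ∈ s, f i).coeff (∑ i ∈ s, n i) = ∏ i ∈ s, (f i).coeff (n i) := by
  classical
  induction s using Finset.cons_induction with
  | empty => simp
  | cons a s ha ih =>
    rw [Finset.prod_cons, Finset.sum_cons, Finset.prod_cons,
      coeff_mul_add_eq_of_natDegree_le (h a (Finset.mem_cons_self a s))
        ((natDegree_prod_le _ _).trans
          (Finset.sum_le_sum fun i hi => h i (Finset.mem_cons_of_mem hi))),
      ih fun i hi => h i (Finset.mem_cons_of_mem hi)]

private lemma strictAnti_add_le {n : ℕ} (e : Fin (n + 1) → ℕ) (he : StrictAnti e) :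
    ∀ j : Fin (n + 1), e j + j ≤ e 0 := by
  intro j
  induction j using Fin.induction with
  | zero => simp
  | succ i ih =>
    have h1 : e i.succ < e i.castSucc := he (Fin.castSucc_lt_succ (i := i))
    have h2 := ih
    simp only [Fin.val_succ, Fin.coe_castSucc] at *
    omega

private lemma strictMono_le_apply {n : ℕ} (g : Fin (n + 1) → ℕ) (hg : StrictMono g) :
    ∀ j : Fin (n + 1), (j : ℕ) ≤ g j := by
  intro j
  induction j using Fin.induction with
  | zero => simp
  | succ i ih =>
    have h1 : g i.castSucc < g i.succ := hg (Fin.castSucc_lt_succ (i := i))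
    simp only [Fin.val_succ, Fin.coe_castSucc] at *
    omega

/-- If `p₀, …, p_r` are linearly independent complex polynomials of degree at most `d`
(with `r ≤ d`), then their Wronskian is a nonzero polynomial of degree at most
`(r+1)(d−r)`. -/
theorem wronskian_ne_zero_natDegree_le (r d : ℕ) (hrd : r ≤ d)
    (p : Fin (r + 1) → Polynomial ℂ)
    (hind : LinearIndependent ℂ p)
    (hdeg : ∀ j, (p j).natDegree ≤ d) :
    wronskianFam p ≠ 0 ∧ (wronskianFam p).natDegree ≤ (r + 1) * (d - r) := by
  classical
  set S : Submodule ℂ (Polynomial ℂ) := Submodule.span ℂ (Set.range p) with hS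
  haveI : FiniteDimensional ℂ S := FiniteDimensional.span_of_finite ℂ (Set.finite_range p)
  have hfrk : Module.finrank ℂ S = r + 1 := by
    rw [hS, finrank_span_eq_card hind, Fintype.card_fin]
  -- every element of S has natDegree ≤ d
  have hSd : ∀ s ∈ S, s.natDegree ≤ d := by
    intro s hs
    have : S ≤ Polynomial.degreeLE ℂ (d : WithBot ℕ) := by
      rw [hS, Submodule.span_le]
      rintro _ ⟨j, rfl⟩
      rw [SetLike.mem_coe, Polynomial.mem_degreeLE]
      exact Polynomial.natDegree_le_iff_degree_le.mp (hdeg j)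
    have := this hs
    rw [Polynomial.mem_degreeLE] at this
    exact Polynomial.natDegree_le_iff_degree_le.mpr this
  -- the set of degrees of nonzero elements of S
  set Dset : Set ℕ := {n | ∃ s ∈ S, s ≠ 0 ∧ s.natDegree = n} with hDset
  have hDfin : Dset.Finite := by
    apply (Set.finite_Iic d).subset
    rintro n ⟨s, hsS, hs0, rfl⟩
    exact hSd s hsS
  set D : Finset ℕ := hDfin.toFinset with hD
  have hmemD : ∀ n, n ∈ D ↔ ∃ s ∈ S, s ≠ 0 ∧ s.natDegree = n := by
    intro n; rw [hD, Set.Finite.mem_toFinset]; rfl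
  -- choose a polynomial of each degree in D
  have hex : ∀ n ∈ D, ∃ s, s ∈ S ∧ s ≠ 0 ∧ s.natDegree = n := by
    intro n hn; obtain ⟨s, h1, h2, h3⟩ := (hmemD n).mp hn; exact ⟨s, h1, h2, h3⟩
  choose! q hqS hq0 hqdeg using hex
  -- the chosen family spans S
  have hspan : ∀ s ∈ S, s ∈ Submodule.span ℂ (q '' ↑D) := by
    have key : ∀ N (s : ℂ[X]), s ∈ S → s.natDegree = N → s ∈ Submodule.span ℂ (q '' ↑D) := by
      intro N
      induction N using Nat.strong_induction_on with
      | _ N ih =>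
      intro s hs hn
      subst hn
      by_cases hs0 : s = 0
      · simp [hs0]
      have hnD : s.natDegree ∈ D := (hmemD _).mpr ⟨s, hs, hs0, rfl⟩
      have htS : q s.natDegree ∈ S := hqS _ hnD
      have ht0 : q s.natDegree ≠ 0 := hq0 _ hnD
      have htdeg : (q s.natDegree).natDegree = s.natDegree := hqdeg _ hnD
      have hc0 : s.leadingCoeff / (q s.natDegree).leadingCoeff ≠ 0 :=
        div_ne_zero (leadingCoeff_ne_zero.mpr hs0) (leadingCoeff_ne_zero.mpr ht0)
      set c : ℂ := s.leadingCoeff / (q s.natDegree).leadingCoeff with hc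
      have hlc : leadingCoeff s = leadingCoeff (c • q s.natDegree) := by
        rw [smul_eq_C_mul, leadingCoeff_mul, leadingCoeff_C, hc,
          div_mul_cancel₀ _ (leadingCoeff_ne_zero.mpr ht0)]
      have hdegeq : s.degree = (c • q s.natDegree).degree := by
        rw [smul_eq_C_mul, degree_mul, degree_C hc0, zero_add,
          degree_eq_natDegree hs0, degree_eq_natDegree ht0, htdeg]
      have htmem : q s.natDegree ∈ Submodule.span ℂ (q '' ↑D) :=
        Submodule.subset_span ⟨s.natDegree, hnD, rfl⟩
      have hu : s - c • q s.natDegree ∈ S :=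
        Submodule.sub_mem S hs (Submodule.smul_mem S c htS)
      have hdlt : (s - c • q s.natDegree).degree < s.degree := degree_sub_lt hdegeq hs0 hlc
      by_cases hu0 : s - c • q s.natDegree = 0
      · have heq : s = c • q s.natDegree := by rwa [sub_eq_zero] at hu0
        rw [heq]; exact Submodule.smul_mem _ _ htmem
      · have hlt : (s - c • q s.natDegree).natDegree < s.natDegree :=
          natDegree_lt_natDegree hu0 hdlt
        have hmem := ih _ hlt _ hu rfl
        have heq : s = (s - c • q s.natDegree) + c • q s.natDegree := by ring
        rw [heq]
        exact Submodule.add_mem _ hmem (Submodule.smul_mem _ _ htmem)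
    exact fun s hs => key _ s hs rfl
  -- linear independence of the chosen family
  have hqind : LinearIndependent ℂ (fun n : ↥D => q ↑n) := by
    apply linIndep_of_deg
    · exact fun n => hq0 _ n.2
    · intro a b hab
      simp only [hqdeg _ a.2, hqdeg _ b.2] at hab
      exact Subtype.ext hab
  -- card D = r + 1
  have hcard_le : D.card ≤ r + 1 := by
    have := LinearIndependent.fintype_card_le_finrank
      (LinearIndependent.of_comp S.subtype (by
        exact hqind : LinearIndependent ℂ
          (S.subtype ∘ fun n : ↥D => (⟨q ↑n, hqS _ n.2⟩ : S))))
    rw [hfrk, Fintype.card_coe] at this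
    exact this
  have hcard_ge : r + 1 ≤ D.card := by
    have h1 : S ≤ Submodule.span ℂ ((D.image q : Finset ℂ[X]) : Set ℂ[X]) := by
      intro s hs
      rw [Finset.coe_image]
      exact hspan s hs
    haveI : FiniteDimensional ℂ (Submodule.span ℂ ((D.image q : Finset ℂ[X]) : Set ℂ[X])) :=
      FiniteDimensional.span_of_finite ℂ (Finset.finite_toSet _)
    calc r + 1 = Module.finrank ℂ S := hfrk.symm
      _ ≤ Module.finrank ℂ (Submodule.span ℂ ((D.image q : Finset ℂ[X]) : Set ℂ[X])) :=
          Submodule.finrank_mono h1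
      _ ≤ (D.image q).card := finrank_span_finset_le_card _
      _ ≤ D.card := Finset.card_image_le
  have hDcard : D.card = r + 1 := le_antisymm hcard_le hcard_ge
  -- enumerate D in decreasing order
  set o := D.orderIsoOfFin hDcard with ho
  set e : Fin (r + 1) → ℕ := fun j => ((o j.rev : ℕ)) with he
  have hg_mono : StrictMono (fun j : Fin (r + 1) => ((o j : ℕ))) := by
    intro a b hab
    exact_mod_cast o.strictMono hab
  have he_anti : StrictAnti e := by
    intro a b hab
    exact hg_mono (Fin.rev_lt_rev.mpr hab)
  have heD : ∀ j, e j ∈ D := fun j => (o j.rev).2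
  have he_le : ∀ j : Fin (r + 1), e j + j ≤ d := by
    intro j
    have h1 := strictAnti_add_le e he_anti j
    have h2 : e 0 ≤ d := by
      obtain ⟨s, hsS, hs0, hsd⟩ := (hmemD _).mp (heD 0)
      exact hsd ▸ hSd s hsS
    omega
  -- the new family Q with strictly decreasing degrees
  set Q : Fin (r + 1) → ℂ[X] := fun j => q (e j) with hQ
  have hQ0 : ∀ j, Q j ≠ 0 := fun j => hq0 _ (heD j)
  have hQdeg : ∀ j, (Q j).natDegree = e j := fun j => hqdeg _ (heD j)
  have hQS : ∀ j, Q j ∈ S := fun j => hqS _ (heD j)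
  -- basis of S given by Q
  have hQind : LinearIndependent ℂ (fun j : Fin (r + 1) => (⟨Q j, hQS j⟩ : S)) := by
    apply LinearIndependent.of_comp S.subtype
    apply linIndep_of_deg
    · exact fun j => hQ0 j
    · intro a b hab
      simp only [Function.comp_apply, Submodule.coe_subtype] at hab
      have : e a = e b := by rwa [hQdeg a, hQdeg b] at hab
      exact he_anti.injective this
  have hcardS : Fintype.card (Fin (r + 1)) = Module.finrank ℂ S := by
    rw [Fintype.card_fin, hfrk]
  set B : Module.Basis (Fin (r + 1)) ℂ S := basisOfLinearIndependentOfCardEqFinrank hQind hcardS with hB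
  have hBval : ∀ j, ((B j : S) : ℂ[X]) = Q j := by
    intro j
    rw [hB, coe_basisOfLinearIndependentOfCardEqFinrank]
  -- express p in the basis B
  set p' : Fin (r + 1) → S := fun j => ⟨p j, Submodule.subset_span ⟨j, rfl⟩⟩ with hp'
  have hp'ind : LinearIndependent ℂ p' := by
    apply LinearIndependent.of_comp S.subtype
    exact hind
  have hp'span : ⊤ ≤ Submodule.span ℂ (Set.range p') :=
    (hp'ind.span_eq_top_of_card_eq_finrank (by rw [Fintype.card_fin, hfrk])).ge
  set cM : Matrix (Fin (r + 1)) (Fin (r + 1)) ℂ := B.toMatrix p' with hcM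
  have hdet_unit : IsUnit cM.det := by
    rw [hcM, ← Module.Basis.det_apply]
    exact (Module.Basis.is_basis_iff_det B).mp ⟨hp'ind, top_le_iff.mp hp'span⟩
  have hdet0 : cM.det ≠ 0 := hdet_unit.ne_zero
  -- p j = ∑ k, cM k j • Q k
  have hpQ : ∀ j, p j = ∑ k, cM k j • Q k := by
    intro j
    have := B.sum_repr (p' j)
    have h2 := congrArg (S.subtype) this
    simp only [map_sum, map_smul, Submodule.coe_subtype] at h2
    rw [show p j = ((p' j : S) : ℂ[X]) from rfl, ← h2]
    apply Finset.sum_congr rfl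
    intro k _
    rw [hcM, Module.Basis.toMatrix_apply, hBval]
  -- matrix identity
  have hmat : (Matrix.of fun i j : Fin (r + 1) => derivative^[(i : ℕ)] (p j)) =
      (Matrix.of fun i j : Fin (r + 1) => derivative^[(i : ℕ)] (Q j)) * (cM.map C) := by
    refine Matrix.ext fun i j => ?_
    rw [Matrix.mul_apply]
    simp only [Matrix.of_apply, Matrix.map_apply]
    rw [hpQ j]
    have : derivative^[(i : ℕ)] (∑ k, cM k j • Q k)
        = ∑ k, cM k j • derivative^[(i : ℕ)] (Q k) := by
      rw [← Module.End.pow_apply]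
      rw [map_sum]
      simp only [map_smul, Module.End.pow_apply]
    rw [this]
    apply Finset.sum_congr rfl
    intro k _
    rw [smul_eq_C_mul, mul_comm]
  have hWp : wronskianFam p = wronskianFam Q * C cM.det := by
    rw [wronskianFam, wronskianFam, hmat, Matrix.det_mul]
    congr 1
    rw [← RingHom.mapMatrix_apply, ← RingHom.map_det]
  -- degree sum notation
  set N : ℕ := (∑ i, e i) - (∑ i : Fin (r + 1), (i : ℕ)) with hN
  have hsum_rev : (∑ i, e i) = ∑ i : Fin (r + 1), ((o i : ℕ)) := by
    exact (Equiv.sum_comp Fin.revPerm fun i => ((o i : ℕ)))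
  have hsum_ge : (∑ i : Fin (r + 1), (i : ℕ)) ≤ ∑ i, e i := by
    rw [hsum_rev]
    exact Finset.sum_le_sum fun i _ => strictMono_le_apply _ hg_mono i
  -- key computation of the N-th coefficient of each determinant term
  have hterm : ∀ σ : Equiv.Perm (Fin (r + 1)),
      (∏ i, derivative^[(σ i : ℕ)] (Q i)).coeff N =
      (∏ i, ((e i).descFactorial (σ i) : ℂ)) * ∏ i, (Q i).leadingCoeff := by
    intro σ
    by_cases hcase : ∀ i, (σ i : ℕ) ≤ e i
    · have hsum : (∑ i, (e i - (σ i : ℕ))) = N := by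
        rw [Finset.sum_tsub_distrib _ fun i _ => hcase i, hN,
          Equiv.sum_comp σ (fun i : Fin (r + 1) => (i : ℕ))]
      rw [← hsum, coeff_prod_of_le _ _ _ (fun i _ =>
        (natDegree_iterate_derivative _ _).trans (by rw [hQdeg]))]
      rw [← Finset.prod_mul_distrib]
      apply Finset.prod_congr rfl
      intro i _
      rw [coeff_iterate_derivative, Nat.sub_add_cancel (hcase i), nsmul_eq_mul]
      congr 1
      rw [← hQdeg i]
      rfl
    · push_neg at hcase
      obtain ⟨i0, hi0⟩ := hcase
      have h1 : derivative^[(σ i0 : ℕ)] (Q i0) = 0 :=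
        iterate_derivative_eq_zero (by rw [hQdeg]; exact hi0)
      have h2 : ((e i0).descFactorial (σ i0) : ℂ) = 0 := by
        rw [Nat.descFactorial_eq_zero_iff_lt.mpr hi0, Nat.cast_zero]
      rw [Finset.prod_eq_zero (Finset.mem_univ i0) h1,
        Finset.prod_eq_zero (Finset.mem_univ i0) h2, coeff_zero, zero_mul]
  -- the N-th coefficient of the Wronskian of Q is nonzero
  have hcoeff : (wronskianFam Q).coeff N =
      (Matrix.of fun k i : Fin (r + 1) => ((e i).descFactorial k : ℂ)).det *
        ∏ i, (Q i).leadingCoeff := by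
    rw [wronskianFam, Matrix.det_apply, finset_sum_coeff]
    rw [Matrix.det_apply, Finset.sum_mul]
    apply Finset.sum_congr rfl
    intro σ _
    simp only [Matrix.of_apply]
    rw [coeff_smul, hterm σ]
    rw [smul_mul_assoc]
  have hvand : (Matrix.of fun k i : Fin (r + 1) => ((e i).descFactorial k : ℂ)).det ≠ 0 := by
    have h1 : (Matrix.of fun k i : Fin (r + 1) => ((e i).descFactorial k : ℂ)) =
        Matrix.transpose (Matrix.of fun i k : Fin (r + 1) =>
          (descPochhammer ℂ (k : ℕ)).eval ((e i : ℂ))) := by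
      ext k i
      simp only [Matrix.transpose_apply, Matrix.of_apply]
      rw [← descPochhammer_eval_eq_descFactorial ℂ (e i) (k : ℕ)]
    rw [h1, Matrix.det_transpose,
      ← Matrix.det_eval_matrixOfPolynomials_eq_det_vandermonde
        (fun i : Fin (r + 1) => ((e i : ℂ))) (fun k => descPochhammer ℂ (k : ℕ))
        (fun k => descPochhammer_natDegree ℂ k)
        (fun k => monic_descPochhammer ℂ k)]
    rw [Matrix.det_vandermonde_ne_zero_iff]
    intro a b hab
    exact he_anti.injective (Nat.cast_injective hab)
  have hWQcoeff : (wronskianFam Q).coeff N ≠ 0 := by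
    rw [hcoeff]
    exact mul_ne_zero hvand (Finset.prod_ne_zero_iff.mpr fun i _ =>
      leadingCoeff_ne_zero.mpr (hQ0 i))
  have hWQ0 : wronskianFam Q ≠ 0 := fun h => hWQcoeff (by rw [h, coeff_zero])
  -- degree bound for wronskianFam Q
  have hNle : N ≤ (r + 1) * (d - r) := by
    have h1 : ∑ i, e i ≤ (r + 1) * (d - r) + ∑ i : Fin (r + 1), (i : ℕ) := by
      have h2 : ∀ i : Fin (r + 1), e i ≤ (d - r) + (r - (i : ℕ)) := by
        intro i
        have := he_le i
        have hi : (i : ℕ) ≤ r := Fin.is_le i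
        omega
      calc ∑ i, e i ≤ ∑ i : Fin (r + 1), ((d - r) + (r - (i : ℕ))) :=
            Finset.sum_le_sum fun i _ => h2 i
        _ = (r + 1) * (d - r) + ∑ i : Fin (r + 1), (r - (i : ℕ)) := by
            rw [Finset.sum_add_distrib, Finset.sum_const, Finset.card_univ, Fintype.card_fin,
              smul_eq_mul]
        _ = (r + 1) * (d - r) + ∑ i : Fin (r + 1), (i : ℕ) := by
            congr 1
            rw [← Equiv.sum_comp Fin.revPerm fun i : Fin (r + 1) => (i : ℕ)]
            apply Finset.sum_congr rfl
            intro i _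
            show (r : ℕ) - (i : ℕ) = ((Fin.revPerm i : Fin (r + 1)) : ℕ)
            rw [show ((Fin.revPerm i : Fin (r + 1)) : ℕ) = r + 1 - ((i : ℕ) + 1) from Fin.val_rev i]
            omega
    omega
  have hWQdeg : (wronskianFam Q).natDegree ≤ (r + 1) * (d - r) := by
    show (Matrix.det (Matrix.of fun i j : Fin (r + 1) =>
      derivative^[(i : ℕ)] (Q j))).natDegree ≤ (r + 1) * (d - r)
    rw [Matrix.det_apply]
    apply natDegree_sum_le_of_forall_le
    intro σ _
    have hsle : ((Equiv.Perm.sign σ) • ∏ i, (Matrix.of fun i j : Fin (r+1) =>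
        derivative^[(i : ℕ)] (Q j)) (σ i) i).natDegree
        = (∏ i, (Matrix.of fun i j : Fin (r+1) =>
        derivative^[(i : ℕ)] (Q j)) (σ i) i).natDegree := by
      rcases Int.units_eq_one_or (Equiv.Perm.sign σ) with h | h <;>
        simp [h, Units.smul_def]
    rw [hsle]
    by_cases hcase : ∀ i, (σ i : ℕ) ≤ e i
    · refine le_trans (natDegree_prod_le _ _) (le_trans ?_ hNle)
      have : ∀ i : Fin (r + 1), (derivative^[(σ i : ℕ)] (Q i)).natDegree ≤ e i - (σ i : ℕ) := by
        intro i
        exact (natDegree_iterate_derivative _ _).trans (by rw [hQdeg])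
      calc ∑ i, ((Matrix.of fun i j : Fin (r+1) => derivative^[(i : ℕ)] (Q j)) (σ i) i).natDegree
            ≤ ∑ i, (e i - (σ i : ℕ)) := Finset.sum_le_sum fun i _ => this i
        _ = N := by
            rw [Finset.sum_tsub_distrib _ fun i _ => hcase i, hN,
              Equiv.sum_comp σ (fun i : Fin (r + 1) => (i : ℕ))]
    · push_neg at hcase
      obtain ⟨i0, hi0⟩ := hcase
      have h1 : (Matrix.of fun i j : Fin (r+1) => derivative^[(i : ℕ)] (Q j)) (σ i0) i0 = 0 :=
        iterate_derivative_eq_zero (show (Q i0).natDegree < ((σ i0 : ℕ)) by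
          rw [hQdeg]; exact hi0)
      have h2 : (∏ i, (Matrix.of fun i j : Fin (r+1) => derivative^[(i : ℕ)] (Q j)) (σ i) i)
          = 0 := Finset.prod_eq_zero (Finset.mem_univ i0) h1
      rw [h2, natDegree_zero]
      exact Nat.zero_le _
  constructor
  · rw [hWp]
    exact mul_ne_zero hWQ0 (fun h => hdet0 (by rwa [← C_0, C_inj] at h))
  · rw [hWp]
    refine le_trans (natDegree_mul_le) ?_
    rw [natDegree_C, add_zero]
    exact hWQdeg
end

section
/- Let r ≤ d be natural numbers and let p₀, …, p_r ∈ ℂ[x] be linearly independent polynomials, each of degree at most d. Let W be the Wronskian of (p₀,…,p_r) and let W̃ be the Wronskian of the reflected family (q₀,…,q_r), where q_j is the reflection of p_j at degree d (i.e. q_j(x) = x^d·p_j(1/x), reversal of the coefficient sequence of p_j padded to degree d). Then deg W + (multiplicity of 0 as a root of W̃) = (r+1)(d−r). (This expresses that the total ramification of a degree-d rational curve in ℙ^r, summed over all points of ℙ¹ including infinity, equals (r+1)(d−r).) -/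
open Polynomial

private lemma coeff_mul_zero_of_lt {f g : ℂ[X]} {a b k : ℕ}
    (hf : ∀ k < a, f.coeff k = 0) (hg : ∀ k < b, g.coeff k = 0) (hk : k < a + b) :
    (f * g).coeff k = 0 := by
  rw [coeff_mul]
  refine Finset.sum_eq_zero fun p hp => ?_
  rw [Finset.HasAntidiagonal.mem_antidiagonal] at hp
  rcases lt_or_ge p.1 a with h | h
  · rw [hf _ h, zero_mul]
  · have : p.2 < b := by omega
    rw [hg _ this, mul_zero]

private lemma coeff_mul_trailing {f g : ℂ[X]} {a b : ℕ}
    (hf : ∀ k < a, f.coeff k = 0) (hg : ∀ k < b, g.coeff k = 0) :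
    (f * g).coeff (a + b) = f.coeff a * g.coeff b := by
  rw [coeff_mul]
  rw [Finset.sum_eq_single ((a, b) : ℕ × ℕ)]
  · intro p hp hne
    rw [Finset.HasAntidiagonal.mem_antidiagonal] at hp
    rcases lt_or_ge p.1 a with h | h
    · rw [hf _ h, zero_mul]
    · have h2 : p.2 < b ∨ (p.1 = a ∧ p.2 = b) := by omega
      rcases h2 with h2 | h2
      · rw [hg _ h2, mul_zero]
      · exact absurd (Prod.ext h2.1 h2.2) hne
  · intro h
    exact absurd (Finset.HasAntidiagonal.mem_antidiagonal.2 (by simp)) h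

private lemma coeff_prod_zero_of_lt {ι : Type*} (s : Finset ι) (f : ι → ℂ[X]) (ν : ι → ℕ)
    (h : ∀ i ∈ s, ∀ k < ν i, (f i).coeff k = 0) :
    ∀ k < ∑ i ∈ s, ν i, (∏ i ∈ s, f i).coeff k = 0 := by
  induction s using Finset.cons_induction with
  | empty => intro k hk; simp at hk
  | cons i s hi ih =>
    intro k hk
    rw [Finset.sum_cons] at hk
    rw [Finset.prod_cons]
    exact coeff_mul_zero_of_lt (h i (Finset.mem_cons_self i s))
      (ih fun j hj => h j (Finset.mem_cons_of_mem hj)) hk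

private lemma coeff_prod_trailing {ι : Type*} (s : Finset ι) (f : ι → ℂ[X]) (ν : ι → ℕ)
    (h : ∀ i ∈ s, ∀ k < ν i, (f i).coeff k = 0) :
    (∏ i ∈ s, f i).coeff (∑ i ∈ s, ν i) = ∏ i ∈ s, (f i).coeff (ν i) := by
  induction s using Finset.cons_induction with
  | empty => simp
  | cons i s hi ih =>
    rw [Finset.prod_cons, Finset.sum_cons,
      coeff_mul_trailing (h i (Finset.mem_cons_self i s))
        (coeff_prod_zero_of_lt s f ν fun j hj => h j (Finset.mem_cons_of_mem hj)),
      ih fun j hj => h j (Finset.mem_cons_of_mem hj), Finset.prod_cons]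

private lemma wronskianFam_ne_zero_of_distinct (r : ℕ) (q : Fin (r+1) → ℂ[X]) (h0 : ∀ j, q j ≠ 0)
    (hinj : Function.Injective fun j => (q j).natTrailingDegree) :
    wronskianFam q ≠ 0 := by
  classical
  set n : Fin (r+1) → ℕ := fun j => (q j).natTrailingDegree with hn
  set a : Fin (r+1) → ℂ := fun j => (q j).trailingCoeff with ha
  have ha0 : ∀ j, a j ≠ 0 := fun j h => h0 j (trailingCoeff_eq_zero.mp h)
  -- per-factor facts
  have fact1 : ∀ (s : ℕ) (j : Fin (r+1)), ∀ k < n j,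
      (X ^ s * derivative^[s] (q j)).coeff k = 0 := by
    intro s j k hk
    rw [mul_comm, coeff_mul_X_pow']
    split_ifs with h
    · rw [coeff_iterate_derivative]
      rw [Nat.sub_add_cancel h]
      rw [coeff_eq_zero_of_lt_natTrailingDegree hk, smul_zero]
    · rfl
  have fact2 : ∀ (s : ℕ) (j : Fin (r+1)),
      (X ^ s * derivative^[s] (q j)).coeff (n j) = ((n j).descFactorial s : ℂ) * a j := by
    intro s j
    rw [mul_comm, coeff_mul_X_pow']
    split_ifs with h
    · rw [coeff_iterate_derivative, Nat.sub_add_cancel h]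
      rw [nsmul_eq_mul]
      rfl
    · rw [Nat.descFactorial_eq_zero_iff_lt.mpr (by omega), Nat.cast_zero, zero_mul]
  -- the key coefficient
  have key : (X ^ (∑ i : Fin (r+1), (i:ℕ)) * wronskianFam q).coeff (∑ j, n j) =
      (∏ j, a j) * (Matrix.vandermonde fun j : Fin (r+1) => ((n j : ℂ))).det := by
    have hdet : X ^ (∑ i : Fin (r+1), (i:ℕ)) * wronskianFam q =
        Matrix.det (Matrix.of fun i j : Fin (r + 1) =>
          X ^ (i:ℕ) * derivative^[(i : ℕ)] (q j)) := by
      rw [wronskianFam,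
        show (Matrix.of fun i j : Fin (r+1) => X ^ (i:ℕ) * derivative^[(i:ℕ)] (q j)) =
          Matrix.of (fun i j => (fun i : Fin (r+1) => (X:ℂ[X])^(i:ℕ)) i *
            (Matrix.of fun i j : Fin (r+1) => derivative^[(i:ℕ)] (q j)) i j) from rfl,
        Matrix.det_mul_column, Finset.prod_pow_eq_pow_sum]
    rw [hdet, Matrix.det_apply', finset_sum_coeff]
    have step : ∀ σ : Equiv.Perm (Fin (r+1)),
        (((Equiv.Perm.sign σ : ℤ) : ℂ[X]) *
          ∏ j, (Matrix.of fun i j : Fin (r + 1) =>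
            X ^ (i:ℕ) * derivative^[(i : ℕ)] (q j)) (σ j) j).coeff (∑ j, n j) =
        ((Equiv.Perm.sign σ : ℤ) : ℂ) *
          ∏ j, (((n j).descFactorial ((σ j : ℕ)) : ℂ) * a j) := by
      intro σ
      rw [← C_eq_intCast, coeff_C_mul]
      congr 1
      simp only [Matrix.of_apply]
      rw [coeff_prod_trailing Finset.univ
        (fun j => X ^ ((σ j : ℕ)) * derivative^[(σ j : ℕ)] (q j)) n (fun j _ => fact1 _ j)]
      exact Finset.prod_congr rfl fun j _ => fact2 _ j
    rw [Finset.sum_congr rfl fun σ _ => step σ]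
    have : ∀ σ : Equiv.Perm (Fin (r+1)),
        (∏ j, (((n j).descFactorial ((σ j : ℕ)) : ℂ) * a j)) =
        (∏ j, a j) * ∏ j, ((n j).descFactorial ((σ j : ℕ)) : ℂ) := by
      intro σ; rw [Finset.prod_mul_distrib, mul_comm]
    have h2 : ∀ σ : Equiv.Perm (Fin (r+1)),
        ((Equiv.Perm.sign σ : ℤ) : ℂ) * ∏ j, (((n j).descFactorial ((σ j : ℕ)) : ℂ) * a j) =
        (∏ j, a j) * (((Equiv.Perm.sign σ : ℤ) : ℂ) *
          ∏ j, ((n j).descFactorial ((σ j : ℕ)) : ℂ)) := fun σ => by rw [this σ]; ring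
    rw [Finset.sum_congr rfl fun σ _ => h2 σ, ← Finset.mul_sum]
    congr 1
    have hvdm : (Matrix.vandermonde fun j : Fin (r+1) => ((n j : ℂ))).det =
        Matrix.det (Matrix.of fun i j : Fin (r + 1) => ((n j).descFactorial (i:ℕ) : ℂ)) := by
      rw [Matrix.det_eval_matrixOfPolynomials_eq_det_vandermonde
        (fun j : Fin (r+1) => ((n j : ℂ))) (fun i => descPochhammer ℂ (i : ℕ))
        (fun i => descPochhammer_natDegree _ _) (fun i => monic_descPochhammer _ _)]
      rw [← Matrix.det_transpose]
      congr 1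
      ext i j
      simp [Matrix.transpose_apply, descPochhammer_eval_eq_descFactorial]
    rw [hvdm, Matrix.det_apply']
    exact Finset.sum_congr rfl fun σ _ => rfl
  intro hW
  rw [hW, mul_zero, coeff_zero] at key
  have hvne : (Matrix.vandermonde fun j : Fin (r+1) => ((n j : ℂ))).det ≠ 0 :=
    Matrix.det_vandermonde_ne_zero_iff.mpr fun i j hij => hinj (Nat.cast_injective hij)
  exact (mul_ne_zero (Finset.prod_ne_zero_iff.2 fun j _ => ha0 j) hvne) key.symm

private lemma wronskianFam_ne_zero {r : ℕ} (p : Fin (r+1) → ℂ[X])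
    (hind : LinearIndependent ℂ p) : wronskianFam p ≠ 0 := by
  classical
  suffices H : ∀ (N : ℕ) (p : Fin (r+1) → ℂ[X]),
      (∑ k, (Finset.univ.sup (fun l => (p l).natDegree) + 1 - (p k).natTrailingDegree)) ≤ N →
      LinearIndependent ℂ p → wronskianFam p ≠ 0 from H _ p le_rfl hind
  intro N
  induction N with
  | zero =>
    intro p hμ _
    exfalso
    have h1 : (p 0).natTrailingDegree <
        Finset.univ.sup (fun l => (p l).natDegree) + 1 :=
      Nat.lt_succ_of_le (le_trans (p 0).natTrailingDegree_le_natDegree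
        (Finset.le_sup (f := fun l => (p l).natDegree) (Finset.mem_univ 0)))
    have h2 : 0 < Finset.univ.sup (fun l => (p l).natDegree) + 1 - (p 0).natTrailingDegree := by
      omega
    have h3 : Finset.univ.sup (fun l => (p l).natDegree) + 1 - (p 0).natTrailingDegree ≤
        ∑ k, (Finset.univ.sup (fun l => (p l).natDegree) + 1 - (p k).natTrailingDegree) :=
      Finset.single_le_sum
        (f := fun k => Finset.univ.sup (fun l => (p l).natDegree) + 1 - (p k).natTrailingDegree)
        (fun k _ => Nat.zero_le _) (Finset.mem_univ 0)
    omega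
  | succ N ih =>
    intro p hμ hind
    by_cases hcase : Function.Injective fun j => (p j).natTrailingDegree
    · exact wronskianFam_ne_zero_of_distinct r p (fun j => hind.ne_zero j) hcase
    · rw [Function.not_injective_iff] at hcase
      obtain ⟨i, j, heq, hij⟩ := hcase
      set b : ℂ := (p i).trailingCoeff with hb
      set c : ℂ := (p j).trailingCoeff with hc
      have hb0 : b ≠ 0 := fun h => hind.ne_zero i (trailingCoeff_eq_zero.mp h)
      have hc0 : c ≠ 0 := fun h => hind.ne_zero j (trailingCoeff_eq_zero.mp h)
      set p' : Fin (r+1) → ℂ[X] := Function.update p i (C c * p i - C b * p j) with hp'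
      have hp'app : ∀ k, k ≠ i → p' k = p k := fun k hk => Function.update_of_ne hk _ p
      have hp'i : p' i = C c * p i - C b * p j := Function.update_self i _ p
      -- linear independence of p'
      have hind' : LinearIndependent ℂ p' := by
        rw [Fintype.linearIndependent_iff] at hind ⊢
        intro g hg
        set g' : Fin (r+1) → ℂ := fun k => if k = i then g i * c else
          if k = j then g j - g i * b else g k with hg'
        have hsum : ∑ k, g' k • p k = 0 := by
          rw [← hg]
          rw [← Finset.add_sum_erase Finset.univ (fun k => g' k • p k) (Finset.mem_univ i),
            ← Finset.add_sum_erase Finset.univ (fun k => g k • p' k) (Finset.mem_univ i)]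
          have hji : j ∈ Finset.univ.erase i := Finset.mem_erase.2 ⟨fun h => hij h.symm, Finset.mem_univ j⟩
          rw [← Finset.add_sum_erase _ (fun k => g' k • p k) hji,
            ← Finset.add_sum_erase _ (fun k => g k • p' k) hji]
          have e1 : ∑ k ∈ (Finset.univ.erase i).erase j, g' k • p k =
              ∑ k ∈ (Finset.univ.erase i).erase j, g k • p' k := by
            refine Finset.sum_congr rfl fun k hk => ?_
            obtain ⟨hkj, hki, -⟩ : k ≠ j ∧ k ≠ i ∧ True := by
              have h1 := Finset.mem_erase.1 hk
              have h2 := Finset.mem_erase.1 h1.2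
              exact ⟨h1.1, h2.1, trivial⟩
            rw [hp'app k hki, hg']
            simp [hki, hkj]
          rw [e1]
          have e2 : g' i = g i * c := by simp [hg']
          have e3 : g' j = g j - g i * b := by simp [hg', hij.symm]
          rw [e2, e3, hp'i, hp'app j (fun h => hij h.symm), ← smul_eq_C_mul, ← smul_eq_C_mul]
          module
        have hg0 := hind g' hsum
        intro k
        by_cases hki : k = i
        · subst hki
          have := hg0 k
          rw [hg'] at this
          simp only [if_pos rfl] at this
          exact (mul_eq_zero.mp this).resolve_right hc0
        · by_cases hkj : k = j
          · subst hkj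
            have hgi : g i = 0 := by
              have := hg0 i
              simp only [hg', if_pos rfl] at this
              exact (mul_eq_zero.mp this).resolve_right hc0
            have := hg0 k
            simp only [hg', if_neg hki, if_pos rfl] at this
            rw [hgi] at this
            simpa using this
          · have := hg0 k
            simpa [hg', hki, hkj] using this
      -- Wronskian relation
      have hW : wronskianFam p' = C c * wronskianFam p := by
        set M : Matrix (Fin (r+1)) (Fin (r+1)) ℂ[X] :=
          Matrix.of fun a k : Fin (r + 1) => derivative^[(a : ℕ)] (p k) with hM
        have hM' : (Matrix.of fun a k : Fin (r + 1) => derivative^[(a : ℕ)] (p' k)) =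
            M.updateCol i ((C c • fun a => M a i) + ((-C b) • fun a => M a j)) := by
          refine Matrix.ext fun a k => ?_
          by_cases hki : k = i
          · subst hki
            simp only [Matrix.of_apply, Matrix.updateCol_apply, if_pos rfl, if_true, hp'i,
              Pi.add_apply, Pi.smul_apply, smul_eq_mul, hM]
            rw [iterate_derivative_sub, iterate_derivative_C_mul, iterate_derivative_C_mul]
            ring
          · simp only [Matrix.of_apply, Matrix.updateCol_apply, if_neg hki, hM,
              hp'app k hki]
        rw [wronskianFam, hM', Matrix.det_updateCol_add, Matrix.det_updateCol_smul,
          Matrix.det_updateCol_smul, Matrix.updateCol_eq_self,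
          Matrix.det_updateCol_eq_zero (show j ≠ i from fun h => hij h.symm),
          mul_zero, add_zero]
        rfl
      -- measure decrease
      have hd' : natTrailingDegree (p i) < natTrailingDegree (p' i) := by
        have hne' : p' i ≠ 0 := hind'.ne_zero i
        have : natTrailingDegree (p i) + 1 ≤ natTrailingDegree (p' i) := by
          apply le_natTrailingDegree hne'
          intro m hm
          rw [hp'i]
          simp only [coeff_sub, coeff_C_mul]
          rcases Nat.lt_or_ge m (natTrailingDegree (p i)) with h | h
          · rw [coeff_eq_zero_of_lt_natTrailingDegree h,
              coeff_eq_zero_of_lt_natTrailingDegree (by rw [← heq]; exact h), mul_zero, mul_zero,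
              sub_zero]
          · have hm' : m = natTrailingDegree (p i) := by omega
            subst hm'
            rw [show (p i).coeff (p i).natTrailingDegree = b from rfl]
            rw [show (p j).coeff (p i).natTrailingDegree = c by rw [heq]; rfl]
            ring
        omega
      refine fun h => ih p' ?_ hind' (by rw [hW, h, mul_zero])
      -- sum bound
      have hBle : Finset.univ.sup (fun l => (p' l).natDegree) ≤
          Finset.univ.sup (fun l => (p l).natDegree) := by
        apply Finset.sup_le
        intro k _
        by_cases hki : k = i
        · rw [hki, hp'i]
          refine le_trans (natDegree_sub_le _ _) (max_le ?_ ?_)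
          · exact le_trans (natDegree_C_mul_le _ _)
              (Finset.le_sup (f := fun l => (p l).natDegree) (Finset.mem_univ i))
          · exact le_trans (natDegree_C_mul_le _ _)
              (Finset.le_sup (f := fun l => (p l).natDegree) (Finset.mem_univ j))
        · rw [hp'app k hki]
          exact Finset.le_sup (f := fun l => (p l).natDegree) (Finset.mem_univ k)
      have hlt : ∑ k, (Finset.univ.sup (fun l => (p' l).natDegree) + 1 - (p' k).natTrailingDegree)
          < ∑ k, (Finset.univ.sup (fun l => (p l).natDegree) + 1 - (p k).natTrailingDegree) := by
        refine lt_of_le_of_lt (Finset.sum_le_sum (g := fun k =>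
            (Finset.univ.sup fun l => (p l).natDegree) + 1 - (p' k).natTrailingDegree)
          fun k _ => Nat.sub_le_sub_right (Nat.add_le_add_right hBle 1) _) ?_
        refine Finset.sum_lt_sum (fun k _ => ?_) ⟨i, Finset.mem_univ i, ?_⟩
        · by_cases hki : k = i
          · subst hki
            exact Nat.sub_le_sub_left (le_of_lt hd') _
          · rw [hp'app k hki]
        · apply Nat.sub_lt_sub_left
          · exact Nat.lt_succ_of_le (le_trans (p i).natTrailingDegree_le_natDegree
              (Finset.le_sup (f := fun l => (p l).natDegree) (Finset.mem_univ i)))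
          · exact hd'
      omega



private lemma eval_reflect' {N : ℕ} (f : ℂ[X]) (hf : f.natDegree ≤ N) {z : ℂ} (hz : z ≠ 0) :
    (reflect N f).eval z = z ^ N * f.eval z⁻¹ := by
  have hzi : z⁻¹ ≠ 0 := inv_ne_zero hz
  have : Invertible (z⁻¹) := invertibleOfNonzero hzi
  have h := eval₂_reflect_mul_pow (RingHom.id ℂ) z⁻¹ N f hf
  rw [invOf_eq_inv, inv_inv] at h
  have h2 : eval₂ (RingHom.id ℂ) z (reflect N f) = (reflect N f).eval z := rfl
  have h3 : eval₂ (RingHom.id ℂ) z⁻¹ f = f.eval z⁻¹ := rfl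
  rw [h2, h3] at h
  rw [← h, inv_pow, mul_left_comm, mul_inv_cancel₀ (pow_ne_zero N hz), mul_one]

/-- coefficients in the expansion of derivatives of `x^d f(1/x)` -/
noncomputable def wcoef (d : ℕ) : ℕ → ℕ → ℂ
  | 0, 0 => 1
  | 0, _ + 1 => 0
  | i + 1, 0 => wcoef d i 0 * ((d : ℂ) - i)
  | i + 1, k + 1 => wcoef d i (k + 1) * ((d : ℂ) - i - (k + 1)) - wcoef d i k

private lemma wcoef_eq_zero (d : ℕ) : ∀ i k, i < k → wcoef d i k = 0 := by
  intro i
  induction i with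
  | zero => intro k hk; match k, hk with | k + 1, _ => rfl
  | succ i ih =>
    intro k hk
    match k, hk with
    | k + 1, hk =>
      show wcoef d i (k + 1) * ((d : ℂ) - i - (k + 1)) - wcoef d i k = 0
      rw [ih (k + 1) (by omega), ih k (by omega), zero_mul, sub_zero]

private lemma wcoef_diag (d : ℕ) : ∀ i, wcoef d i i = (-1 : ℂ) ^ i := by
  intro i
  induction i with
  | zero => rfl
  | succ i ih =>
    show wcoef d i (i + 1) * ((d : ℂ) - i - (i + 1)) - wcoef d i i = (-1 : ℂ) ^ (i + 1)
    rw [wcoef_eq_zero d i (i + 1) (by omega), ih, zero_mul]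
    ring

private lemma eval_iterate_derivative_reflect (d : ℕ) (f : ℂ[X]) (hf : f.natDegree ≤ d) :
    ∀ (i : ℕ), ∀ z : ℂ, z ≠ 0 →
      (derivative^[i] (reflect d f)).eval z =
        ∑ k ∈ Finset.range (i + 1), wcoef d i k * z ^ ((d : ℤ) - i - k) *
          (derivative^[k] f).eval z⁻¹ := by
  intro i
  induction i with
  | zero =>
    intro z hz
    simp only [Function.iterate_zero, id_eq, zero_add, Finset.sum_range_one]
    rw [eval_reflect' f hf hz]
    show z ^ d * eval z⁻¹ f = wcoef d 0 0 * z ^ ((d : ℤ) - 0 - 0) * eval z⁻¹ f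
    rw [show wcoef d 0 0 = 1 from rfl, show (d : ℤ) - 0 - 0 = (d : ℤ) by ring,
      zpow_natCast, one_mul]
  | succ i ih =>
    intro z₀ hz₀
    have hder : HasDerivAt (fun z : ℂ => ∑ k ∈ Finset.range (i + 1),
        wcoef d i k * z ^ ((d : ℤ) - i - k) * (derivative^[k] f).eval z⁻¹)
        (∑ k ∈ Finset.range (i + 1),
          (wcoef d i k * ((((d : ℤ) - i - k : ℤ) : ℂ) * z₀ ^ ((d : ℤ) - i - k - 1)) *
              (derivative^[k] f).eval z₀⁻¹
            + wcoef d i k * z₀ ^ ((d : ℤ) - i - k) *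
              ((derivative^[k + 1] f).eval z₀⁻¹ * (-(z₀ ^ 2)⁻¹)))) z₀ := by
      apply HasDerivAt.fun_sum
      intro k _
      have h1 : HasDerivAt (fun z : ℂ => wcoef d i k * z ^ ((d : ℤ) - i - k))
          (wcoef d i k * ((((d : ℤ) - i - k : ℤ) : ℂ) * z₀ ^ ((d : ℤ) - i - k - 1))) z₀ :=
        (hasDerivAt_zpow _ _ (Or.inl hz₀)).const_mul _
      have h2 : HasDerivAt (fun z : ℂ => (derivative^[k] f).eval z⁻¹)
          ((derivative^[k + 1] f).eval z₀⁻¹ * (-(z₀ ^ 2)⁻¹)) z₀ := by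
        have := ((derivative^[k] f).hasDerivAt (z₀⁻¹)).comp z₀ (hasDerivAt_inv hz₀)
        rwa [← Function.iterate_succ_apply' derivative] at this
      exact h1.mul h2
    have heq : (fun z : ℂ => (derivative^[i] (reflect d f)).eval z) =ᶠ[nhds z₀]
        (fun z : ℂ => ∑ k ∈ Finset.range (i + 1),
          wcoef d i k * z ^ ((d : ℤ) - i - k) * (derivative^[k] f).eval z⁻¹) := by
      filter_upwards [IsOpen.mem_nhds isOpen_ne hz₀] with z hz using ih z hz
    have hL : (derivative^[i + 1] (reflect d f)).eval z₀ =
        deriv (fun z : ℂ => (derivative^[i] (reflect d f)).eval z) z₀ := by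
      rw [Polynomial.deriv, ← Function.iterate_succ_apply' derivative]
    rw [hL, heq.deriv_eq, hder.deriv]
    -- now pure algebra
    set E : ℕ → ℂ := fun k => (derivative^[k] f).eval z₀⁻¹ with hE
    set A' : ℕ → ℂ := fun k =>
      wcoef d i k * ((d : ℂ) - i - k) * z₀ ^ ((d : ℤ) - (i + 1) - k) * E k with hA'
    set B' : ℕ → ℂ := fun k =>
      if k = 0 then 0 else -(wcoef d i (k - 1) * z₀ ^ ((d : ℤ) - (i + 1) - k) * E k) with hB'
    have hterm : ∀ k ∈ Finset.range (i + 1),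
        wcoef d i k * ((((d : ℤ) - i - k : ℤ) : ℂ) * z₀ ^ ((d : ℤ) - i - k - 1)) * E k
          + wcoef d i k * z₀ ^ ((d : ℤ) - i - k) * (E (k + 1) * (-(z₀ ^ 2)⁻¹))
          = A' k + B' (k + 1) := by
      intro k _
      have he1 : (d : ℤ) - i - k - 1 = (d : ℤ) - (i + 1 : ℕ) - k := by push_cast; ring
      have he2 : z₀ ^ ((d : ℤ) - i - k) * (z₀ ^ (2 : ℕ))⁻¹ =
          z₀ ^ ((d : ℤ) - (i + 1 : ℕ) - (k + 1 : ℕ)) := by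
        rw [← zpow_natCast z₀ 2, ← zpow_neg, ← zpow_add₀ hz₀]
        congr 1
        push_cast
        ring
      have hthis : wcoef d i k * z₀ ^ ((d : ℤ) - i - k) * (E (k + 1) * (-(z₀ ^ 2)⁻¹)) =
          -(wcoef d i k * (z₀ ^ ((d : ℤ) - i - k) * (z₀ ^ (2 : ℕ))⁻¹) * E (k + 1)) := by
        ring
      simp only [hA', hB', if_neg (Nat.succ_ne_zero k), Nat.add_sub_cancel]
      rw [hthis, he2]
      push_cast
      ring
    rw [Finset.sum_congr rfl hterm, Finset.sum_add_distrib]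
    have h5 : ∑ k ∈ Finset.range (i + 2), A' k = ∑ k ∈ Finset.range (i + 1), A' k := by
      have hA0 : A' (i + 1) = 0 := by
        simp only [hA']
        rw [wcoef_eq_zero d i (i + 1) (by omega)]
        ring
      rw [Finset.sum_range_succ, hA0, add_zero]
    have h6 : ∑ k ∈ Finset.range (i + 2), B' k =
        ∑ k ∈ Finset.range (i + 1), B' (k + 1) := by
      rw [Finset.sum_range_succ' B' (i + 1)]
      have hB0 : B' 0 = 0 := by simp only [hB', if_pos rfl]
      rw [hB0, add_zero]
    rw [← h5, ← h6, ← Finset.sum_add_distrib]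
    refine (Finset.sum_congr rfl fun k _ => ?_).symm
    -- wcoef d (i+1) k * z₀ ^ ((d:ℤ) - (i+1) - k) * E k = A' k + B' k
    match k with
    | 0 =>
      have hw : wcoef d (i + 1) 0 = wcoef d i 0 * ((d : ℂ) - i) := rfl
      simp only [hA', hB', if_pos rfl, add_zero, hw]
      push_cast
      ring
    | k + 1 =>
      have hw : wcoef d (i + 1) (k + 1) =
          wcoef d i (k + 1) * ((d : ℂ) - i - (k + 1)) - wcoef d i k := rfl
      simp only [hA', hB', if_neg (Nat.succ_ne_zero k), Nat.add_sub_cancel, hw]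
      push_cast
      ring

private lemma prod_zpow_sum {z : ℂ} (hz : z ≠ 0) {ι : Type*} (s : Finset ι) (f : ι → ℤ) :
    ∏ i ∈ s, z ^ f i = z ^ (∑ i ∈ s, f i) := by
  induction s using Finset.cons_induction with
  | empty => simp
  | cons i s hi ih => rw [Finset.prod_cons, Finset.sum_cons, ih, zpow_add₀ hz]

private lemma eval_wronskianFam_reflect (r d : ℕ) (hrd : r ≤ d) (p : Fin (r + 1) → ℂ[X])
    (hdeg : ∀ j, (p j).natDegree ≤ d) {z : ℂ} (hz : z ≠ 0) :
    (wronskianFam fun j => (p j).reflect d).eval z =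
      (-1 : ℂ) ^ (∑ i ∈ Finset.range (r + 1), i) * z ^ ((r + 1) * (d - r)) *
        (wronskianFam p).eval z⁻¹ := by
  classical
  set C' : Matrix (Fin (r + 1)) (Fin (r + 1)) ℂ :=
    Matrix.of (fun i k : Fin (r + 1) => wcoef d i k * z ^ ((d : ℤ) - i - k)) with hC
  set B : Matrix (Fin (r + 1)) (Fin (r + 1)) ℂ :=
    Matrix.of (fun k j : Fin (r + 1) => (derivative^[(k : ℕ)] (p j)).eval z⁻¹) with hB
  have hmain : (wronskianFam fun j => (p j).reflect d).eval z = (C' * B).det := by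
    rw [wronskianFam, ← Polynomial.coe_evalRingHom, RingHom.map_det]
    congr 1
    refine Matrix.ext fun i j => ?_
    simp only [RingHom.mapMatrix_apply, Matrix.map_apply, Matrix.of_apply, coe_evalRingHom,
      Matrix.mul_apply, hC, hB]
    rw [eval_iterate_derivative_reflect d (p j) (hdeg j) (i : ℕ) z hz,
      Fin.sum_univ_eq_sum_range
        (fun k => wcoef d i k * z ^ ((d : ℤ) - i - k) * (derivative^[k] (p j)).eval z⁻¹) (r + 1)]
    refine Finset.sum_subset (Finset.range_subset_range.mpr (by omega)) fun k _ hk => ?_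
    rw [wcoef_eq_zero d i k (by simp only [Finset.mem_range] at hk; omega), zero_mul, zero_mul]
  have hdetC : C'.det = (-1 : ℂ) ^ (∑ i ∈ Finset.range (r + 1), i) * z ^ ((r + 1) * (d - r)) := by
    rw [Matrix.det_of_lowerTriangular C' (fun a b hab => by
      rw [hC, Matrix.of_apply, wcoef_eq_zero d a b hab, zero_mul])]
    have hdiag : ∀ i : Fin (r + 1), C' i i = (-1 : ℂ) ^ (i : ℕ) * z ^ ((d : ℤ) - i - i) := by
      intro i
      rw [hC, Matrix.of_apply, wcoef_diag]
    rw [Finset.prod_congr rfl fun i _ => hdiag i, Finset.prod_mul_distrib]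
    congr 1
    · rw [Fin.prod_univ_eq_prod_range (fun i => (-1 : ℂ) ^ i) (r + 1),
        Finset.prod_pow_eq_pow_sum]
    · rw [prod_zpow_sum hz]
      have hexp : (∑ i : Fin (r + 1), ((d : ℤ) - i - i)) = (((r + 1) * (d - r) : ℕ) : ℤ) := by
        rw [Fin.sum_univ_eq_sum_range (fun i => (d : ℤ) - i - i) (r + 1)]
        rw [Finset.sum_sub_distrib, Finset.sum_sub_distrib, Finset.sum_const, Finset.card_range]
        have h2m : (∑ i ∈ Finset.range (r + 1), i) * 2 = (r + 1) * r :=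
          Finset.sum_range_id_mul_two (r + 1)
        have hcast : (∑ i ∈ Finset.range (r + 1), (i : ℤ)) =
            ((∑ i ∈ Finset.range (r + 1), i : ℕ) : ℤ) := by push_cast; rfl
        have h2m' : (∑ i ∈ Finset.range (r + 1), (i : ℤ)) * 2 = ((r : ℤ) + 1) * r := by
          have := congrArg (fun t : ℕ => (t : ℤ)) h2m
          push_cast at this
          linarith [this]
        rw [nsmul_eq_mul]
        push_cast [Nat.cast_sub hrd]
        linear_combination -h2m'
      rw [hexp, zpow_natCast]
  have hdetB : B.det = (wronskianFam p).eval z⁻¹ := by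
    rw [wronskianFam, ← Polynomial.coe_evalRingHom, RingHom.map_det]
    rfl
  rw [hmain, Matrix.det_mul, hdetC, hdetB]

private lemma natDegree_wronskianFam_le (r d : ℕ) (hrd : r ≤ d) (p : Fin (r + 1) → ℂ[X])
    (hdeg : ∀ j, (p j).natDegree ≤ d) :
    (wronskianFam p).natDegree ≤ (r + 1) * (d - r) + ∑ i ∈ Finset.range (r + 1), i := by
  classical
  rw [wronskianFam, Matrix.det_apply']
  apply natDegree_sum_le_of_forall_le
  intro σ _
  refine le_trans natDegree_mul_le ?_
  rw [natDegree_intCast, zero_add]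
  apply (natDegree_prod_le _ _).trans
  have h1 : ∀ j : Fin (r + 1),
      ((Matrix.of fun i j : Fin (r + 1) => derivative^[(i : ℕ)] (p j)) (σ j) j).natDegree ≤
        d - (σ j : ℕ) := by
    intro j
    exact (natDegree_iterate_derivative _ _).trans (Nat.sub_le_sub_right (hdeg j) _)
  apply (Finset.sum_le_sum fun j _ => h1 j).trans
  -- ∑ j, (d - σ j) ≤ (r+1)(d-r) + m
  have hperm : (∑ j : Fin (r + 1), ((σ j : ℕ))) = ∑ i ∈ Finset.range (r + 1), i := by
    rw [Equiv.sum_comp σ fun j : Fin (r + 1) => (j : ℕ)]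
    exact Fin.sum_univ_eq_sum_range (fun i => i) (r + 1)
  have hterm : ∀ j : Fin (r + 1), d - (σ j : ℕ) + (σ j : ℕ) ≤ d := fun j => by omega
  have hsum : (∑ j : Fin (r + 1), (d - (σ j : ℕ))) + ∑ j : Fin (r + 1), ((σ j : ℕ)) ≤
      (r + 1) * d := by
    rw [← Finset.sum_add_distrib]
    calc (∑ j : Fin (r + 1), (d - (σ j : ℕ) + (σ j : ℕ)))
        ≤ ∑ _j : Fin (r + 1), d := Finset.sum_le_sum fun j _ => hterm j
      _ = (r + 1) * d := by rw [Finset.sum_const, Finset.card_univ, Fintype.card_fin, smul_eq_mul]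
  have h2m : (∑ i ∈ Finset.range (r + 1), i) * 2 = (r + 1) * r :=
    Finset.sum_range_id_mul_two (r + 1)
  have hmul : (r + 1) * (d - r) + (r + 1) * r = (r + 1) * d := by
    rw [← Nat.mul_add]
    congr 1
    omega
  omega

private lemma natTrailingDegree_reflect_eq {N : ℕ} {f : ℂ[X]} (hf0 : f ≠ 0)
    (hf : f.natDegree ≤ N) : (reflect N f).natTrailingDegree = N - f.natDegree := by
  apply le_antisymm
  · apply natTrailingDegree_le_of_ne_zero
    rw [coeff_reflect, revAt_le (by omega), show N - (N - f.natDegree) = f.natDegree by omega]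
    exact fun h => hf0 (leadingCoeff_eq_zero.mp h)
  · apply le_natTrailingDegree (fun h => hf0 (reflect_eq_zero_iff.mp h))
    intro k hk
    rw [coeff_reflect, revAt_le (by omega)]
    exact coeff_eq_zero_of_natDegree_lt (by omega)

private lemma reflect_wronskianFam_eq (r d : ℕ) (hrd : r ≤ d) (p : Fin (r + 1) → ℂ[X])
    (hdeg : ∀ j, (p j).natDegree ≤ d) :
    reflect ((r + 1) * (d - r) + ∑ i ∈ Finset.range (r + 1), i) (wronskianFam p) =
      C ((-1 : ℂ) ^ (∑ i ∈ Finset.range (r + 1), i)) *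
        X ^ (∑ i ∈ Finset.range (r + 1), i) *
        wronskianFam fun j => (p j).reflect d := by
  set m := ∑ i ∈ Finset.range (r + 1), i with hm
  apply eq_of_infinite_eval_eq
  apply Set.Infinite.mono (s := {z : ℂ | z ≠ 0})
  swap
  · have : ({z : ℂ | z ≠ 0}ᶜ : Set ℂ) = {0} := by ext w; simp
    apply Set.infinite_of_finite_compl
    rw [this]
    exact Set.finite_singleton 0
  · intro z hz
    have hz : z ≠ 0 := hz
    simp only [Set.mem_setOf_eq]
    rw [eval_reflect' _ (natDegree_wronskianFam_le r d hrd p hdeg) hz]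
    rw [eval_mul, eval_mul, eval_C, eval_pow, eval_X,
      eval_wronskianFam_reflect r d hrd p hdeg hz]
    have hsq : (-1 : ℂ) ^ m * (-1 : ℂ) ^ m = 1 := by
      rw [← pow_add]
      exact Even.neg_one_pow ⟨m, rfl⟩
    rw [pow_add]
    calc z ^ ((r + 1) * (d - r)) * z ^ m * eval z⁻¹ (wronskianFam p)
        = ((-1 : ℂ) ^ m * (-1 : ℂ) ^ m) * (z ^ ((r + 1) * (d - r)) * z ^ m *
            eval z⁻¹ (wronskianFam p)) := by rw [hsq, one_mul]
      _ = (-1 : ℂ) ^ m * z ^ m *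
          ((-1 : ℂ) ^ m * z ^ ((r + 1) * (d - r)) * eval z⁻¹ (wronskianFam p)) := by ring


/-- Let `p₀, …, p_r` be linearly independent complex polynomials of degree at most `d`,
`W` their Wronskian, and `W̃` the Wronskian of the family of reflections of the `p_j` at
degree `d` (coefficient reversal padded to degree `d`).  Then
`deg W + (multiplicity of 0 as a root of W̃) = (r+1)(d−r)`:  the total ramification of a
degree-`d` rational curve in `ℙ^r`, including at infinity, is `(r+1)(d−r)`. -/
theorem wronskian_natDegree_add_reflect_rootMultiplicity (r d : ℕ) (hrd : r ≤ d)
    (p : Fin (r + 1) → Polynomial ℂ)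
    (hind : LinearIndependent ℂ p)
    (hdeg : ∀ j, (p j).natDegree ≤ d) :
    (wronskianFam p).natDegree +
      rootMultiplicity 0 (wronskianFam fun j => (p j).reflect d) =
      (r + 1) * (d - r) := by
  have hWne : wronskianFam p ≠ 0 := wronskianFam_ne_zero p hind
  have hdegW := natDegree_wronskianFam_le r d hrd p hdeg
  have hrefl := reflect_wronskianFam_eq r d hrd p hdeg
  have hCne : (C ((-1 : ℂ) ^ (∑ i ∈ Finset.range (r + 1), i)) : ℂ[X]) ≠ 0 :=
    C_ne_zero.mpr (pow_ne_zero _ (neg_ne_zero.mpr one_ne_zero))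
  have hXne : (X : ℂ[X]) ^ (∑ i ∈ Finset.range (r + 1), i) ≠ 0 := pow_ne_zero _ X_ne_zero
  have hWtne : (wronskianFam fun j => (p j).reflect d) ≠ 0 := by
    intro h
    rw [h, mul_zero] at hrefl
    exact hWne (reflect_eq_zero_iff.mp hrefl)
  have h1 : (reflect ((r + 1) * (d - r) + ∑ i ∈ Finset.range (r + 1), i)
      (wronskianFam p)).natTrailingDegree =
      ((r + 1) * (d - r) + ∑ i ∈ Finset.range (r + 1), i) - (wronskianFam p).natDegree :=
    natTrailingDegree_reflect_eq hWne hdegW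
  have h2 : (reflect ((r + 1) * (d - r) + ∑ i ∈ Finset.range (r + 1), i)
      (wronskianFam p)).natTrailingDegree =
      (∑ i ∈ Finset.range (r + 1), i) +
        (wronskianFam fun j => (p j).reflect d).natTrailingDegree := by
    rw [hrefl, natTrailingDegree_mul (mul_ne_zero hCne hXne) hWtne,
      natTrailingDegree_mul hCne hXne, natTrailingDegree_C, natTrailingDegree_X_pow, zero_add]
  have h3 : rootMultiplicity 0 (wronskianFam fun j => (p j).reflect d) =
      (wronskianFam fun j => (p j).reflect d).natTrailingDegree :=
    rootMultiplicity_eq_natTrailingDegree'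
  omega
end

section
/- Let K be a field of characteristic zero, let s ∈ K, and let φ₀, φ₁, φ₂ ∈ K[x] be nonzero polynomials whose orders of vanishing at s are 0, α₁, α₂ respectively, where 0 < α₁ < α₂. Then the three 2×2 Wronskian minors m₀₁ = φ₀φ₁′ − φ₁φ₀′, m₀₂ = φ₀φ₂′ − φ₂φ₀′ and m₁₂ = φ₁φ₂′ − φ₂φ₁′ vanish at s to orders exactly α₁ − 1, α₂ − 1 and α₁ + α₂ − 1 respectively. Consequently, after dividing each minor by (x−s)^{α₁−1}, the resulting triple has orders of vanishing at s equal to 0, α₂ − α₁ and α₂; that is, the dual curve has ramification sequence (0, α₂ − α₁, α₂) at a point where the original plane curve has ramification sequence (0, α₁, α₂). -/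
open Polynomial

lemma wronskian_rootMult {K : Type*} [Field K] [CharZero K]
    (s : K) (f g : K[X]) (hf : f ≠ 0) (hg : g ≠ 0) {a b : ℕ}
    (ha : rootMultiplicity s f = a) (hb : rootMultiplicity s g = b) (hab : a < b) :
    f * derivative g - g * derivative f ≠ 0 ∧
      rootMultiplicity s (f * derivative g - g * derivative f) = a + b - 1 := by
  set u := f /ₘ (X - C s) ^ rootMultiplicity s f with hu
  set v := g /ₘ (X - C s) ^ rootMultiplicity s g with hv
  have hfu : (X - C s) ^ a * u = f := by rw [hu, ← ha]; exact pow_mul_divByMonic_rootMultiplicity_eq f s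
  have hgv : (X - C s) ^ b * v = g := by rw [hv, ← hb]; exact pow_mul_divByMonic_rootMultiplicity_eq g s
  have hue : eval s u ≠ 0 := eval_divByMonic_pow_rootMultiplicity_ne_zero s hf
  have hve : eval s v ≠ 0 := eval_divByMonic_pow_rootMultiplicity_ne_zero s hg
  set w : K[X] := C ((b : K) - a) * (u * v) +
    (X - C s) * (u * derivative v - v * derivative u) with hw
  have hwe : eval s w ≠ 0 := by
    have hba : (b : K) - a ≠ 0 := sub_ne_zero.mpr (by exact_mod_cast hab.ne')
    simp [hw, mul_ne_zero hba (mul_ne_zero hue hve)]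
  have key : f * derivative g - g * derivative f = (X - C s) ^ (a + b - 1) * w := by
    obtain ⟨b', rfl⟩ : ∃ b', b = b' + 1 := ⟨b - 1, by omega⟩
    rw [← hfu, ← hgv, hw]
    cases a with
    | zero =>
      simp only [pow_zero, one_mul, derivative_mul, derivative_pow, derivative_sub,
        derivative_X, derivative_C, Nat.add_sub_cancel, Nat.succ_sub_one,
        Nat.cast_add, Nat.cast_one, Nat.cast_zero, sub_zero, map_add, map_one,
        map_sub, map_natCast, Nat.zero_add]
      ring
    | succ a' =>
      simp only [derivative_mul, derivative_pow, derivative_sub, derivative_X,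
        derivative_C, Nat.succ_sub_one, Nat.add_sub_cancel,
        Nat.cast_add, Nat.cast_one, map_add, map_one, map_sub, map_natCast]
      have : a' + 1 + (b' + 1) - 1 = a' + b' + 1 := by omega
      rw [this]
      ring
  have hwne : w ≠ 0 := fun h => hwe (by simp [h])
  have hne : (X - C s) ^ (a + b - 1) * w ≠ 0 :=
    mul_ne_zero (pow_ne_zero _ (X_sub_C_ne_zero s)) hwne
  refine ⟨key ▸ hne, ?_⟩
  rw [key, rootMultiplicity_mul hne, rootMultiplicity_X_sub_C_pow,
    rootMultiplicity_eq_zero hwe, add_zero]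

lemma split_pow {K : Type*} [Field K] (s : K) (p : K[X]) (hp : p ≠ 0) (k : ℕ)
    (hk : k ≤ rootMultiplicity s p) :
    ∃ q : K[X], p = (X - C s) ^ k * q ∧
      rootMultiplicity s q = rootMultiplicity s p - k := by
  obtain ⟨q, hq⟩ := (le_rootMultiplicity_iff hp).mp hk
  refine ⟨q, hq, ?_⟩
  have hne : (X - C s) ^ k * q ≠ 0 := hq ▸ hp
  rw [hq, rootMultiplicity_mul hne, rootMultiplicity_X_sub_C_pow]
  omega

/-- Let `φ₀, φ₁, φ₂` be nonzero polynomials over a field of characteristic zero, with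
orders of vanishing `0, α₁, α₂` at `s`, where `0 < α₁ < α₂`.  Then the `2×2` Wronskian
minors `m₀₁ = φ₀φ₁′ − φ₁φ₀′`, `m₀₂ = φ₀φ₂′ − φ₂φ₀′`, `m₁₂ = φ₁φ₂′ − φ₂φ₁′` vanish at `s`
to orders exactly `α₁ − 1`, `α₂ − 1` and `α₁ + α₂ − 1`.  Consequently, after dividing
each minor by `(x − s)^(α₁−1)`, the resulting triple has orders of vanishing `0`,
`α₂ − α₁` and `α₂` at `s`: the dual curve has ramification `(0, α₂ − α₁, α₂)` where the
original curve has ramification `(0, α₁, α₂)`. -/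
theorem dual_curve_ramification {K : Type*} [Field K] [CharZero K]
    (s : K) (φ₀ φ₁ φ₂ : K[X]) (α₁ α₂ : ℕ)
    (h₀ : φ₀ ≠ 0) (h₁ : φ₁ ≠ 0) (h₂ : φ₂ ≠ 0)
    (hord₀ : rootMultiplicity s φ₀ = 0)
    (hord₁ : rootMultiplicity s φ₁ = α₁)
    (hord₂ : rootMultiplicity s φ₂ = α₂)
    (hα₁ : 0 < α₁) (hα₁₂ : α₁ < α₂) :
    (φ₀ * derivative φ₁ - φ₁ * derivative φ₀ ≠ 0 ∧
      rootMultiplicity s (φ₀ * derivative φ₁ - φ₁ * derivative φ₀) = α₁ - 1) ∧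
    (φ₀ * derivative φ₂ - φ₂ * derivative φ₀ ≠ 0 ∧
      rootMultiplicity s (φ₀ * derivative φ₂ - φ₂ * derivative φ₀) = α₂ - 1) ∧
    (φ₁ * derivative φ₂ - φ₂ * derivative φ₁ ≠ 0 ∧
      rootMultiplicity s (φ₁ * derivative φ₂ - φ₂ * derivative φ₁) = α₁ + α₂ - 1) ∧
    ∃ ψ₀₁ ψ₀₂ ψ₁₂ : K[X],
      φ₀ * derivative φ₁ - φ₁ * derivative φ₀ = (X - C s) ^ (α₁ - 1) * ψ₀₁ ∧
      φ₀ * derivative φ₂ - φ₂ * derivative φ₀ = (X - C s) ^ (α₁ - 1) * ψ₀₂ ∧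
      φ₁ * derivative φ₂ - φ₂ * derivative φ₁ = (X - C s) ^ (α₁ - 1) * ψ₁₂ ∧
      rootMultiplicity s ψ₀₁ = 0 ∧
      rootMultiplicity s ψ₀₂ = α₂ - α₁ ∧
      rootMultiplicity s ψ₁₂ = α₂ := by
  obtain ⟨hne01, hm01⟩ := wronskian_rootMult s φ₀ φ₁ h₀ h₁ hord₀ hord₁ hα₁
  obtain ⟨hne02, hm02⟩ := wronskian_rootMult s φ₀ φ₂ h₀ h₂ hord₀ hord₂ (hα₁.trans hα₁₂)
  obtain ⟨hne12, hm12⟩ := wronskian_rootMult s φ₁ φ₂ h₁ h₂ hord₁ hord₂ hα₁₂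
  simp only [Nat.zero_add] at hm01 hm02
  obtain ⟨ψ₀₁, he01, hq01⟩ := split_pow s _ hne01 (α₁ - 1) (by omega)
  obtain ⟨ψ₀₂, he02, hq02⟩ := split_pow s _ hne02 (α₁ - 1) (by omega)
  obtain ⟨ψ₁₂, he12, hq12⟩ := split_pow s _ hne12 (α₁ - 1) (by omega)
  exact ⟨⟨hne01, hm01⟩, ⟨hne02, hm02⟩, ⟨hne12, hm12⟩,
    ψ₀₁, ψ₀₂, ψ₁₂, he01, he02, he12, by omega, by omega, by omega⟩
end

section
/- For every integer k ≥ 1, let T_k denote the Chebyshev polynomial of the first kind of degree k, and define f_k(x,y) = y² − 2y·T_k(x+2) + 1. Then the set of singular real points of the curve f_k = 0, namely {(x,y) ∈ ℝ² : f_k(x,y) = 0, ∂f_k/∂x(x,y) = 0, ∂f_k/∂y(x,y) = 0}, has exactly k−1 elements, and each of these points is an isolated point of the real zero set {(x,y) ∈ ℝ² : f_k(x,y) = 0} (a solitary point of the curve). -/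
/-- The polynomial `f_k(x,y) = y² − 2y·T_k(x+2) + 1` as a polynomial in two variables,
where `T_k` is the Chebyshev polynomial of the first kind of degree `k`. -/
noncomputable def chebCurve (k : ℕ) : MvPolynomial (Fin 2) ℝ :=
  MvPolynomial.X 1 ^ 2 -
    2 * MvPolynomial.X 1 *
      Polynomial.aeval (MvPolynomial.X 0 + 2 : MvPolynomial (Fin 2) ℝ)
        (Polynomial.Chebyshev.T ℝ (k : ℤ)) + 1

/-- The real zero set of `f_k`. -/
def chebZeros (k : ℕ) : Set (ℝ × ℝ) :=
  {p | MvPolynomial.eval ![p.1, p.2] (chebCurve k) = 0}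

/-- The set of singular real points of the curve `f_k = 0`. -/
def chebSing (k : ℕ) : Set (ℝ × ℝ) :=
  {p | MvPolynomial.eval ![p.1, p.2] (chebCurve k) = 0 ∧
    MvPolynomial.eval ![p.1, p.2] (MvPolynomial.pderiv 0 (chebCurve k)) = 0 ∧
    MvPolynomial.eval ![p.1, p.2] (MvPolynomial.pderiv 1 (chebCurve k)) = 0}

open Polynomial Polynomial.Chebyshev Real

section Aux

lemma mv_eval_aeval (v : Fin 2 → ℝ) (q : MvPolynomial (Fin 2) ℝ) (p : ℝ[X]) :
    MvPolynomial.eval v (Polynomial.aeval q p) = Polynomial.eval (MvPolynomial.eval v q) p := by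
  have h : ∀ r : MvPolynomial (Fin 2) ℝ, MvPolynomial.aeval v r = MvPolynomial.eval v r :=
    fun r => rfl
  have := Polynomial.aeval_algHom_apply (MvPolynomial.aeval v) q p
  rw [h, h] at this
  rw [← this, ← Polynomial.coe_aeval_eq_eval]

lemma mv_pderiv_aeval (i : Fin 2) (q : MvPolynomial (Fin 2) ℝ) (p : ℝ[X]) :
    MvPolynomial.pderiv i (Polynomial.aeval q p) =
      Polynomial.aeval q (derivative p) * MvPolynomial.pderiv i q := by
  simp [smul_eq_mul, (MvPolynomial.pderiv i).map_aeval p q]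

lemma pderiv_two (i : Fin 2) : MvPolynomial.pderiv i (2 : MvPolynomial (Fin 2) ℝ) = 0 := by
  have : (2 : MvPolynomial (Fin 2) ℝ) = MvPolynomial.C 2 := by
    simp [map_ofNat]
  rw [this, MvPolynomial.pderiv_C]

lemma eval_chebCurve (k : ℕ) (x y : ℝ) :
    MvPolynomial.eval ![x, y] (chebCurve k) =
      y ^ 2 - 2 * y * (T ℝ (k : ℤ)).eval (x + 2) + 1 := by
  simp only [chebCurve, map_add, map_sub, map_mul, map_pow, map_one, map_ofNat,
    MvPolynomial.eval_X, mv_eval_aeval]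
  norm_num

lemma eval_pderiv0 (k : ℕ) (x y : ℝ) :
    MvPolynomial.eval ![x, y] (MvPolynomial.pderiv 0 (chebCurve k)) =
      -(2 * y * (derivative (T ℝ (k : ℤ))).eval (x + 2)) := by
  simp only [chebCurve, map_add, map_sub, MvPolynomial.pderiv_mul, mv_pderiv_aeval,
    MvPolynomial.pderiv_pow, MvPolynomial.pderiv_X_self, MvPolynomial.pderiv_X_of_ne
      (show (1 : Fin 2) ≠ 0 by decide), MvPolynomial.pderiv_one, pderiv_two, map_mul, map_pow,
    map_one, map_ofNat, MvPolynomial.eval_X, mv_eval_aeval, map_zero, MvPolynomial.eval_zero]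
  norm_num

lemma eval_pderiv1 (k : ℕ) (x y : ℝ) :
    MvPolynomial.eval ![x, y] (MvPolynomial.pderiv 1 (chebCurve k)) =
      2 * y - 2 * (T ℝ (k : ℤ)).eval (x + 2) := by
  simp only [chebCurve, map_add, map_sub, MvPolynomial.pderiv_mul, mv_pderiv_aeval,
    MvPolynomial.pderiv_pow, MvPolynomial.pderiv_X_self, MvPolynomial.pderiv_X_of_ne
      (show (0 : Fin 2) ≠ 1 by decide), MvPolynomial.pderiv_one, pderiv_two, map_mul, map_pow,
    map_one, map_ofNat, MvPolynomial.eval_X, mv_eval_aeval, map_zero, MvPolynomial.eval_zero]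
  norm_num

lemma U_eval_add_two (n : ℤ) (u : ℝ) :
    (U ℝ (n + 2)).eval u = 2 * u * (U ℝ (n + 1)).eval u - (U ℝ n).eval u := by
  rw [U_add_two]; simp

lemma one_le_U_eval (u : ℝ) (hu : 1 ≤ u) :
    ∀ n : ℕ, 1 ≤ (U ℝ (n : ℤ)).eval u ∧ (U ℝ (n : ℤ)).eval u ≤ (U ℝ ((n : ℤ) + 1)).eval u := by
  intro n
  induction n with
  | zero => simp [U_zero, U_one]; nlinarith
  | succ m ih =>
    obtain ⟨h1, h2⟩ := ih
    have key : (U ℝ ((m : ℤ) + 2)).eval u = 2 * u * (U ℝ ((m : ℤ) + 1)).eval u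
        - (U ℝ (m : ℤ)).eval u := U_eval_add_two m u
    constructor
    · push_cast; linarith [key]
    · push_cast
      have : ((m : ℤ) + 1 + 1) = (m : ℤ) + 2 := by ring
      rw [this, key]
      nlinarith

lemma U_eval_neg (u : ℝ) : ∀ n : ℕ, (U ℝ (n : ℤ)).eval (-u) = (-1) ^ n * (U ℝ (n : ℤ)).eval u := by
  intro n
  induction n using Nat.twoStepInduction with
  | zero => simp [U_zero]
  | one => simp [U_one]
  | more m ih1 ih2 =>
    have key := U_eval_add_two (m : ℤ) u
    have key' := U_eval_add_two (m : ℤ) (-u)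
    have e1 : ((m : ℤ) + 1) = ((m + 1 : ℕ) : ℤ) := by push_cast; ring
    push_cast
    rw [key', key, e1, ih2, ih1]
    ring

lemma U_eval_ne_zero (n : ℕ) (u : ℝ) (hu : 1 ≤ |u|) : (U ℝ (n : ℤ)).eval u ≠ 0 := by
  rcases le_or_gt 1 u with h | h
  · have := (one_le_U_eval u h n).1; linarith
  · have hu' : 1 ≤ -u := by
      rcases abs_cases u with ⟨h1, _⟩ | ⟨h1, _⟩ <;> linarith
    have h1 := (one_le_U_eval (-u) hu' n).1
    have h2 := U_eval_neg (-u) n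
    rw [neg_neg] at h2
    rw [h2]
    intro hc
    rcases mul_eq_zero.1 hc with hc' | hc'
    · exact pow_ne_zero n (by norm_num : (-1 : ℝ) ≠ 0) hc'
    · linarith

lemma cast_sub_one (k : ℕ) (hk : 1 ≤ k) : ((k - 1 : ℕ) : ℤ) = (k : ℤ) - 1 := by
  omega

lemma derivT_root_iff (k : ℕ) (hk : 1 ≤ k) (u : ℝ) :
    (derivative (T ℝ (k : ℤ))).eval u = 0 ↔
      ∃ j ∈ Finset.Ioo 0 k, u = Real.cos (j * π / k) := by
  have hk0 : (k : ℝ) ≠ 0 := Nat.cast_ne_zero.2 (by omega)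
  rw [T_derivative_eq_U]
  constructor
  · intro h
    simp only [eval_mul, eval_intCast] at h
    have hU : (U ℝ ((k : ℤ) - 1)).eval u = 0 := by
      push_cast at h
      rcases mul_eq_zero.1 h with h' | h'
      · exact absurd h' hk0
      · exact h'
    have hu1 : |u| < 1 := by
      by_contra hc
      push_neg at hc
      have := U_eval_ne_zero (k - 1) u hc
      rw [cast_sub_one k hk] at this
      exact this hU
    have hub := abs_lt.1 hu1
    set θ := Real.arccos u with hθ
    have hθ0 : 0 < θ := Real.arccos_pos.2 hub.2
    have hθπ : θ < π := by
      rw [hθ, Real.arccos_eq_pi_div_two_sub_arcsin]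
      have := Real.neg_pi_div_two_lt_arcsin.2 hub.1
      linarith
    have hcos : Real.cos θ = u := Real.cos_arccos (by linarith) (by linarith)
    have hU2 := U_real_cos θ ((k : ℤ) - 1)
    rw [hcos, hU, zero_mul] at hU2
    have hsin : Real.sin ((k : ℝ) * θ) = 0 := by
      have : (((k : ℤ) - 1 : ℤ) : ℝ) + 1 = (k : ℝ) := by push_cast; ring
      rw [this] at hU2
      exact hU2.symm
    obtain ⟨n, hn⟩ := Real.sin_eq_zero_iff.1 hsin
    have hπ : (0 : ℝ) < π := Real.pi_pos
    have hn0 : 0 < n := by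
      by_contra hc
      push_neg at hc
      have : (n : ℝ) * π ≤ 0 := mul_nonpos_of_nonpos_of_nonneg (by exact_mod_cast hc) hπ.le
      nlinarith [mul_pos (show (0:ℝ) < (k:ℝ) by positivity) (mul_pos hθ0 hπ)]
    have hnk : n < k := by
      have h1 : (n : ℝ) * π < (k : ℝ) * π := by
        rw [hn]
        have hkpos : (0 : ℝ) < (k : ℝ) := by positivity
        nlinarith
      have : (n : ℝ) < (k : ℝ) := lt_of_mul_lt_mul_right h1 hπ.le
      exact_mod_cast this
    refine ⟨n.toNat, Finset.mem_Ioo.2 ⟨by omega, by omega⟩, ?_⟩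
    have hnn : ((n.toNat : ℕ) : ℝ) = (n : ℝ) := by
      exact_mod_cast Int.toNat_of_nonneg hn0.le
    have hang : ((n.toNat : ℕ) : ℝ) * π / k = θ := by
      rw [hnn]
      field_simp
      linarith [hn]
    rw [hang, hcos]
  · rintro ⟨j, hj, rfl⟩
    rw [Finset.mem_Ioo] at hj
    set θ := (j : ℝ) * π / k with hθ
    have hπ : (0 : ℝ) < π := Real.pi_pos
    have hθ0 : 0 < θ := by
      apply div_pos (mul_pos _ hπ) (by positivity)
      exact_mod_cast hj.1
    have hθπ : θ < π := by
      rw [hθ, div_lt_iff₀ (by positivity : (0:ℝ) < k)]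
      have : (j : ℝ) < k := by exact_mod_cast hj.2
      nlinarith
    have hsθ : Real.sin θ ≠ 0 := (Real.sin_pos_of_pos_of_lt_pi hθ0 hθπ).ne'
    have hU2 := U_real_cos θ ((k : ℤ) - 1)
    have hkθ : (((k : ℤ) - 1 : ℤ) : ℝ) + 1 = (k : ℝ) := by push_cast; ring
    rw [hkθ] at hU2
    have : (k : ℝ) * θ = j * π := by
      rw [hθ]; field_simp
    rw [this, Real.sin_nat_mul_pi] at hU2
    have hU0 : (U ℝ ((k : ℤ) - 1)).eval (Real.cos θ) = 0 := by
      rcases mul_eq_zero.1 hU2 with h' | h'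
      · exact h'
      · exact absurd h' hsθ
    simp [hU0]

lemma T_eval_node (k j : ℕ) (hk : 1 ≤ k) :
    (T ℝ (k : ℤ)).eval (Real.cos (j * π / k)) = Real.cos (j * π) := by
  have hk0 : (k : ℝ) ≠ 0 := Nat.cast_ne_zero.2 (by omega)
  rw [T_real_cos ((j : ℝ) * π / k) (k : ℤ)]
  congr 1
  push_cast
  field_simp

lemma cos_nat_mul_pi_sq (j : ℕ) : Real.cos (j * π) ^ 2 = 1 := by
  have h := Real.sin_sq_add_cos_sq ((j : ℝ) * π)
  rw [Real.sin_nat_mul_pi] at h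
  nlinarith

/-- Characterization of the singular points. -/
lemma mem_chebSing_iff (k : ℕ) (p : ℝ × ℝ) :
    p ∈ chebSing k ↔
      ((derivative (T ℝ (k : ℤ))).eval (p.1 + 2) = 0 ∧
        (T ℝ (k : ℤ)).eval (p.1 + 2) ^ 2 = 1 ∧
        p.2 = (T ℝ (k : ℤ)).eval (p.1 + 2)) := by
  simp only [chebSing, Set.mem_setOf_eq, eval_chebCurve, eval_pderiv0, eval_pderiv1]
  constructor
  · rintro ⟨hf, h0, h1⟩
    have hy : p.2 = (T ℝ (k : ℤ)).eval (p.1 + 2) := by linarith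
    have hsq : (T ℝ (k : ℤ)).eval (p.1 + 2) ^ 2 = 1 := by nlinarith
    have hy0 : p.2 ≠ 0 := by
      intro hc
      rw [hc] at hy
      nlinarith
    refine ⟨?_, hsq, hy⟩
    have := h0
    rcases mul_eq_zero.1 (by linarith : 2 * p.2 * (derivative (T ℝ (k : ℤ))).eval (p.1 + 2) = 0)
      with h | h
    · rcases mul_eq_zero.1 h with h' | h'
      · norm_num at h'
      · exact absurd h' hy0
    · exact h
  · rintro ⟨hd, hsq, hy⟩
    refine ⟨by nlinarith, by rw [hd]; ring, by rw [hy]; ring⟩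

/-- The singular set as an explicit image. -/
lemma chebSing_eq (k : ℕ) (hk : 1 ≤ k) :
    chebSing k = (fun j : ℕ => (Real.cos (j * π / k) - 2, Real.cos (j * π))) ''
      ↑(Finset.Ioo 0 k) := by
  ext p
  rw [mem_chebSing_iff]
  constructor
  · rintro ⟨hd, hsq, hy⟩
    obtain ⟨j, hj, hu⟩ := (derivT_root_iff k hk (p.1 + 2)).1 hd
    refine ⟨j, hj, ?_⟩
    have h1 : p.1 = Real.cos (j * π / k) - 2 := by linarith
    have h2 : p.2 = Real.cos (j * π) := by
      rw [hy, hu, T_eval_node k j hk]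
    rw [Prod.ext_iff]
    exact ⟨h1.symm, h2.symm⟩
  · rintro ⟨j, hj, rfl⟩
    have hu : ((Real.cos (j * π / k) - 2 : ℝ), Real.cos (j * π)).1 + 2
        = Real.cos (j * π / k) := by ring
    rw [hu]
    refine ⟨(derivT_root_iff k hk _).2 ⟨j, hj, rfl⟩, ?_, ?_⟩
    · rw [T_eval_node k j hk]; exact cos_nat_mul_pi_sq j
    · rw [T_eval_node k j hk]

end Aux

/-- For every `k ≥ 1`, the curve `f_k(x,y) = y² − 2y·T_k(x+2) + 1 = 0` has exactly
`k − 1` singular real points, and each of them is an isolated point of the real zero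
set of `f_k` (a solitary point of the curve). -/
theorem chebCurve_solitary_points (k : ℕ) (hk : 1 ≤ k) :
    (chebSing k).ncard = k - 1 ∧
    ∀ p ∈ chebSing k, ∃ ε > (0 : ℝ), chebZeros k ∩ Metric.ball p ε = {p} := by
  have hπ : (0 : ℝ) < π := Real.pi_pos
  have hkR : (0 : ℝ) < (k : ℝ) := by positivity
  constructor
  · rw [chebSing_eq k hk]
    rw [Set.ncard_image_of_injOn, Set.ncard_coe_finset, Nat.card_Ioo]
    · omega
    intro a ha b hb hab
    simp only [Finset.coe_Ioo, Set.mem_Ioo] at ha hb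
    have hfst := congrArg Prod.fst hab
    simp only at hfst
    have hc : Real.cos (a * π / k) = Real.cos (b * π / k) := by linarith
    have hmem : ∀ j : ℕ, j < k → (j : ℝ) * π / k ∈ Set.Icc 0 π := by
      intro j hj
      constructor
      · positivity
      · rw [div_le_iff₀ hkR]
        have : (j : ℝ) ≤ k := by exact_mod_cast hj.le
        nlinarith
    have := Real.injOn_cos (hmem a ha.2) (hmem b hb.2) hc
    field_simp at this
    exact_mod_cast this
  · intro p hp
    rw [chebSing_eq k hk] at hp
    obtain ⟨j, hj, rfl⟩ := hp
    simp only [Finset.coe_Ioo, Set.mem_Ioo] at hj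
    set θ := (j : ℝ) * π / k with hθdef
    set c := Real.cos θ with hcdef
    have hθ0 : 0 < θ := by
      apply div_pos (mul_pos _ hπ) hkR
      exact_mod_cast hj.1
    have hθπ : θ < π := by
      rw [hθdef, div_lt_iff₀ hkR]
      have : (j : ℝ) < k := by exact_mod_cast hj.2
      nlinarith
    have hc1 : c < 1 := by
      calc c < Real.cos 0 := Real.strictAntiOn_cos ⟨le_refl 0, hπ.le⟩ ⟨hθ0.le, hθπ.le⟩ hθ0
      _ = 1 := Real.cos_zero
    have hcm1 : -1 < c := by
      calc (-1 : ℝ) = Real.cos π := Real.cos_pi.symm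
      _ < c := Real.strictAntiOn_cos ⟨hθ0.le, hθπ.le⟩ ⟨hπ.le, le_refl π⟩ hθπ
    -- the polynomial T² - 1 is nonzero
    set Q : ℝ[X] := T ℝ (k : ℤ) ^ 2 - 1 with hQdef
    have hQne : Q ≠ 0 := by
      intro hc0
      have h2k : (0:ℝ) < 2 * k := by positivity
      have := congrArg (Polynomial.eval (Real.cos (π / (2 * k)))) hc0
      simp only [hQdef, eval_sub, eval_pow, eval_one, eval_zero,
        T_real_cos (π / (2 * k)) (k : ℤ)] at this
      have hang : (((k : ℤ) : ℝ)) * (π / (2 * k)) = π / 2 := by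
        push_cast
        field_simp
      rw [hang, Real.cos_pi_div_two] at this
      norm_num at this
    have hAfin : ({u : ℝ | Q.IsRoot u} \ {c}).Finite :=
      (Polynomial.finite_setOf_isRoot hQne).subset Set.diff_subset
    have hclosed : IsClosed ({u : ℝ | Q.IsRoot u} \ {c}) := hAfin.isClosed
    have hcnot : c ∈ ({u : ℝ | Q.IsRoot u} \ {c})ᶜ := by
      simp
    obtain ⟨δ₁, hδ₁, hball⟩ := Metric.isOpen_iff.1 hclosed.isOpen_compl c hcnot
    set δ : ℝ := min δ₁ (min (1 - c) (c + 1)) with hδdef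
    have hδ0 : 0 < δ := by
      apply lt_min hδ₁
      apply lt_min <;> linarith
    refine ⟨δ, hδ0, ?_⟩
    ext q
    simp only [Set.mem_inter_iff, Set.mem_singleton_iff, Metric.mem_ball, chebZeros,
      Set.mem_setOf_eq]
    constructor
    · rintro ⟨hq, hd⟩
      rw [eval_chebCurve] at hq
      set u := q.1 + 2 with hudef
      set g := (T ℝ (k : ℤ)).eval u with hgdef
      have hdx : |u - c| < δ := by
        have h1 : dist q.1 (c - 2) ≤ dist q (c - 2, Real.cos (j * π)) := by
          rw [Prod.dist_eq]
          exact le_max_left _ _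
        have : dist q.1 (c - 2) < δ := lt_of_le_of_lt h1 hd
        rw [Real.dist_eq] at this
        have he : u - c = q.1 - (c - 2) := by rw [hudef]; ring
        rw [he]
        exact this
      have hub : -1 < u ∧ u < 1 := by
        have := abs_lt.1 hdx
        have h2 : δ ≤ 1 - c := le_trans (min_le_right _ _) (min_le_left _ _)
        have h3 : δ ≤ c + 1 := le_trans (min_le_right _ _) (min_le_right _ _)
        constructor <;> linarith
      -- |T(u)| ≤ 1 on [-1,1]
      have hg2le : g ^ 2 ≤ 1 := by
        obtain ⟨φ, hφmem, hφ⟩ := Real.surjOn_cos ⟨hub.1.le, hub.2.le⟩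
        rw [hgdef, ← hφ, T_real_cos φ (k : ℤ)]
        nlinarith [Real.neg_one_le_cos (((k : ℤ) : ℝ) * φ),
          Real.cos_le_one (((k : ℤ) : ℝ) * φ)]
      have hg2ge : 1 ≤ g ^ 2 := by nlinarith [sq_nonneg (q.2 - g)]
      have hg2 : g ^ 2 = 1 := le_antisymm hg2le hg2ge
      have hroot : Q.IsRoot u := by
        simp [hQdef, Polynomial.IsRoot, hg2, ← hgdef]
      have huc : u = c := by
        by_contra hne
        have hmem : u ∈ {u : ℝ | Q.IsRoot u} \ {c} := ⟨hroot, hne⟩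
        have : u ∈ Metric.ball c δ₁ := by
          rw [Metric.mem_ball, Real.dist_eq]
          exact lt_of_lt_of_le hdx (min_le_left _ _)
        exact (hball this) hmem
      have hx : q.1 = c - 2 := by rw [← huc, hudef]; ring
      have hgc : g = Real.cos (j * π) := by
        rw [hgdef, huc, hcdef, hθdef]
        exact T_eval_node k j hk
      have hy : q.2 = Real.cos (j * π) := by nlinarith [sq_nonneg (q.2 - g)]
      exact Prod.ext hx hy
    · rintro rfl
      constructor
      · rw [eval_chebCurve]
        have h2 : ((c - 2 : ℝ), Real.cos (j * π)).1 + 2 = c := by ring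
        simp only [h2]
        have hgc : (T ℝ (k : ℤ)).eval c = Real.cos (j * π) := by
          rw [hcdef, hθdef]; exact T_eval_node k j hk
        rw [show Real.cos ((j : ℝ) * π / k) - 2 + 2 = c by simp [hcdef, hθdef], hgc]
        have := cos_nat_mul_pi_sq j
        nlinarith
      · simpa using hδ0
end

section
/- For integers m > p ≥ 1 with m − p odd, define r(m,p) = [∏_{j=1}^{p} ((m−p−1+2j)/2)! · (mp)!] / [∏_{j=1}^{p} (m−p−1+2j)! · (mp/2)!] (all arguments are natural numbers since m − p is odd, which forces mp even). Then for every fixed integer p ≥ 2, writing m = p + 1 + 2k, the quotient log r(m,p) / (m·p·log p) tends to 1/2 as k → ∞. -/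
open Real Filter Finset



/-- The ratio `r(m,p)` of Schubert's number of complex curves to the Eremenko–Gabrielov
lower bound on the number of real curves:
`r(m,p) = [∏_{j=1}^{p} ((m−p−1+2j)/2)! · (mp)!] / [∏_{j=1}^{p} (m−p−1+2j)! · (mp/2)!]`.
(When `m − p` is odd all the divisions by 2 are exact.) -/
noncomputable def schubertRatio (m p : ℕ) : ℝ :=
  (((∏ j ∈ Finset.Icc 1 p, Nat.factorial ((m - p - 1 + 2 * j) / 2)) *
      Nat.factorial (m * p) : ℕ) : ℝ) /
  (((∏ j ∈ Finset.Icc 1 p, Nat.factorial (m - p - 1 + 2 * j)) *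
      Nat.factorial (m * p / 2) : ℕ) : ℝ)

noncomputable def errT (n : ℕ) : ℝ := Real.log (Nat.factorial n) - ((n : ℝ) * Real.log n - n)

lemma stirling_lower (n : ℕ) : Real.sqrt Real.pi ≤ Stirling.stirlingSeq (n + 1) := by
  have htend : Filter.Tendsto (Stirling.stirlingSeq ∘ Nat.succ) Filter.atTop
      (nhds (Real.sqrt Real.pi)) :=
    Stirling.tendsto_stirlingSeq_sqrt_pi.comp (Filter.tendsto_add_atTop_nat 1)
  exact Stirling.stirlingSeq'_antitone.le_of_tendsto htend n

lemma err_bound (n : ℕ) (hn : 1 ≤ n) : |errT n| ≤ 1 + Real.log (2 * n) := by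
  have h2n : (1:ℝ) ≤ 2 * n := by
    have : (1:ℝ) ≤ (n : ℝ) := by exact_mod_cast hn
    nlinarith
  have hlog2n : 0 ≤ Real.log (2 * n) := Real.log_nonneg h2n
  have hform := Stirling.log_stirlingSeq_formula n
  have hnpos : (0:ℝ) < n := by exact_mod_cast hn
  have hlogdiv : Real.log ((n : ℝ) / Real.exp 1) = Real.log n - 1 := by
    rw [Real.log_div (ne_of_gt hnpos) (Real.exp_ne_zero 1), Real.log_exp]
  have herr : errT n = Real.log (Stirling.stirlingSeq n) + 1 / 2 * Real.log (2 * n) := by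
    unfold errT
    rw [hform, hlogdiv]; ring
  obtain ⟨n', rfl⟩ : ∃ n', n = n' + 1 := ⟨n - 1, by omega⟩
  have hlo : 0 ≤ Real.log (Stirling.stirlingSeq (n' + 1)) := by
    apply Real.log_nonneg
    refine le_trans ?_ (stirling_lower n')
    nlinarith [Real.pi_gt_three, Real.sq_sqrt (le_of_lt Real.pi_pos),
      Real.sqrt_nonneg Real.pi]
  have hhi : Real.log (Stirling.stirlingSeq (n' + 1)) ≤ 1 := by
    have h1 : Stirling.stirlingSeq (n' + 1) ≤ Stirling.stirlingSeq 1 := by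
      have := Stirling.stirlingSeq'_antitone (show 0 ≤ n' by omega)
      simpa [Function.comp] using this
    calc Real.log (Stirling.stirlingSeq (n' + 1)) ≤ Real.log (Stirling.stirlingSeq 1) :=
          Real.log_le_log (Stirling.stirlingSeq'_pos n') h1
      _ ≤ 1 := by
          rw [Stirling.stirlingSeq_one]
          have : Real.exp 1 / Real.sqrt 2 ≤ Real.exp 1 := by
            apply div_le_self (le_of_lt (Real.exp_pos 1))
            nlinarith [Real.sq_sqrt (by norm_num : (0:ℝ) ≤ 2), Real.sqrt_nonneg 2]
          calc Real.log (Real.exp 1 / Real.sqrt 2) ≤ Real.log (Real.exp 1) :=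
                Real.log_le_log (by positivity) this
            _ = 1 := Real.log_exp 1
  rw [herr, abs_le]
  constructor <;> nlinarith


noncomputable def mainT (n : ℕ) : ℝ := (n : ℝ) * Real.log n - n

lemma logfac (n : ℕ) : Real.log (Nat.factorial n) = mainT n + errT n := by
  unfold mainT errT; ring

def SS (p k : ℕ) : ℕ := ∑ j ∈ Finset.Icc 1 p, (k + j)

lemma gauss (p : ℕ) : 2 * ∑ j ∈ Finset.Icc 1 p, j = p * (p + 1) := by
  induction p with
  | zero => simp
  | succ n ih =>
      rw [Finset.sum_Icc_succ_top (by omega)]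
      nlinarith [ih]

lemma two_SS (p k : ℕ) : 2 * SS p k = (p + 1 + 2 * k) * p := by
  have h1 : SS p k = p * k + ∑ j ∈ Finset.Icc 1 p, j := by
    unfold SS
    rw [Finset.sum_add_distrib, Finset.sum_const, Nat.card_Icc]
    simp [mul_comm]
  have h2 := gauss p
  nlinarith [h2]

lemma SS_pos (p k : ℕ) (hp : 1 ≤ p) : 1 ≤ SS p k := by
  have := two_SS p k
  nlinarith

lemma le_SS (p k j : ℕ) (hj : j ∈ Finset.Icc 1 p) : k + j ≤ SS p k :=
  Finset.single_le_sum (f := fun j => k + j) (fun _ _ => Nat.zero_le _) hj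

lemma log_decomp (p k : ℕ) (hp : 1 ≤ p) :
    Real.log (schubertRatio (p + 1 + 2 * k) p)
      = (∑ j ∈ Finset.Icc 1 p,
          ((k + j : ℕ) : ℝ) * (Real.log (SS p k) - Real.log ((k + j : ℕ) : ℝ)))
        + (errT (2 * SS p k) - errT (SS p k)
           + ∑ j ∈ Finset.Icc 1 p, (errT (k + j) - errT (2 * (k + j)))) := by
  have hS1 : 1 ≤ SS p k := SS_pos p k hp
  have hprod1 : (∏ j ∈ Finset.Icc 1 p, Nat.factorial ((p + 1 + 2 * k - p - 1 + 2 * j) / 2))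
      = ∏ j ∈ Finset.Icc 1 p, Nat.factorial (k + j) :=
    Finset.prod_congr rfl (fun j hj => by congr 1; omega)
  have hprod2 : (∏ j ∈ Finset.Icc 1 p, Nat.factorial (p + 1 + 2 * k - p - 1 + 2 * j))
      = ∏ j ∈ Finset.Icc 1 p, Nat.factorial (2 * (k + j)) :=
    Finset.prod_congr rfl (fun j hj => by congr 1; omega)
  have hmp : (p + 1 + 2 * k) * p = 2 * SS p k := (two_SS p k).symm
  have hmp2 : (p + 1 + 2 * k) * p / 2 = SS p k := by omega
  unfold schubertRatio
  rw [hprod1, hprod2, hmp, (by omega : 2 * SS p k / 2 = SS p k)]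
  rw [Nat.cast_mul, Nat.cast_mul, Nat.cast_prod, Nat.cast_prod]
  have hfac : ∀ n : ℕ, ((Nat.factorial n : ℝ)) ≠ 0 :=
    fun n => by exact_mod_cast (Nat.factorial_pos n).ne'
  have hprodne : ∀ f : ℕ → ℕ, (∏ j ∈ Finset.Icc 1 p, (Nat.factorial (f j) : ℝ)) ≠ 0 :=
    fun f => Finset.prod_ne_zero_iff.2 (fun j _ => hfac _)
  rw [Real.log_div (by positivity) (by
        exact mul_ne_zero (hprodne (fun j => 2 * (k + j))) (hfac _)),
      Real.log_mul (hprodne (fun j => k + j)) (hfac _),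
      Real.log_mul (hprodne (fun j => 2 * (k + j))) (hfac _),
      Real.log_prod (fun j _ => hfac _), Real.log_prod (fun j _ => hfac _)]
  simp only [logfac]
  -- algebra
  have hcastsum : (∑ j ∈ Finset.Icc 1 p, ((k + j : ℕ) : ℝ)) = (SS p k : ℝ) := by
    unfold SS; push_cast; rfl
  set C : ℝ := Real.log (SS p k) + 2 * Real.log 2 - 1 with hC
  have hmain2S : mainT (2 * SS p k) - mainT (SS p k) = (SS p k : ℝ) * C := by
    unfold mainT
    have hc2 : ((2 * SS p k : ℕ) : ℝ) = 2 * ((SS p k : ℕ) : ℝ) := by push_cast; ring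
    have hlog2S : Real.log ((2 * SS p k : ℕ) : ℝ) = Real.log 2 + Real.log (SS p k) := by
      rw [hc2, Real.log_mul (by norm_num) (by
        have : (0:ℝ) < (SS p k : ℝ) := by exact_mod_cast hS1
        exact this.ne')]
    rw [hlog2S, hc2]
    ring
  have hpoint : ∀ j ∈ Finset.Icc 1 p,
      mainT (k + j) - mainT (2 * (k + j)) + ((k + j : ℕ) : ℝ) * C
        = ((k + j : ℕ) : ℝ) * (Real.log (SS p k) - Real.log ((k + j : ℕ) : ℝ)) := by
    intro j hj
    have hj1 : 1 ≤ j := (Finset.mem_Icc.1 hj).1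
    have hkj : (0:ℝ) < ((k + j : ℕ) : ℝ) := by
      have : 1 ≤ k + j := by omega
      exact_mod_cast Nat.lt_of_lt_of_le Nat.zero_lt_one this
    unfold mainT
    have hc2 : ((2 * (k + j) : ℕ) : ℝ) = 2 * ((k + j : ℕ) : ℝ) := by push_cast; ring
    have hlog2a : Real.log ((2 * (k + j) : ℕ) : ℝ) = Real.log 2 + Real.log ((k + j : ℕ) : ℝ) := by
      rw [hc2, Real.log_mul (by norm_num) hkj.ne']
    rw [hlog2a, hC, hc2]
    ring
  have hkey : (∑ j ∈ Finset.Icc 1 p, mainT (k + j))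
      - (∑ j ∈ Finset.Icc 1 p, mainT (2 * (k + j)))
      + (mainT (2 * SS p k) - mainT (SS p k))
      = ∑ j ∈ Finset.Icc 1 p,
          ((k + j : ℕ) : ℝ) * (Real.log (SS p k) - Real.log ((k + j : ℕ) : ℝ)) := by
    have hSC : (SS p k : ℝ) * C = ∑ j ∈ Finset.Icc 1 p, ((k + j : ℕ) : ℝ) * C := by
      rw [← Finset.sum_mul, hcastsum]
    rw [hmain2S, hSC, ← Finset.sum_sub_distrib, ← Finset.sum_add_distrib]
    exact Finset.sum_congr rfl hpoint
  rw [Finset.sum_add_distrib, Finset.sum_add_distrib, Finset.sum_sub_distrib]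
  linarith [hkey]


lemma SS_eq (p k : ℕ) : SS p k = p * k + SS p 0 := by
  unfold SS
  rw [Finset.sum_add_distrib, Finset.sum_const, Nat.card_Icc]
  simp [mul_comm]

/-- For every fixed `p ≥ 2`, writing `m = p + 1 + 2k` (so `m > p` and `m − p` is odd),
`log r(m,p) / (mp·log p) → 1/2` as `k → ∞`: asymptotically, the Eremenko–Gabrielov
number of real curves is about the square root of Schubert's number of complex
curves. -/
theorem schubertRatio_log_asymptotic (p : ℕ) (hp : 2 ≤ p) :
    Filter.Tendsto
      (fun k : ℕ =>
        Real.log (schubertRatio (p + 1 + 2 * k) p) /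
          (((p + 1 + 2 * k : ℕ) : ℝ) * (p : ℝ) * Real.log p))
      Filter.atTop (nhds (1 / 2)) := by
  have hp1 : 1 ≤ p := by omega
  have hp0 : (0:ℝ) < p := by exact_mod_cast (by omega : 0 < p)
  have hlogp : 0 < Real.log p := Real.log_pos (by exact_mod_cast (by omega : 1 < p))
  set D : ℕ → ℝ := fun k => ((p + 1 + 2 * k : ℕ) : ℝ) * (p : ℝ) * Real.log p with hD
  have hDpos : ∀ k, 0 < D k := fun k => by
    have h1 : (0:ℝ) < ((p + 1 + 2 * k : ℕ) : ℝ) := by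
      exact_mod_cast (by omega : 0 < p + 1 + 2 * k)
    exact mul_pos (mul_pos h1 hp0) hlogp
  have hDS : ∀ k, D k = 2 * (SS p k : ℝ) * Real.log p := by
    intro k
    have : ((p + 1 + 2 * k : ℕ) : ℝ) * (p : ℝ) = 2 * (SS p k : ℝ) := by
      exact_mod_cast congrArg (fun n : ℕ => (n : ℝ)) (two_SS p k).symm
    rw [hD]; dsimp only; rw [this]
  have hSpos : ∀ k, (0:ℝ) < (SS p k : ℝ) := fun k => by
    exact_mod_cast SS_pos p k hp1
  set A : ℕ → ℝ := fun k => ∑ j ∈ Finset.Icc 1 p,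
      ((k + j : ℕ) : ℝ) * (Real.log (SS p k) - Real.log ((k + j : ℕ) : ℝ)) with hA
  set E : ℕ → ℝ := fun k => errT (2 * SS p k) - errT (SS p k)
      + ∑ j ∈ Finset.Icc 1 p, (errT (k + j) - errT (2 * (k + j))) with hE
  have hsplit : (fun k : ℕ =>
        Real.log (schubertRatio (p + 1 + 2 * k) p) /
          (((p + 1 + 2 * k : ℕ) : ℝ) * (p : ℝ) * Real.log p))
      = fun k => A k / D k + E k / D k := by
    funext k
    rw [log_decomp p k hp1, add_div]
  rw [hsplit, show (1:ℝ)/2 = 1/2 + 0 by norm_num]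
  refine Filter.Tendsto.add ?_ ?_
  · -- main part
    have hone : Tendsto (fun k : ℕ => 1 / (k:ℝ)) atTop (nhds 0) :=
      tendsto_one_div_atTop_nhds_zero_nat
    have hterm : ∀ j ∈ Finset.Icc 1 p,
        Tendsto (fun k : ℕ =>
          ((k + j : ℕ) : ℝ) * (Real.log (SS p k) - Real.log ((k + j : ℕ) : ℝ)) / D k)
          atTop (nhds (1 / (2 * p))) := by
      intro j hj
      have hj1 : 1 ≤ j := (Finset.mem_Icc.1 hj).1
      -- limit 1 : (k+j)/(m*p) → 1/(2p)
      have hnum : Tendsto (fun k : ℕ => 1 + (j:ℝ) * (1/(k:ℝ))) atTop (nhds (1 + (j:ℝ) * 0)) :=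
        tendsto_const_nhds.add (tendsto_const_nhds.mul hone)
      have hden : Tendsto (fun k : ℕ => (((p:ℝ) + 1) * (1/(k:ℝ)) + 2) * p) atTop
          (nhds ((((p:ℝ) + 1) * 0 + 2) * p)) :=
        ((tendsto_const_nhds.mul hone).add tendsto_const_nhds).mul tendsto_const_nhds
      have hlim1' : Tendsto (fun k : ℕ =>
          (1 + (j:ℝ) * (1/(k:ℝ))) / ((((p:ℝ) + 1) * (1/(k:ℝ)) + 2) * p)) atTop
          (nhds ((1 + (j:ℝ) * 0) / ((((p:ℝ) + 1) * 0 + 2) * p))) :=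
        hnum.div hden (by positivity)
      have hlim1 : Tendsto (fun k : ℕ =>
          ((k + j : ℕ) : ℝ) / (((p + 1 + 2 * k : ℕ) : ℝ) * (p:ℝ))) atTop
          (nhds (1 / (2 * (p:ℝ)))) := by
        have heq : ∀ᶠ k : ℕ in atTop,
            (1 + (j:ℝ) * (1/(k:ℝ))) / ((((p:ℝ) + 1) * (1/(k:ℝ)) + 2) * p)
              = ((k + j : ℕ) : ℝ) / (((p + 1 + 2 * k : ℕ) : ℝ) * (p:ℝ)) := by
          filter_upwards [eventually_ge_atTop 1] with k hk
          have hk0 : ((k:ℝ)) ≠ 0 := by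
            exact_mod_cast (by omega : k ≠ 0)
          push_cast
          first
          | (field_simp; ring)
          | field_simp
        have : ((1:ℝ) + (j:ℝ) * 0) / ((((p:ℝ) + 1) * 0 + 2) * p) = 1 / (2 * (p:ℝ)) := by
          norm_num
        rw [← this]
        exact hlim1'.congr' heq
      -- limit 2 : (log S - log (k+j))/log p → 1
      have hfrac : Tendsto (fun k : ℕ => (SS p k : ℝ) / ((k + j : ℕ) : ℝ)) atTop
          (nhds (p:ℝ)) := by
        have hnum2 : Tendsto (fun k : ℕ => ((p:ℝ) + (SS p 0 : ℝ) * (1/(k:ℝ)))) atTop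
            (nhds ((p:ℝ) + (SS p 0 : ℝ) * 0)) :=
          tendsto_const_nhds.add (tendsto_const_nhds.mul hone)
        have hden2 : Tendsto (fun k : ℕ => (1 + (j:ℝ) * (1/(k:ℝ)))) atTop
            (nhds (1 + (j:ℝ) * 0)) :=
          tendsto_const_nhds.add (tendsto_const_nhds.mul hone)
        have h' : Tendsto (fun k : ℕ =>
            ((p:ℝ) + (SS p 0 : ℝ) * (1/(k:ℝ))) / (1 + (j:ℝ) * (1/(k:ℝ)))) atTop
            (nhds (((p:ℝ) + (SS p 0 : ℝ) * 0) / (1 + (j:ℝ) * 0))) :=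
          hnum2.div hden2 (by norm_num)
        have heq : ∀ᶠ k : ℕ in atTop,
            ((p:ℝ) + (SS p 0 : ℝ) * (1/(k:ℝ))) / (1 + (j:ℝ) * (1/(k:ℝ)))
              = (SS p k : ℝ) / ((k + j : ℕ) : ℝ) := by
          filter_upwards [eventually_ge_atTop 1] with k hk
          have hk0 : ((k:ℝ)) ≠ 0 := by exact_mod_cast (by omega : k ≠ 0)
          have hSk : (SS p k : ℝ) = (p:ℝ) * (k:ℝ) + (SS p 0 : ℝ) := by
            exact_mod_cast congrArg (fun n : ℕ => (n : ℝ)) (SS_eq p k)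
          rw [hSk]
          push_cast
          first
          | (field_simp; ring)
          | field_simp
        have hval : ((p:ℝ) + (SS p 0 : ℝ) * 0) / (1 + (j:ℝ) * 0) = (p:ℝ) := by norm_num
        rw [← hval]
        exact h'.congr' heq
      have hlog2 : Tendsto (fun k : ℕ =>
          Real.log ((SS p k : ℝ) / ((k + j : ℕ) : ℝ))) atTop (nhds (Real.log p)) :=
        ((Real.continuousAt_log hp0.ne').tendsto).comp hfrac
      have hlim2 : Tendsto (fun k : ℕ =>
          (Real.log (SS p k) - Real.log ((k + j : ℕ) : ℝ)) / Real.log p) atTop (nhds 1) := by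
        have heq : (fun k : ℕ =>
            (Real.log (SS p k) - Real.log ((k + j : ℕ) : ℝ)) / Real.log p)
            = fun k => Real.log ((SS p k : ℝ) / ((k + j : ℕ) : ℝ)) / Real.log p := by
          funext k
          rw [Real.log_div (hSpos k).ne' (by
            exact_mod_cast (by omega : k + j ≠ 0))]
        rw [heq, show (1:ℝ) = Real.log p / Real.log p from (div_self hlogp.ne').symm]
        exact hlog2.div_const _
      have hmul := hlim1.mul hlim2
      rw [mul_one] at hmul
      refine hmul.congr (fun k => ?_)
      rw [div_mul_div_comm, hD]
    have hsum := tendsto_finset_sum (Finset.Icc 1 p) hterm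
    have hval : (∑ _j ∈ Finset.Icc 1 p, (1 / (2 * (p:ℝ)))) = 1/2 := by
      rw [Finset.sum_const, Nat.card_Icc]
      simp only [Nat.add_sub_cancel, nsmul_eq_mul]
      field_simp
    rw [hval] at hsum
    refine hsum.congr (fun k => ?_)
    rw [hA, Finset.sum_div]
  · -- error part
    set B : ℕ → ℝ := fun k => 1 + Real.log (4 * (SS p k : ℝ)) with hB
    have hbd : ∀ k, ∀ n : ℕ, 1 ≤ n → n ≤ 2 * SS p k → |errT n| ≤ B k := by
      intro k n h1 h2
      refine le_trans (err_bound n h1) ?_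
      have h2' : (2:ℝ) * (n:ℝ) ≤ 4 * (SS p k : ℝ) := by
        have : (n:ℝ) ≤ 2 * (SS p k : ℝ) := by exact_mod_cast h2
        linarith
      have hn0 : (0:ℝ) < 2 * (n:ℝ) := by
        have : (0:ℝ) < (n:ℝ) := by exact_mod_cast h1
        linarith
      exact add_le_add_right (Real.log_le_log hn0 h2') 1
    have hBnn : ∀ k, 0 ≤ B k := by
      intro k
      have h4 : (1:ℝ) ≤ 4 * (SS p k : ℝ) := by
        have := hSpos k
        have : (1:ℝ) ≤ (SS p k : ℝ) := by exact_mod_cast SS_pos p k hp1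
        linarith
      have := Real.log_nonneg h4
      rw [hB]; dsimp only; linarith
    have hEbd : ∀ k, |E k| ≤ (2 * (p:ℝ) + 2) * B k := by
      intro k
      have t1 : |errT (2 * SS p k)| ≤ B k :=
        hbd k _ (by have := SS_pos p k hp1; omega) (le_refl _)
      have t2 : |errT (SS p k)| ≤ B k :=
        hbd k _ (SS_pos p k hp1) (by omega)
      have t3 : ∀ j ∈ Finset.Icc 1 p, |errT (k + j) - errT (2 * (k + j))| ≤ 2 * B k := by
        intro j hj
        have hj1 : 1 ≤ j := (Finset.mem_Icc.1 hj).1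
        have hle := le_SS p k j hj
        have u1 : |errT (k + j)| ≤ B k := hbd k _ (by omega) (by omega)
        have u2 : |errT (2 * (k + j))| ≤ B k := hbd k _ (by omega) (by omega)
        calc |errT (k + j) - errT (2 * (k + j))| ≤ |errT (k + j)| + |errT (2 * (k + j))| :=
              abs_sub _ _
          _ ≤ 2 * B k := by linarith
      have hsum3 : |∑ j ∈ Finset.Icc 1 p, (errT (k + j) - errT (2 * (k + j)))|
          ≤ (p:ℝ) * (2 * B k) := by
        calc |∑ j ∈ Finset.Icc 1 p, (errT (k + j) - errT (2 * (k + j)))|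
            ≤ ∑ j ∈ Finset.Icc 1 p, |errT (k + j) - errT (2 * (k + j))| :=
              Finset.abs_sum_le_sum_abs _ _
          _ ≤ ∑ _j ∈ Finset.Icc 1 p, 2 * B k := Finset.sum_le_sum t3
          _ = (p:ℝ) * (2 * B k) := by
              rw [Finset.sum_const, Nat.card_Icc, nsmul_eq_mul]
              simp
      calc |E k| ≤ |errT (2 * SS p k) - errT (SS p k)|
            + |∑ j ∈ Finset.Icc 1 p, (errT (k + j) - errT (2 * (k + j)))| := abs_add_le _ _
        _ ≤ (|errT (2 * SS p k)| + |errT (SS p k)|) + (p:ℝ) * (2 * B k) := by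
            have := abs_sub (errT (2 * SS p k)) (errT (SS p k))
            linarith
        _ ≤ (2 * (p:ℝ) + 2) * B k := by linarith
    -- the vanishing bound
    have hphi : Tendsto (fun x : ℝ => (1 + Real.log (4 * x)) / x) atTop (nhds 0) := by
      have h1 : Tendsto (fun x : ℝ => (1 + Real.log 4) / x) atTop (nhds 0) :=
        tendsto_const_nhds.div_atTop tendsto_id
      have h2 : Tendsto (fun x : ℝ => Real.log x / x) atTop (nhds 0) :=
        Real.isLittleO_log_id_atTop.tendsto_div_nhds_zero
      have h3 := h1.add h2
      rw [add_zero] at h3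
      refine h3.congr' ?_
      filter_upwards [eventually_ge_atTop (1:ℝ)] with x hx
      have hx0 : x ≠ 0 := by linarith
      rw [Real.log_mul (by norm_num) hx0]
      field_simp
      ring
    have hScomp : Tendsto (fun k : ℕ => (SS p k : ℝ)) atTop atTop := by
      refine tendsto_atTop_mono (fun k => ?_) tendsto_natCast_atTop_atTop
      have : k ≤ SS p k := by
        have := SS_eq p k
        have := SS_pos p 0 hp1
        nlinarith [SS_eq p k, SS_pos p 0 hp1, hp1]
      exact_mod_cast this
    have hg : Tendsto (fun k : ℕ =>
        (2 * (p:ℝ) + 2) * ((1 + Real.log (4 * (SS p k : ℝ))) / (SS p k : ℝ))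
          * (1 / (2 * Real.log p))) atTop (nhds 0) := by
      have := ((hphi.comp hScomp).const_mul (2 * (p:ℝ) + 2)).mul_const (1 / (2 * Real.log p))
      rw [mul_zero, zero_mul] at this
      exact this.congr (fun k => by rfl)
    refine squeeze_zero_norm (fun k => ?_) hg
    have h1 : ‖E k / D k‖ = |E k| / D k := by
      rw [norm_div, Real.norm_eq_abs, Real.norm_eq_abs, abs_of_pos (hDpos k)]
    rw [h1]
    have h2 : |E k| / D k ≤ ((2 * (p:ℝ) + 2) * B k) / D k := by
      gcongr
      exact hEbd k
    have h3 : ((2 * (p:ℝ) + 2) * B k) / D k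
        = (2 * (p:ℝ) + 2) * ((1 + Real.log (4 * (SS p k : ℝ))) / (SS p k : ℝ))
          * (1 / (2 * Real.log p)) := by
      rw [hDS k, hB]
      dsimp only
      field_simp
    linarith
end

section
/- For integers m ≥ 1 and p ≥ 1, define Schubert's number N(m,p) = [1!·2!⋯(p−1)!·(mp)!] / [m!·(m+1)!⋯(m+p−1)!]. Then for every fixed integer p ≥ 2, the quotient log N(m,p) / (m·p·log p) tends to 1 as m → ∞. -/
open Filter Finset Real

/-- Schubert's number `N(m,p) = 1!·2!⋯(p−1)!·(mp)! / (m!·(m+1)!⋯(m+p−1)!)`, the number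
of complex rational curves of degree `d` in `ℙ^r` with `(r+1)(d−r)` prescribed simple
flexes, where `m = max(r+1, d−r)` and `p = min(r+1, d−r)`. -/
noncomputable def schubertNumber (m p : ℕ) : ℝ :=
  (((∏ j ∈ Finset.range p, Nat.factorial j) * Nat.factorial (m * p) : ℕ) : ℝ) /
  (((∏ j ∈ Finset.range p, Nat.factorial (m + j)) : ℕ) : ℝ)

/-- Elementary Stirling-type bounds on `log n!`, proved by induction. -/
lemma log_fact_bounds : ∀ n : ℕ, 1 ≤ n →
    ((n : ℝ) * Real.log n - n + 1 ≤ Real.log (Nat.factorial n) ∧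
      Real.log (Nat.factorial n) ≤ (n : ℝ) * Real.log n - n + 1 + Real.log n) := by
  intro n hn
  induction n, hn using Nat.le_induction with
  | base => norm_num [Nat.factorial]
  | succ n hn ih =>
    obtain ⟨ih1, ih2⟩ := ih
    have hn0 : (0 : ℝ) < n := by exact_mod_cast hn
    have hn1 : (0 : ℝ) < (n : ℝ) + 1 := by positivity
    have hfpos : (0 : ℝ) < (Nat.factorial n : ℝ) := by
      exact_mod_cast Nat.factorial_pos n
    have hfact : Real.log (Nat.factorial (n + 1)) =
        Real.log ((n : ℝ) + 1) + Real.log (Nat.factorial n) := by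
      rw [Nat.factorial_succ]
      push_cast
      rw [Real.log_mul (by positivity) hfpos.ne']
    have key1 : (n : ℝ) * (Real.log ((n : ℝ) + 1) - Real.log n) ≤ 1 := by
      have h := Real.log_le_sub_one_of_pos (show (0:ℝ) < ((n:ℝ)+1)/n by positivity)
      rw [Real.log_div hn1.ne' hn0.ne'] at h
      have h2 : ((n:ℝ)+1)/n - 1 = 1/n := by field_simp; ring
      rw [h2] at h
      have := mul_le_mul_of_nonneg_left h hn0.le
      rwa [mul_one_div, div_self hn0.ne'] at this
    have key2 : 1 ≤ ((n : ℝ) + 1) * (Real.log ((n : ℝ) + 1) - Real.log n) := by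
      have h := Real.log_le_sub_one_of_pos (show (0:ℝ) < (n:ℝ)/((n:ℝ)+1) by positivity)
      rw [Real.log_div hn0.ne' hn1.ne'] at h
      have h2 : (n:ℝ)/((n:ℝ)+1) - 1 = -(1/((n:ℝ)+1)) := by field_simp; ring
      rw [h2] at h
      have h3 : 1/((n:ℝ)+1) ≤ Real.log ((n:ℝ)+1) - Real.log n := by linarith
      have := mul_le_mul_of_nonneg_left h3 hn1.le
      rwa [mul_one_div, div_self hn1.ne'] at this
    constructor
    · push_cast
      rw [hfact]
      nlinarith [key1, ih1]
    · push_cast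
      rw [hfact]
      nlinarith [key2, ih2]

/-- Key error bound: `|log N(m,p) - mp log p| = O(log m)` for fixed `p`. -/
lemma schubert_log_err (p : ℕ) (hp : 2 ≤ p) (m : ℕ) (hm : 1 ≤ m) :
    |Real.log (schubertNumber m p) - (m : ℝ) * p * Real.log p| ≤
      (Real.log ((∏ j ∈ Finset.range p, Nat.factorial j : ℕ) : ℝ) + 1 + Real.log p
          + (p : ℝ) * p + p)
        + ((p : ℝ) * p + p + 1) * Real.log ((m : ℝ) + p) := by
  have hP1 : (1 : ℝ) < p := by exact_mod_cast lt_of_lt_of_le one_lt_two hp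
  have hP0 : (0 : ℝ) < p := by linarith
  have hM0 : (0 : ℝ) < m := by exact_mod_cast hm
  have hM1 : (1 : ℝ) ≤ m := by exact_mod_cast hm
  set c := Real.log (p : ℝ) with hc
  have hc0 : 0 < c := Real.log_pos hP1
  set lm := Real.log (m : ℝ) with hlm
  set lmp := Real.log ((m : ℝ) + p) with hlmp
  have hlm0 : 0 ≤ lm := Real.log_nonneg hM1
  have hlmp0 : 0 ≤ lmp := Real.log_nonneg (by linarith)
  have hlmle : lm ≤ lmp := Real.log_le_log hM0 (by linarith)
  have hCpos : 0 < ∏ j ∈ Finset.range p, Nat.factorial j :=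
    Finset.prod_pos fun i _ => Nat.factorial_pos i
  have hDpos : 0 < ∏ j ∈ Finset.range p, Nat.factorial (m + j) :=
    Finset.prod_pos fun i _ => Nat.factorial_pos _
  have hC0 : ((∏ j ∈ Finset.range p, Nat.factorial j : ℕ) : ℝ) ≠ 0 := by
    exact_mod_cast hCpos.ne'
  have hF0 : ((Nat.factorial (m * p) : ℕ) : ℝ) ≠ 0 := by
    exact_mod_cast (Nat.factorial_pos (m * p)).ne'
  have hD0 : ((∏ j ∈ Finset.range p, Nat.factorial (m + j) : ℕ) : ℝ) ≠ 0 := by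
    exact_mod_cast hDpos.ne'
  set A := Real.log ((∏ j ∈ Finset.range p, Nat.factorial j : ℕ) : ℝ) with hA
  have hA0 : 0 ≤ A := Real.log_nonneg (by exact_mod_cast hCpos)
  set S := ∑ j ∈ Finset.range p, Real.log ((Nat.factorial (m + j) : ℕ) : ℝ) with hS
  set Fmp := Real.log ((Nat.factorial (m * p) : ℕ) : ℝ) with hFmp
  have hL : Real.log (schubertNumber m p) = A + Fmp - S := by
    rw [schubertNumber, Nat.cast_mul, Real.log_div (mul_ne_zero hC0 hF0) hD0,
      Real.log_mul hC0 hF0]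
    have hcast : ((∏ j ∈ Finset.range p, Nat.factorial (m + j) : ℕ) : ℝ)
        = ∏ j ∈ Finset.range p, ((Nat.factorial (m + j) : ℕ) : ℝ) := by push_cast; rfl
    rw [hcast, Real.log_prod (fun j _ => by
      exact_mod_cast (Nat.factorial_pos (m + j)).ne')]
  have hmp1 : 1 ≤ m * p := Nat.one_le_iff_ne_zero.mpr (by positivity)
  have hmpcast : ((m * p : ℕ) : ℝ) = (m : ℝ) * p := by push_cast; ring
  have hlogmp : Real.log ((m : ℝ) * p) = lm + c := Real.log_mul hM0.ne' hP0.ne'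
  obtain ⟨hB1, hB2⟩ := log_fact_bounds (m * p) hmp1
  rw [hmpcast, hlogmp] at hB1 hB2
  have hterm_lo : ∀ j ∈ Finset.range p,
      (m : ℝ) * lm - ((m : ℝ) + p) + 1 ≤ Real.log ((Nat.factorial (m + j) : ℕ) : ℝ) := by
    intro j hj
    have hjp : (j : ℝ) < p := by exact_mod_cast Finset.mem_range.mp hj
    obtain ⟨h1, _⟩ := log_fact_bounds (m + j) (le_trans hm (Nat.le_add_right m j))
    have hcast : ((m + j : ℕ) : ℝ) = (m : ℝ) + j := by push_cast; ring
    rw [hcast] at h1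
    have hj0 : (0 : ℝ) ≤ j := Nat.cast_nonneg j
    have hlog2 : lm ≤ Real.log ((m : ℝ) + j) := Real.log_le_log hM0 (by linarith)
    have hmul : (m : ℝ) * lm ≤ ((m : ℝ) + j) * Real.log ((m : ℝ) + j) :=
      mul_le_mul (by linarith) hlog2 hlm0 (by linarith)
    linarith
  have hterm_hi : ∀ j ∈ Finset.range p,
      Real.log ((Nat.factorial (m + j) : ℕ) : ℝ)
        ≤ ((m : ℝ) + p) * lmp - (m : ℝ) + 1 + lmp := by
    intro j hj
    have hjp : (j : ℝ) < p := by exact_mod_cast Finset.mem_range.mp hj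
    obtain ⟨_, h2⟩ := log_fact_bounds (m + j) (le_trans hm (Nat.le_add_right m j))
    have hcast : ((m + j : ℕ) : ℝ) = (m : ℝ) + j := by push_cast; ring
    rw [hcast] at h2
    have hj0 : (0 : ℝ) ≤ j := Nat.cast_nonneg j
    have hmj0 : (0 : ℝ) < (m : ℝ) + j := by linarith
    have hlog2 : Real.log ((m : ℝ) + j) ≤ lmp := Real.log_le_log hmj0 (by linarith)
    have hlmj0 : 0 ≤ Real.log ((m : ℝ) + j) := Real.log_nonneg (by linarith)
    have hmul : ((m : ℝ) + j) * Real.log ((m : ℝ) + j) ≤ ((m : ℝ) + p) * lmp :=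
      mul_le_mul (by linarith) hlog2 hlmj0 (by linarith)
    linarith
  have hS1 : (p : ℝ) * ((m : ℝ) * lm - ((m : ℝ) + p) + 1) ≤ S := by
    have h := Finset.sum_le_sum hterm_lo
    rw [Finset.sum_const, Finset.card_range, nsmul_eq_mul] at h
    exact h
  have hS2 : S ≤ (p : ℝ) * (((m : ℝ) + p) * lmp - (m : ℝ) + 1 + lmp) := by
    have h := Finset.sum_le_sum hterm_hi
    rw [Finset.sum_const, Finset.card_range, nsmul_eq_mul] at h
    exact h
  have hgap : (m : ℝ) * (lmp - lm) ≤ p := by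
    have h := Real.log_le_sub_one_of_pos (show (0:ℝ) < ((m:ℝ)+p)/m by positivity)
    rw [Real.log_div (by linarith) hM0.ne'] at h
    have h2 : ((m:ℝ)+p)/m - 1 = (p : ℝ)/m := by field_simp; ring
    rw [h2] at h
    have h3 := mul_le_mul_of_nonneg_left h hM0.le
    calc (m : ℝ) * (lmp - lm) ≤ (m : ℝ) * ((p:ℝ)/m) := h3
      _ = p := by field_simp
  have hgap3 : (p : ℝ) * ((m : ℝ) * (lmp - lm)) ≤ (p : ℝ) * p :=
    mul_le_mul_of_nonneg_left hgap hP0.le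
  rw [hL, abs_le]
  constructor
  · linarith [hB1, hS2, hgap3, hA0, hc0.le, hlmp0]
  · nlinarith [hB2, hS1, hlmle, hA0, hlmp0,
      mul_nonneg (mul_nonneg hP0.le hP0.le) hlmp0, mul_nonneg hP0.le hlmp0]

/-- For every fixed `p ≥ 2`, `log N(m,p) / (mp·log p) → 1` as `m → ∞`. -/
theorem schubertNumber_log_asymptotic (p : ℕ) (hp : 2 ≤ p) :
    Filter.Tendsto
      (fun m : ℕ =>
        Real.log (schubertNumber m p) / ((m : ℝ) * (p : ℝ) * Real.log p))
      Filter.atTop (nhds 1) := by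
  have hP1 : (1 : ℝ) < p := by exact_mod_cast lt_of_lt_of_le one_lt_two hp
  have hP0 : (0 : ℝ) < p := by linarith
  have hc0 : 0 < Real.log (p : ℝ) := Real.log_pos hP1
  set c := Real.log (p : ℝ) with hc
  set C₁ := Real.log ((∏ j ∈ Finset.range p, Nat.factorial j : ℕ) : ℝ) + 1 + c
      + (p : ℝ) * p + p with hC₁
  set C₂ := (p : ℝ) * p + p + 1 with hC₂
  have hMP : Tendsto (fun m : ℕ => (m : ℝ) + p) atTop atTop :=
    tendsto_atTop_add_const_right _ _ tendsto_natCast_atTop_atTop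
  have hlog1 : Tendsto (fun m : ℕ => Real.log ((m : ℝ) + p) / ((m : ℝ) + p)) atTop (nhds 0) :=
    (Real.isLittleO_log_id_atTop.tendsto_div_nhds_zero).comp hMP
  have hrat : Tendsto (fun m : ℕ => ((m : ℝ) + p) / (m : ℝ)) atTop (nhds 1) := by
    have h1 : Tendsto (fun m : ℕ => 1 + (p : ℝ) * (1 / (m : ℝ))) atTop (nhds 1) := by
      have := (tendsto_one_div_atTop_nhds_zero_nat.const_mul (p : ℝ)).const_add 1
      simpa using this
    apply h1.congr'
    filter_upwards [eventually_ge_atTop 1] with m hm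
    have hM0 : (0 : ℝ) < m := by exact_mod_cast hm
    field_simp [hM0.ne']
  have hlog : Tendsto (fun m : ℕ => Real.log ((m : ℝ) + p) / (m : ℝ)) atTop (nhds 0) := by
    have h2 := hlog1.mul hrat
    rw [zero_mul] at h2
    apply h2.congr'
    filter_upwards [eventually_ge_atTop 1] with m hm
    have hM0 : (0 : ℝ) < m := by exact_mod_cast hm
    have hMP0 : (0 : ℝ) < (m : ℝ) + p := by linarith
    field_simp [hM0.ne', hMP0.ne']
  have hg : Tendsto
      (fun m : ℕ => (C₁ + C₂ * Real.log ((m : ℝ) + p)) / ((m : ℝ) * p * c))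
      atTop (nhds 0) := by
    have h1 : Tendsto (fun m : ℕ =>
        (C₁ / ((p : ℝ) * c)) * (1 / (m : ℝ))
          + (C₂ / ((p : ℝ) * c)) * (Real.log ((m : ℝ) + p) / (m : ℝ))) atTop (nhds 0) := by
      have := (tendsto_one_div_atTop_nhds_zero_nat.const_mul (C₁ / ((p : ℝ) * c))).add
        (hlog.const_mul (C₂ / ((p : ℝ) * c)))
      simpa using this
    apply h1.congr'
    filter_upwards [eventually_ge_atTop 1] with m hm
    have hM0 : (0 : ℝ) < m := by exact_mod_cast hm
    field_simp [hM0.ne', hP0.ne', hc0.ne']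
  have h0 : Tendsto (fun m : ℕ =>
      Real.log (schubertNumber m p) / ((m : ℝ) * p * c) - 1) atTop (nhds 0) := by
    apply squeeze_zero_norm' ?_ hg
    filter_upwards [eventually_ge_atTop 1] with m hm
    have hM0 : (0 : ℝ) < m := by exact_mod_cast hm
    have hD : (0 : ℝ) < (m : ℝ) * p * c := by positivity
    rw [div_sub_one hD.ne', Real.norm_eq_abs, abs_div, abs_of_pos hD]
    exact (div_le_div_iff_of_pos_right hD).mpr (schubert_log_err p hp m hm)
  have h2 := h0.add_const 1
  simpa using h2
end

section
/- Let r ≥ 1, let d ≥ r, and let p₀, …, p_r ∈ ℂ[x] be linearly independent polynomials, each of degree at most d. Then the set of points s ∈ ℂ at which the vectors (p₀(s), …, p_r(s)) and (p₀′(s), …, p_r′(s)) in ℂ^{r+1} are linearly dependent is finite, and its cardinality N satisfies r·N ≤ (r+1)(d−r). (In particular, a rational curve of degree d in ℙ^r has at most (r+1)(d−r)/r cusps.) -/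
open Polynomial Finset

noncomputable def Wmat (n : ℕ) (p : Fin n → Polynomial ℂ) :
    Matrix (Fin n) (Fin n) (Polynomial ℂ) :=
  Matrix.of fun i j => derivative^[(i : ℕ)] (p j)

noncomputable def Wr (n : ℕ) (p : Fin n → Polynomial ℂ) : Polynomial ℂ := (Wmat n p).det


lemma iterate_derivative_sum' {ι : Type*} (s : Finset ι) (f : ι → Polynomial ℂ) (k : ℕ) :
    derivative^[k] (∑ i ∈ s, f i) = ∑ i ∈ s, derivative^[k] (f i) := by
  induction k with
  | zero => simp
  | succ k ih => rw [Function.iterate_succ_apply', ih, derivative_sum]; simp [Function.iterate_succ_apply']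

lemma iterate_derivative_smul' (c : ℂ) (f : Polynomial ℂ) (k : ℕ) :
    derivative^[k] (c • f) = c • derivative^[k] f := by
  induction k with
  | zero => simp
  | succ k ih => rw [Function.iterate_succ_apply', ih, derivative_smul, Function.iterate_succ_apply']

lemma wmat_mul (n : ℕ) (p : Fin n → Polynomial ℂ) (A : Matrix (Fin n) (Fin n) ℂ) :
    Wmat n (fun j => ∑ k, A k j • p k) = Wmat n p * A.map C := by
  refine Matrix.ext fun i j => ?_
  simp only [Wmat, Matrix.of_apply, Matrix.mul_apply, Matrix.map_apply]
  calc derivative^[(i : ℕ)] (∑ k, A k j • p k)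
      = ∑ k, derivative^[(i : ℕ)] (A k j • p k) :=
        iterate_derivative_sum' Finset.univ (fun k => A k j • p k) (i : ℕ)
    _ = ∑ k, derivative^[(i : ℕ)] (p k) * C (A k j) := by
        refine Finset.sum_congr rfl fun k _ => ?_
        rw [iterate_derivative_smul', smul_eq_C_mul, mul_comm]

lemma wr_mul (n : ℕ) (p : Fin n → Polynomial ℂ) (A : Matrix (Fin n) (Fin n) ℂ) :
    Wr n (fun j => ∑ k, A k j • p k) = Wr n p * C A.det := by
  rw [Wr, wmat_mul, Matrix.det_mul, Wr, ← RingHom.mapMatrix_apply, ← RingHom.map_det]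


section Echelon

variable (w : Polynomial ℂ → ℕ)

lemma w_sum_ne_zero
    (hstrict : ∀ f g : Polynomial ℂ, f ≠ 0 → g ≠ 0 → w f < w g → f + g ≠ 0 ∧ w (f + g) = w f)
    {ι : Type*} (t : Finset ι) (f : ι → Polynomial ℂ) (hne : t.Nonempty)
    (h0 : ∀ i ∈ t, f i ≠ 0)
    (hdist : ∀ i ∈ t, ∀ j ∈ t, i ≠ j → w (f i) ≠ w (f j)) :
    ∃ i ∈ t, (∑ j ∈ t, f j) ≠ 0 ∧ w (∑ j ∈ t, f j) = w (f i) := by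
  classical
  induction t using Finset.cons_induction with
  | empty => exact absurd hne (by simp)
  | cons a t ha ih =>
    rcases t.eq_empty_or_nonempty with rfl | htne
    · exact ⟨a, by simp [h0 a (by simp)]⟩
    · obtain ⟨j, hj, hs, hw⟩ := ih htne (fun i hi => h0 i (Finset.mem_cons_of_mem hi))
        (fun i hi k hk hik => hdist i (Finset.mem_cons_of_mem hi) k (Finset.mem_cons_of_mem hk) hik)
      have ha' : f a ≠ 0 := h0 a (Finset.mem_cons_self a t)
      have hane : w (f a) ≠ w (f j) := hdist a (Finset.mem_cons_self a t) j
        (Finset.mem_cons_of_mem hj) (fun h => ha (h ▸ hj))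
      rw [Finset.sum_cons]
      rcases lt_or_gt_of_ne hane with hlt | hgt
      · obtain ⟨h1, h2⟩ := hstrict (f a) (∑ x ∈ t, f x) ha' hs (by rw [hw]; exact hlt)
        exact ⟨a, Finset.mem_cons_self a t, h1, h2⟩
      · obtain ⟨h1, h2⟩ := hstrict (∑ x ∈ t, f x) (f a) hs ha' (by rw [hw]; exact hgt)
        rw [add_comm] at h1 h2
        exact ⟨j, Finset.mem_cons_of_mem hj, h1, h2 ▸ hw⟩

lemma li_of_distinct_w
    (hsmul : ∀ (c : ℂ) (f : Polynomial ℂ), c ≠ 0 → f ≠ 0 → w (c • f) = w f)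
    (hstrict : ∀ f g : Polynomial ℂ, f ≠ 0 → g ≠ 0 → w f < w g → f + g ≠ 0 ∧ w (f + g) = w f)
    {m : ℕ} (q : Fin m → Polynomial ℂ) (hq0 : ∀ j, q j ≠ 0)
    (hinj : Function.Injective (fun j => w (q j))) : LinearIndependent ℂ q := by
  classical
  rw [linearIndependent_iff']
  intro s g hsum i hi
  by_contra hgi
  set t := s.filter (fun j => g j ≠ 0) with ht
  have htne : t.Nonempty := ⟨i, Finset.mem_filter.2 ⟨hi, hgi⟩⟩
  have hsum' : ∑ j ∈ t, g j • q j = 0 := by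
    rw [ht, Finset.sum_filter_of_ne (fun x _ h => by
      intro hg0; exact h (by rw [hg0, zero_smul]))]
    exact hsum
  obtain ⟨j, hj, hne, -⟩ := w_sum_ne_zero w hstrict t (fun j => g j • q j) htne
    (fun j hj => smul_ne_zero (Finset.mem_filter.1 hj).2 (hq0 j))
    (fun a haa b hbb hab => by
      rw [hsmul _ _ (Finset.mem_filter.1 haa).2 (hq0 a), hsmul _ _ (Finset.mem_filter.1 hbb).2 (hq0 b)]
      exact fun h => hab (hinj h))
  exact hne hsum'

lemma echelon_exists (m B : ℕ) (V : Submodule ℂ (Polynomial ℂ))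
    (hm : m ≤ Module.finrank ℂ V)
    (hB : ∀ f ∈ V, f ≠ 0 → w f ≤ B)
    (hsmul : ∀ (c : ℂ) (f : Polynomial ℂ), c ≠ 0 → f ≠ 0 → w (c • f) = w f)
    (hstrict : ∀ f g : Polynomial ℂ, f ≠ 0 → g ≠ 0 → w f < w g → f + g ≠ 0 ∧ w (f + g) = w f)
    (hstep : ∀ f g, f ∈ V → g ∈ V → f ≠ 0 → g ≠ 0 → w f = w g →
        ∃ c : ℂ, f - c • g = 0 ∨ (f - c • g ≠ 0 ∧ w f < w (f - c • g))) :
    ∃ q : Fin m → Polynomial ℂ, (∀ j, q j ∈ V) ∧ (∀ j, q j ≠ 0) ∧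
      StrictMono (fun j => w (q j)) ∧ LinearIndependent ℂ q := by
  classical
  set S : Finset ℕ := (Finset.range (B + 1)).filter
    (fun e => ∃ f, f ∈ V ∧ f ≠ 0 ∧ w f = e) with hS
  set g : ℕ → Polynomial ℂ := fun e =>
    if h : ∃ f, f ∈ V ∧ f ≠ 0 ∧ w f = e then h.choose else 0 with hgdef
  have hg : ∀ e ∈ S, g e ∈ V ∧ g e ≠ 0 ∧ w (g e) = e := by
    intro e he
    obtain ⟨-, h⟩ := Finset.mem_filter.1 he
    simpa [hgdef, dif_pos h] using h.choose_spec
  -- spanning claim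
  have claim : ∀ n : ℕ, ∀ f, f ∈ V → f ≠ 0 → B ≤ w f + n →
      f ∈ Submodule.span ℂ (g '' ↑S) := by
    intro n
    induction n with
    | zero =>
      intro f hfV hf0 hwf
      have heS : w f ∈ S := Finset.mem_filter.2
        ⟨Finset.mem_range.2 (Nat.lt_succ_of_le (hB f hfV hf0)), f, hfV, hf0, rfl⟩
      obtain ⟨hgV, hg0, hgw⟩ := hg _ heS
      obtain ⟨c, hc⟩ := hstep f (g (w f)) hfV hgV hf0 hg0 hgw.symm
      rcases hc with hc | ⟨hc0, hcw⟩
      · have : f = c • g (w f) := by rw [← sub_eq_zero]; exact hc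
        rw [this]
        exact Submodule.smul_mem _ _ (Submodule.subset_span ⟨w f, heS, rfl⟩)
      · exfalso
        have h1 : w (f - c • g (w f)) ≤ B :=
          hB _ (Submodule.sub_mem _ hfV (Submodule.smul_mem _ _ hgV)) hc0
        omega
    | succ n ih =>
      intro f hfV hf0 hwf
      have heS : w f ∈ S := Finset.mem_filter.2
        ⟨Finset.mem_range.2 (Nat.lt_succ_of_le (hB f hfV hf0)), f, hfV, hf0, rfl⟩
      obtain ⟨hgV, hg0, hgw⟩ := hg _ heS
      obtain ⟨c, hc⟩ := hstep f (g (w f)) hfV hgV hf0 hg0 hgw.symm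
      rcases hc with hc | ⟨hc0, hcw⟩
      · have : f = c • g (w f) := by rw [← sub_eq_zero]; exact hc
        rw [this]
        exact Submodule.smul_mem _ _ (Submodule.subset_span ⟨w f, heS, rfl⟩)
      · have hmem : f - c • g (w f) ∈ Submodule.span ℂ (g '' ↑S) :=
          ih _ (Submodule.sub_mem _ hfV (Submodule.smul_mem _ _ hgV)) hc0 (by omega)
        have : f = (f - c • g (w f)) + c • g (w f) := by ring
        rw [this]
        exact Submodule.add_mem _ hmem
          (Submodule.smul_mem _ _ (Submodule.subset_span ⟨w f, heS, rfl⟩))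
  have hVle : V ≤ Submodule.span ℂ (g '' ↑S) := by
    intro f hf
    rcases eq_or_ne f 0 with rfl | hf0
    · exact Submodule.zero_mem _
    · exact claim B f hf hf0 (by omega)
  have himg : (g '' ↑S) = ↑(S.image g) := by simp [Finset.coe_image]
  have hcard : m ≤ S.card := by
    rw [himg] at hVle
    have h1 := Submodule.finrank_mono hVle
    have h2 : Module.finrank ℂ (Submodule.span ℂ ((S.image g : Finset (Polynomial ℂ)) : Set (Polynomial ℂ))) ≤ (S.image g).card :=
      finrank_span_finset_le_card _
    exact le_trans hm (le_trans h1 (le_trans h2 (Finset.card_image_le)))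
  obtain ⟨S', hS'sub, hS'card⟩ := Finset.exists_subset_card_eq hcard
  set e := S'.orderEmbOfFin hS'card with he
  refine ⟨fun j => g (e j), fun j => (hg _ (hS'sub (S'.orderEmbOfFin_mem hS'card j))).1,
    fun j => (hg _ (hS'sub (S'.orderEmbOfFin_mem hS'card j))).2.1, ?_, ?_⟩
  · intro a b hab
    have ha := (hg _ (hS'sub (S'.orderEmbOfFin_mem hS'card a))).2.2
    have hb := (hg _ (hS'sub (S'.orderEmbOfFin_mem hS'card b))).2.2
    simp only []
    rw [ha, hb]
    exact e.strictMono hab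
  · refine li_of_distinct_w w hsmul hstrict _ (fun j => (hg _ (hS'sub (S'.orderEmbOfFin_mem hS'card j))).2.1) ?_
    intro a b hab
    simp only [(hg _ (hS'sub (S'.orderEmbOfFin_mem hS'card a))).2.2,
      (hg _ (hS'sub (S'.orderEmbOfFin_mem hS'card b))).2.2] at hab
    exact e.injective ((hg _ (hS'sub (S'.orderEmbOfFin_mem hS'card a))).2.2.symm.trans
      (hab.trans (hg _ (hS'sub (S'.orderEmbOfFin_mem hS'card b))).2.2))

end Echelon


-- degree valuation lemmas
lemma wdeg_smul (d : ℕ) : ∀ (c : ℂ) (f : Polynomial ℂ), c ≠ 0 → f ≠ 0 →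
    (d + 1) - (c • f).natDegree = (d + 1) - f.natDegree := by
  intro c f hc hf
  rw [smul_eq_C_mul, natDegree_C_mul hc]

lemma wdeg_strict (d : ℕ) : ∀ f g : Polynomial ℂ, f ≠ 0 → g ≠ 0 →
    (d + 1) - f.natDegree < (d + 1) - g.natDegree →
    f + g ≠ 0 ∧ (d + 1) - (f + g).natDegree = (d + 1) - f.natDegree := by
  intro f g hf hg hlt
  have hdg : g.natDegree < f.natDegree := by omega
  have hdeg : degree g < degree f := by
    rw [← natDegree_lt_natDegree_iff hg] at *
    exact hdg
  have h1 : degree (f + g) = degree f := degree_add_eq_left_of_degree_lt hdeg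
  have hne : f + g ≠ 0 := by
    intro h
    rw [h, degree_zero] at h1
    exact hf (degree_eq_bot.1 h1.symm)
  exact ⟨hne, by rw [natDegree_eq_of_degree_eq h1]⟩

-- rootMultiplicity valuation lemmas
lemma wmul_smul (s : ℂ) : ∀ (c : ℂ) (f : Polynomial ℂ), c ≠ 0 → f ≠ 0 →
    rootMultiplicity s (c • f) = rootMultiplicity s f := by
  intro c f hc hf
  rw [smul_eq_C_mul, rootMultiplicity_mul (mul_ne_zero (fun h => hc (by simpa using h)) hf),
    rootMultiplicity_C]
  ring

lemma wmul_strict (s : ℂ) : ∀ f g : Polynomial ℂ, f ≠ 0 → g ≠ 0 →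
    rootMultiplicity s f < rootMultiplicity s g →
    f + g ≠ 0 ∧ rootMultiplicity s (f + g) = rootMultiplicity s f := by
  intro f g hf hg hlt
  have hne : f + g ≠ 0 := by
    intro h
    have : g = (-1 : ℂ) • f := by
      rw [neg_one_smul, eq_neg_iff_add_eq_zero, add_comm]; exact h
    rw [this, wmul_smul s (-1) f (by norm_num) hf] at hlt
    omega
  constructor
  · exact hne
  · have hfd : (X - C s) ^ rootMultiplicity s f ∣ f := pow_rootMultiplicity_dvd f s
    have hgd : (X - C s) ^ rootMultiplicity s f ∣ g :=
      dvd_trans (pow_dvd_pow _ (le_of_lt hlt)) (pow_rootMultiplicity_dvd g s)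
    have hge : rootMultiplicity s f ≤ rootMultiplicity s (f + g) :=
      (le_rootMultiplicity_iff hne).2 (dvd_add hfd hgd)
    have hle : rootMultiplicity s (f + g) ≤ rootMultiplicity s f := by
      by_contra hc
      push_neg at hc
      have h1 : (X - C s) ^ (rootMultiplicity s f + 1) ∣ f + g :=
        dvd_trans (pow_dvd_pow _ hc) (pow_rootMultiplicity_dvd (f + g) s)
      have h2 : (X - C s) ^ (rootMultiplicity s f + 1) ∣ g :=
        dvd_trans (pow_dvd_pow _ hlt) (pow_rootMultiplicity_dvd g s)
      have h3 : (X - C s) ^ (rootMultiplicity s f + 1) ∣ f := by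
        simpa using dvd_sub h1 h2
      exact pow_rootMultiplicity_not_dvd hf s h3
    omega

lemma wmul_step (s : ℂ) : ∀ f g : Polynomial ℂ, f ≠ 0 → g ≠ 0 →
    rootMultiplicity s f = rootMultiplicity s g →
    ∃ c : ℂ, f - c • g = 0 ∨ (f - c • g ≠ 0 ∧
      rootMultiplicity s f < rootMultiplicity s (f - c • g)) := by
  intro f g hf hg heq
  set μ := rootMultiplicity s f with hμ
  set f1 := f /ₘ (X - C s) ^ μ with hf1
  set g1 := g /ₘ (X - C s) ^ μ with hg1
  have hfe : (X - C s) ^ μ * f1 = f := pow_mul_divByMonic_rootMultiplicity_eq f s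
  have hge : (X - C s) ^ μ * g1 = g := by
    have := pow_mul_divByMonic_rootMultiplicity_eq g s
    rw [hg1, heq]
    exact this
  have hf1e : eval s f1 ≠ 0 := eval_divByMonic_pow_rootMultiplicity_ne_zero s hf
  have hg1e : eval s g1 ≠ 0 := by
    have := eval_divByMonic_pow_rootMultiplicity_ne_zero s hg
    rw [hg1, heq]
    exact this
  set c := eval s f1 / eval s g1 with hc
  refine ⟨c, ?_⟩
  have hkey : f - c • g = (X - C s) ^ μ * (f1 - C c * g1) := by
    rw [mul_sub, hfe, smul_eq_C_mul, ← hge]; ring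
  rcases eq_or_ne (f1 - C c * g1) 0 with h0 | h0
  · left; rw [hkey, h0, mul_zero]
  · right
    have hne : f - c • g ≠ 0 := by
      rw [hkey]
      exact mul_ne_zero (pow_ne_zero _ (X_sub_C_ne_zero s)) h0
    constructor
    · exact hne
    · have hroot : eval s (f1 - C c * g1) = 0 := by
        simp [hc, div_mul_cancel₀ _ hg1e]
      have h1 : rootMultiplicity s (f - c • g) =
          μ + rootMultiplicity s (f1 - C c * g1) := by
        rw [hkey, rootMultiplicity_mul (hkey ▸ hne), rootMultiplicity_X_sub_C_pow]
      have h2 : 0 < rootMultiplicity s (f1 - C c * g1) :=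
        (rootMultiplicity_pos h0).2 hroot
      omega


section DegBound
variable {n : ℕ} (q : Fin n → Polynomial ℂ)

lemma sum_sub_eq (e : Fin n → ℕ) (σ : Equiv.Perm (Fin n)) (h : ∀ i, (σ i : ℕ) ≤ e i) :
    ∑ i, (e i - (σ i : ℕ)) = (∑ i, e i) - (∑ i : Fin n, (i : ℕ)) := by
  have h1 : ∑ i, ((σ i : ℕ)) = ∑ i : Fin n, (i : ℕ) := Equiv.sum_comp σ (fun i => (i : ℕ))
  have h2 : ∑ i, (e i - (σ i : ℕ)) + ∑ i, ((σ i : ℕ)) = ∑ i, e i := by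
    rw [← Finset.sum_add_distrib]
    exact Finset.sum_congr rfl fun i _ => Nat.sub_add_cancel (h i)
  omega

lemma descf_ne (a b : ℕ) (h : b ≤ a) : ((Nat.descFactorial a b : ℕ) : ℂ) ≠ 0 :=
  Nat.cast_ne_zero.2 (fun hz => absurd (Nat.descFactorial_eq_zero_iff_lt.1 hz) (not_lt.2 h))

lemma natDegree_wr_le :
    (Wr n q).natDegree ≤ (∑ j, (q j).natDegree) - (∑ j : Fin n, (j : ℕ)) := by
  classical
  set e : Fin n → ℕ := fun j => (q j).natDegree with he
  rw [Wr, Matrix.det_apply']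
  refine natDegree_sum_le_of_forall_le _ _ fun σ _ => ?_
  refine (natDegree_mul_le).trans ?_
  rw [natDegree_intCast, zero_add]
  by_cases hσ : ∀ i, (σ i : ℕ) ≤ e i
  · refine (natDegree_prod_le _ _).trans ?_
    rw [← sum_sub_eq e σ hσ]
    exact Finset.sum_le_sum fun i _ => natDegree_iterate_derivative _ _
  · push_neg at hσ
    obtain ⟨i, hi⟩ := hσ
    rw [Finset.prod_eq_zero (f := fun i => Wmat n q (σ i) i) (Finset.mem_univ i)
      (iterate_derivative_eq_zero hi), natDegree_zero]
    exact Nat.zero_le _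

lemma coeff_wr (hq0 : ∀ j, q j ≠ 0) :
    ∀ (hσ' : True), (Wr n q).coeff ((∑ j, (q j).natDegree) - (∑ j : Fin n, (j : ℕ))) =
      (Matrix.of fun a b : Fin n =>
        ((Nat.descFactorial ((q b).natDegree) (a : ℕ) : ℕ) : ℂ)).det *
        ∏ j, (q j).leadingCoeff := by
  intro _
  classical
  set e : Fin n → ℕ := fun j => (q j).natDegree with hedef
  rw [Wr, Matrix.det_apply', finset_sum_coeff, Matrix.det_apply', Finset.sum_mul]
  refine Finset.sum_congr rfl fun σ _ => ?_
  have hcast : ((Equiv.Perm.sign σ : ℤ) : Polynomial ℂ) = C ((Equiv.Perm.sign σ : ℤ) : ℂ) := by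
    rw [C_eq_intCast]
  rw [hcast, coeff_C_mul]
  by_cases hσ : ∀ i, (σ i : ℕ) ≤ e i
  · have hfac : ∀ i : Fin n, (Wmat n q (σ i) i).natDegree = e i - (σ i : ℕ) ∧
        (Wmat n q (σ i) i).leadingCoeff =
          ((Nat.descFactorial (e i) ((σ i : ℕ)) : ℕ) : ℂ) * (q i).leadingCoeff := by
      intro i
      have hc : (Wmat n q (σ i) i).coeff (e i - (σ i : ℕ)) =
          ((Nat.descFactorial (e i) ((σ i : ℕ)) : ℕ) : ℂ) * (q i).leadingCoeff := by
        show (derivative^[(σ i : ℕ)] (q i)).coeff (e i - (σ i : ℕ)) = _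
        rw [coeff_iterate_derivative, Nat.sub_add_cancel (hσ i), nsmul_eq_mul]
        rfl
      have hne : (Wmat n q (σ i) i).coeff (e i - (σ i : ℕ)) ≠ 0 := by
        rw [hc]
        exact mul_ne_zero (descf_ne _ _ (hσ i)) (leadingCoeff_ne_zero.2 (hq0 i))
      have hdeg : (Wmat n q (σ i) i).natDegree = e i - (σ i : ℕ) :=
        le_antisymm (natDegree_iterate_derivative _ _) (le_natDegree_of_ne_zero hne)
      exact ⟨hdeg, by rw [leadingCoeff, hdeg, hc]⟩
    have hprodne : ∀ i ∈ Finset.univ, Wmat n q (σ i) i ≠ 0 := fun i _ h0 => by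
      have h2 := (hfac i).2
      rw [h0, leadingCoeff_zero] at h2
      exact mul_ne_zero (descf_ne _ _ (hσ i)) (leadingCoeff_ne_zero.2 (hq0 i)) h2.symm
    have hdegp : (∏ i, Wmat n q (σ i) i).natDegree
        = (∑ j, e j) - (∑ j : Fin n, (j : ℕ)) := by
      rw [natDegree_prod _ _ hprodne, ← sum_sub_eq e σ hσ]
      exact Finset.sum_congr rfl fun i _ => (hfac i).1
    have hcoeff : (∏ i, Wmat n q (σ i) i).coeff ((∑ j, e j) - (∑ j : Fin n, (j : ℕ)))
        = ∏ i, (Wmat n q (σ i) i).leadingCoeff := by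
      rw [← hdegp, ← leadingCoeff, leadingCoeff_prod]
    have hlc : ∏ i, (Wmat n q (σ i) i).leadingCoeff
        = (∏ i, ((Nat.descFactorial (e i) ((σ i : ℕ)) : ℕ) : ℂ)) * ∏ j, (q j).leadingCoeff := by
      rw [← Finset.prod_mul_distrib]
      exact Finset.prod_congr rfl fun i _ => (hfac i).2
    rw [hcoeff, hlc]
    simp only [Matrix.of_apply]
    ring
  · push_neg at hσ
    obtain ⟨i, hi⟩ := hσ
    rw [Finset.prod_eq_zero (f := fun i => Wmat n q (σ i) i) (Finset.mem_univ i)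
      (iterate_derivative_eq_zero hi)]
    rw [Finset.prod_eq_zero
      (f := fun i => Matrix.of (fun a b : Fin n => ((Nat.descFactorial (e b) ((a : ℕ)) : ℕ) : ℂ)) (σ i) i)
      (Finset.mem_univ i)
      (by simp only [Matrix.of_apply, Nat.cast_eq_zero]; exact Nat.descFactorial_eq_zero_iff_lt.2 hi)]
    simp

lemma wr_ne_zero (hq0 : ∀ j, q j ≠ 0) (he : StrictMono fun j => (q j).natDegree) :
    Wr n q ≠ 0 := by
  intro h0
  have hc := coeff_wr q hq0 trivial
  rw [h0, coeff_zero] at hc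
  have hdet : (Matrix.of fun a b : Fin n =>
      ((Nat.descFactorial ((q b).natDegree) (a : ℕ) : ℕ) : ℂ)).det ≠ 0 := by
    rw [← Matrix.det_transpose]
    have : (Matrix.of fun a b : Fin n =>
        ((Nat.descFactorial ((q b).natDegree) (a : ℕ) : ℕ) : ℂ)).transpose =
        Matrix.of fun i j : Fin n =>
          ((descPochhammer ℂ (j : ℕ)).eval (((q i).natDegree : ℕ) : ℂ)) := by
      ext i j
      simp [Matrix.transpose_apply, descPochhammer_eval_eq_descFactorial]
    rw [this, ← Matrix.det_eval_matrixOfPolynomials_eq_det_vandermonde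
      (fun i => (((q i).natDegree : ℕ) : ℂ)) (fun j => descPochhammer ℂ (j : ℕ))
      (fun j => descPochhammer_natDegree ℂ (j : ℕ)) (fun j => monic_descPochhammer ℂ (j : ℕ))]
    rw [Matrix.det_vandermonde_ne_zero_iff]
    intro a b hab
    exact he.injective (Nat.cast_injective hab)
  have hlc : (∏ j, (q j).leadingCoeff) ≠ 0 :=
    Finset.prod_ne_zero_iff.2 fun j _ => leadingCoeff_ne_zero.2 (hq0 j)
  exact mul_ne_zero hdet hlc hc.symm

end DegBound


lemma dvd_iterate_derivative (s : ℂ) (m i : ℕ) (q : Polynomial ℂ)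
    (h : (X - C s) ^ m ∣ q) : (X - C s) ^ (m - i) ∣ derivative^[i] q := by
  induction i generalizing m q with
  | zero => simpa using h
  | succ i ih =>
    rw [Function.iterate_succ_apply]
    have hstep : (X - C s) ^ (m - 1) ∣ derivative q := by
      obtain ⟨h1, rfl⟩ := h
      rw [derivative_mul, derivative_pow]
      have hd : derivative (X - C s) = 1 := by simp
      rw [hd, mul_one]
      refine dvd_add (Dvd.dvd.mul_right ?_ _) ?_
      · exact Dvd.dvd.mul_left dvd_rfl _
      · exact Dvd.dvd.mul_right (pow_dvd_pow _ (Nat.sub_le m 1)) _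
    have := ih (m - 1) (derivative q) hstep
    rwa [Nat.sub_sub, Nat.add_comm 1 i, ← Nat.sub_sub] at this
    
lemma sum_tsub_ge {n : ℕ} (a b : Fin n → ℕ) :
    (∑ i, a i) - (∑ i, b i) ≤ ∑ i, (a i - b i) := by
  have : ∑ i, a i ≤ ∑ i, ((a i - b i) + b i) :=
    Finset.sum_le_sum fun i _ => by omega
  rw [Finset.sum_add_distrib] at this
  omega

lemma pow_dvd_wr {n : ℕ} (s : ℂ) (q : Fin n → Polynomial ℂ) (m : Fin n → ℕ)
    (h : ∀ i, (X - C s) ^ (m i) ∣ q i) :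
    (X - C s) ^ ((∑ i, m i) - (∑ i : Fin n, (i : ℕ))) ∣ Wr n q := by
  classical
  rw [Wr, Matrix.det_apply']
  refine Finset.dvd_sum fun σ _ => ?_
  refine Dvd.dvd.mul_left ?_ _
  have h1 : ∀ i : Fin n, (X - C s) ^ (m i - (σ i : ℕ)) ∣ Wmat n q (σ i) i :=
    fun i => dvd_iterate_derivative s (m i) (σ i : ℕ) (q i) (h i)
  have h2 : (∏ i, (X - C s) ^ (m i - (σ i : ℕ))) ∣ ∏ i, Wmat n q (σ i) i :=
    Finset.prod_dvd_prod_of_dvd _ _ fun i _ => h1 i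
  refine dvd_trans (dvd_trans ?_ h2) ?_
  · rw [Finset.prod_pow_eq_pow_sum]
    refine pow_dvd_pow _ ?_
    have h3 : ∑ i, ((σ i : ℕ)) = ∑ i : Fin n, (i : ℕ) := Equiv.sum_comp σ (fun i => (i : ℕ))
    calc (∑ i, m i) - (∑ i : Fin n, (i : ℕ)) = (∑ i, m i) - ∑ i, ((σ i : ℕ)) := by rw [h3]
      _ ≤ ∑ i, (m i - (σ i : ℕ)) := sum_tsub_ge _ _
  · exact dvd_rfl


lemma wr_basis_change {n : ℕ} (p q : Fin n → Polynomial ℂ)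
    (hp : LinearIndependent ℂ p) (hq : LinearIndependent ℂ q)
    (hqV : ∀ j, q j ∈ Submodule.span ℂ (Set.range p)) :
    ∃ c : ℂ, c ≠ 0 ∧ Wr n q = Wr n p * C c := by
  classical
  have hfin : FiniteDimensional ℂ (Submodule.span ℂ (Set.range p)) :=
    FiniteDimensional.span_of_finite ℂ (Set.finite_range p)
  have hrp : Module.finrank ℂ (Submodule.span ℂ (Set.range p)) = n := by
    rw [finrank_span_eq_card hp, Fintype.card_fin]
  have hrq : Module.finrank ℂ (Submodule.span ℂ (Set.range q)) = n := by
    rw [finrank_span_eq_card hq, Fintype.card_fin]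
  have hle : Submodule.span ℂ (Set.range q) ≤ Submodule.span ℂ (Set.range p) :=
    Submodule.span_le.2 (Set.range_subset_iff.2 hqV)
  have hspan : Submodule.span ℂ (Set.range q) = Submodule.span ℂ (Set.range p) :=
    Submodule.eq_of_le_of_finrank_le hle (by rw [hrp, hrq])
  have hpV : ∀ j, p j ∈ Submodule.span ℂ (Set.range q) := by
    intro j
    rw [hspan]
    exact Submodule.subset_span ⟨j, rfl⟩
  choose a ha using fun j => (Submodule.mem_span_range_iff_exists_fun ℂ).1 (hqV j)
  choose b hb using fun j => (Submodule.mem_span_range_iff_exists_fun ℂ).1 (hpV j)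
  set A : Matrix (Fin n) (Fin n) ℂ := Matrix.of fun k j => a j k with hA
  set B : Matrix (Fin n) (Fin n) ℂ := Matrix.of fun k j => b j k with hB
  have hqA : ∀ j, q j = ∑ k, A k j • p k := fun j => (ha j).symm
  have hpB : ∀ j, p j = ∑ k, B k j • q k := fun j => (hb j).symm
  have hAB : A * B = 1 := by
    ext l j
    have hpj : p j = ∑ l, (∑ k, A l k * B k j) • p l := by
      calc p j = ∑ k, B k j • q k := hpB j
        _ = ∑ k, B k j • ∑ l, A l k • p l := by
            refine Finset.sum_congr rfl fun k _ => ?_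
            rw [← hqA k]
        _ = ∑ k, ∑ l, (A l k * B k j) • p l := by
            refine Finset.sum_congr rfl fun k _ => ?_
            rw [Finset.smul_sum]
            refine Finset.sum_congr rfl fun l _ => ?_
            rw [smul_smul, mul_comm]
        _ = ∑ l, ∑ k, (A l k * B k j) • p l := Finset.sum_comm
        _ = ∑ l, (∑ k, A l k * B k j) • p l := by
            refine Finset.sum_congr rfl fun l _ => ?_
            rw [Finset.sum_smul]
    have hzero : ∑ l, ((∑ k, A l k * B k j) - (if l = j then (1 : ℂ) else 0)) • p l = 0 := by
      simp only [sub_smul, Finset.sum_sub_distrib]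
      rw [← hpj]
      have : ∑ l, (if l = j then (1 : ℂ) else 0) • p l = p j := by
        rw [Finset.sum_eq_single j]
        · simp
        · intro l _ hl; simp [hl]
        · intro h; exact absurd (Finset.mem_univ j) h
      rw [this, sub_self]
    have := Fintype.linearIndependent_iff.1 hp _ hzero l
    rw [sub_eq_zero] at this
    rw [Matrix.mul_apply, Matrix.one_apply]
    exact this
  have hdet : A.det ≠ 0 := by
    have : A.det * B.det = 1 := by rw [← Matrix.det_mul, hAB, Matrix.det_one]
    exact left_ne_zero_of_mul_eq_one this
  refine ⟨A.det, hdet, ?_⟩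
  rw [← wr_mul]
  congr 1
  exact funext fun j => (hqA j)


lemma fin_strictMono_gap {n : ℕ} {e : Fin n → ℕ} (he : StrictMono e) :
    ∀ t : ℕ, ∀ a b : Fin n, (b : ℕ) = (a : ℕ) + t → e a + t ≤ e b := by
  intro t
  induction t with
  | zero => intro a b h; have hab : a = b := Fin.ext (by omega); rw [hab]; omega
  | succ t ih =>
    intro a b h
    have hb' : (a : ℕ) + t < n := by omega
    set b' : Fin n := ⟨(a : ℕ) + t, hb'⟩ with hb'def
    have h1 : e a + t ≤ e b' := ih a b' rfl
    have h2 : e b' < e b := he (by rw [Fin.lt_def]; simp [hb'def]; omega)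
    omega

lemma fin_strictMono_ge {n : ℕ} {e : Fin n → ℕ} (he : StrictMono e) (c : ℕ)
    (hc : ∀ j, c ≤ e j) (j : Fin n) : c + (j : ℕ) ≤ e j := by
  have h0 : (0 : ℕ) < n := lt_of_le_of_lt (Nat.zero_le _) j.2
  have := fin_strictMono_gap he (j : ℕ) ⟨0, h0⟩ j (by simp)
  have := hc ⟨0, h0⟩
  omega

lemma cusp_mult (r d : ℕ) (hr : 1 ≤ r) (hd : r ≤ d)
    (p : Fin (r + 1) → Polynomial ℂ)
    (hind : LinearIndependent ℂ p)
    (hdeg : ∀ j, (p j).natDegree ≤ d) (s : ℂ)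
    (hcusp : ¬ LinearIndependent ℂ
      ![fun j => eval s (p j), fun j => eval s (derivative (p j))])
    (hW : Wr (r + 1) p ≠ 0) :
    r ≤ rootMultiplicity s (Wr (r + 1) p) := by
  classical
  set V : Submodule ℂ (Polynomial ℂ) := Submodule.span ℂ (Set.range p) with hV
  have hfin : FiniteDimensional ℂ V := FiniteDimensional.span_of_finite ℂ (Set.finite_range p)
  have hrV : Module.finrank ℂ V = r + 1 := by
    rw [hV, finrank_span_eq_card hind, Fintype.card_fin]
  have hVdeg : ∀ f ∈ V, f.natDegree ≤ d := by
    intro f hf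
    have hle : V ≤ Polynomial.degreeLE ℂ (d : WithBot ℕ) := by
      rw [hV, Submodule.span_le]
      rintro - ⟨j, rfl⟩
      rw [SetLike.mem_coe, mem_degreeLE]
      exact le_trans (degree_le_natDegree) (by exact_mod_cast Nat.cast_le.2 (hdeg j))
    exact natDegree_le_iff_degree_le.2 (mem_degreeLE.1 (hle hf))
  -- the linear map (eval, eval ∘ derivative)
  set L : Polynomial ℂ →ₗ[ℂ] (Fin 2 → ℂ) :=
    LinearMap.pi ![Polynomial.leval s, (Polynomial.leval s).comp Polynomial.derivative] with hL
  set Φ : V →ₗ[ℂ] (Fin 2 → ℂ) := L.comp V.subtype with hΦ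
  -- the 2×(r+1) matrix of values
  set M : Matrix (Fin 2) (Fin (r + 1)) ℂ :=
    ![fun j => eval s (p j), fun j => eval s (derivative (p j))] with hM
  have hLp : ∀ j, L (p j) = M.transpose j := by
    intro j
    funext i
    fin_cases i <;> rfl
  have hrange : LinearMap.range Φ = Submodule.span ℂ (Set.range M.transpose) := by
    rw [hΦ, LinearMap.range_comp, Submodule.range_subtype, hV, Submodule.map_span,
      ← Set.range_comp]
    rw [show (⇑L ∘ p) = M.transpose from funext hLp]
  have hrank1 : Module.finrank ℂ (LinearMap.range Φ) ≤ 1 := by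
    rw [hrange]
    have h1 := Matrix.rank_eq_finrank_span_cols M
    have h2 := Matrix.rank_eq_finrank_span_row M
    rw [show Set.range M.transpose = Set.range M.col from rfl, ← h1, h2]
    obtain ⟨u, hu⟩ : ∃ u : Fin (r + 1) → ℂ,
        Submodule.span ℂ (Set.range M) ≤ Submodule.span ℂ ({u} : Set (Fin (r + 1) → ℂ)) := by
      rw [linearIndependent_fin2] at hcusp
      push_neg at hcusp
      rcases eq_or_ne (M 1) 0 with h10 | h10
      · refine ⟨M 0, Submodule.span_le.2 ?_⟩
        rintro - ⟨i, rfl⟩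
        fin_cases i
        · exact Submodule.mem_span_singleton_self _
        · have hmem : M 1 ∈ Submodule.span ℂ ({M 0} : Set (Fin (r + 1) → ℂ)) := by
            rw [h10]; exact Submodule.zero_mem _
          exact hmem
      · obtain ⟨a, ha⟩ := hcusp h10
        refine ⟨M 1, Submodule.span_le.2 ?_⟩
        rintro - ⟨i, rfl⟩
        fin_cases i
        · have hmem : M 0 ∈ Submodule.span ℂ ({M 1} : Set (Fin (r + 1) → ℂ)) := by
            rw [show M 0 = a • M 1 from ha.symm]; exact Submodule.smul_mem _ _ (Submodule.mem_span_singleton_self _)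
          exact hmem
        · exact Submodule.mem_span_singleton_self _
    refine le_trans (Submodule.finrank_mono hu) ?_
    rcases eq_or_ne u 0 with rfl | hu0
    · rw [Submodule.span_zero_singleton]
      simp
    · rw [finrank_span_singleton hu0]
  have hker : r ≤ Module.finrank ℂ (LinearMap.ker Φ) := by
    have := LinearMap.finrank_range_add_finrank_ker Φ
    rw [hrV] at this
    omega
  set Vs : Submodule ℂ (Polynomial ℂ) := Submodule.map V.subtype (LinearMap.ker Φ) with hVsdef
  have hVsrank : r ≤ Module.finrank ℂ Vs := by
    rw [hVsdef, Submodule.finrank_map_subtype_eq]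
    exact hker
  have hVsmem : ∀ f ∈ Vs, f ∈ V ∧ eval s f = 0 ∧ eval s (derivative f) = 0 := by
    rintro - ⟨x, hx, rfl⟩
    have hx' : Φ x = 0 := hx
    exact ⟨x.2, congrFun hx' 0, congrFun hx' 1⟩
  have hVs2 : ∀ f ∈ Vs, f ≠ 0 → 2 ≤ rootMultiplicity s f := by
    intro f hf hf0
    obtain ⟨-, h1, h2⟩ := hVsmem f hf
    obtain ⟨g, rfl⟩ := (dvd_iff_isRoot).2 h1
    have h3 : eval s g = 0 := by
      rw [derivative_mul] at h2
      simp only [derivative_X, derivative_C, derivative_sub, sub_zero, one_mul] at h2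
      simpa using h2
    obtain ⟨h, rfl⟩ := (dvd_iff_isRoot).2 h3
    refine (le_rootMultiplicity_iff hf0).2 ⟨h, by ring⟩
  obtain ⟨qt, hqtV, hqt0, hqtmono, hqtLI⟩ := echelon_exists (rootMultiplicity s) r d Vs
    hVsrank
    (fun f hf hf0 => by
      have hfd : (X - C s) ^ rootMultiplicity s f ∣ f := pow_rootMultiplicity_dvd f s
      have := natDegree_le_of_dvd hfd hf0
      rw [natDegree_pow, natDegree_X_sub_C, mul_one] at this
      exact le_trans this (hVdeg f (hVsmem f hf).1))
    (wmul_smul s) (wmul_strict s)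
    (fun f g _ _ hf0 hg0 heq => wmul_step s f g hf0 hg0 heq)
  have hq2 : ∀ j : Fin r, (j : ℕ) + 2 ≤ rootMultiplicity s (qt j) := by
    intro j
    have := fin_strictMono_ge hqtmono 2 (fun j => hVs2 _ (hqtV j) (hqt0 j)) j
    omega
  obtain ⟨k, hk⟩ : ∃ k, p k ∉ Submodule.span ℂ (Set.range qt) := by
    by_contra hcon
    push_neg at hcon
    have hVle : V ≤ Submodule.span ℂ (Set.range qt) := by
      rw [hV, Submodule.span_le]
      rintro - ⟨j, rfl⟩
      exact hcon j
    haveI : FiniteDimensional ℂ (Submodule.span ℂ (Set.range qt)) :=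
      FiniteDimensional.span_of_finite ℂ (Set.finite_range qt)
    have h1 : Module.finrank ℂ V ≤ Module.finrank ℂ (Submodule.span ℂ (Set.range qt)) :=
      Submodule.finrank_mono hVle
    have h2 : Module.finrank ℂ (Submodule.span ℂ (Set.range qt)) ≤ r := by
      classical
      refine le_trans (finrank_span_le_card (Set.range qt)) ?_
      rw [Set.toFinset_range]
      exact le_trans (Finset.card_image_le) (by simp)
    rw [hrV] at h1
    omega
  set q : Fin (r + 1) → Polynomial ℂ := Fin.cons (p k) qt with hq
  have hqLI : LinearIndependent ℂ q := hqtLI.fin_cons hk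
  have hqV : ∀ j, q j ∈ Submodule.span ℂ (Set.range p) := by
    intro j
    refine Fin.cases ?_ ?_ j
    · rw [hq, Fin.cons_zero]
      exact Submodule.subset_span ⟨k, rfl⟩
    · intro i
      rw [hq, Fin.cons_succ]
      exact hV ▸ (hVsmem _ (hqtV i)).1
  obtain ⟨c, hc0, hWq⟩ := wr_basis_change p q hind hqLI hqV
  have hWq0 : Wr (r + 1) q ≠ 0 := by
    rw [hWq]
    exact mul_ne_zero hW (fun h => hc0 (C_eq_zero.1 h))
  set mfun : Fin (r + 1) → ℕ := Fin.cons 0 (fun i => rootMultiplicity s (qt i)) with hmfun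
  have hdvd : ∀ i, (X - C s) ^ (mfun i) ∣ q i := by
    intro i
    refine Fin.cases ?_ ?_ i
    · rw [hmfun, Fin.cons_zero, pow_zero]
      exact one_dvd _
    · intro i
      rw [hmfun, hq, Fin.cons_succ, Fin.cons_succ]
      exact pow_rootMultiplicity_dvd _ _
  have hsum : r ≤ (∑ i, mfun i) - (∑ i : Fin (r + 1), (i : ℕ)) := by
    have e1 : ∑ i, mfun i = 0 + ∑ i : Fin r, rootMultiplicity s (qt i) := by
      rw [hmfun, Fin.sum_univ_succ]
      simp
    have e2 : ∑ i : Fin (r + 1), (i : ℕ) = 0 + ∑ i : Fin r, ((i : ℕ) + 1) := by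
      rw [Fin.sum_univ_succ]
      simp
    have e3 : ∑ i : Fin r, ((i : ℕ) + 2) ≤ ∑ i : Fin r, rootMultiplicity s (qt i) :=
      Finset.sum_le_sum fun i _ => hq2 i
    have e4 : ∑ i : Fin r, ((i : ℕ) + 2) = (∑ i : Fin r, ((i : ℕ) + 1)) + r :=
      calc ∑ i : Fin r, ((i : ℕ) + 2) = ∑ i : Fin r, (((i : ℕ) + 1) + 1) := by
            refine Finset.sum_congr rfl fun i _ => by ring
        _ = (∑ i : Fin r, ((i : ℕ) + 1)) + ∑ _i : Fin r, 1 := Finset.sum_add_distrib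
        _ = (∑ i : Fin r, ((i : ℕ) + 1)) + r := by simp
    omega
  have hdvd2 : (X - C s) ^ r ∣ Wr (r + 1) q :=
    dvd_trans (pow_dvd_pow _ hsum) (pow_dvd_wr s q mfun hdvd)
  have hrm : r ≤ rootMultiplicity s (Wr (r + 1) q) :=
    (le_rootMultiplicity_iff hWq0).2 hdvd2
  rwa [hWq, rootMultiplicity_mul (hWq ▸ hWq0), rootMultiplicity_C, add_zero] at hrm


/-- Let `p₀, …, p_r` be linearly independent complex polynomials of degree at most `d`
(with `1 ≤ r ≤ d`).  The set of points `s` at which the vectors `(p₀(s), …, p_r(s))`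
and `(p₀′(s), …, p_r′(s))` are linearly dependent is finite, of cardinality `N` with
`r·N ≤ (r+1)(d−r)`: a rational curve of degree `d` in `ℙ^r` has at most `(r+1)(d−r)/r`
cusps. -/
theorem cusp_count_bound (r d : ℕ) (hr : 1 ≤ r) (hd : r ≤ d)
    (p : Fin (r + 1) → Polynomial ℂ)
    (hind : LinearIndependent ℂ p)
    (hdeg : ∀ j, (p j).natDegree ≤ d) :
    {s : ℂ | ¬ LinearIndependent ℂ
        ![fun j => eval s (p j), fun j => eval s (derivative (p j))]}.Finite ∧
    r * {s : ℂ | ¬ LinearIndependent ℂ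
        ![fun j => eval s (p j), fun j => eval s (derivative (p j))]}.ncard ≤
      (r + 1) * (d - r) := by
  classical
  set V : Submodule ℂ (Polynomial ℂ) := Submodule.span ℂ (Set.range p) with hV
  have hfin : FiniteDimensional ℂ V := FiniteDimensional.span_of_finite ℂ (Set.finite_range p)
  have hrV : Module.finrank ℂ V = r + 1 := by
    rw [hV, finrank_span_eq_card hind, Fintype.card_fin]
  have hVdeg : ∀ f ∈ V, f.natDegree ≤ d := by
    intro f hf
    have hle : V ≤ Polynomial.degreeLE ℂ (d : WithBot ℕ) := by
      rw [hV, Submodule.span_le]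
      rintro - ⟨j, rfl⟩
      rw [SetLike.mem_coe, mem_degreeLE]
      exact le_trans (degree_le_natDegree) (by exact_mod_cast Nat.cast_le.2 (hdeg j))
    exact natDegree_le_iff_degree_le.2 (mem_degreeLE.1 (hle hf))
  -- echelon basis by degree
  obtain ⟨qd, hqdV, hqd0, hqdmono, hqdLI⟩ := echelon_exists
    (fun f => (d + 1) - f.natDegree) (r + 1) (d + 1) V (le_of_eq hrV.symm)
    (fun f _ _ => Nat.sub_le _ _)
    (wdeg_smul d) (wdeg_strict d)
    (fun f g hfV hgV hf0 hg0 hw => by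
      have hfd : f.natDegree ≤ d := hVdeg f hfV
      have hgd : g.natDegree ≤ d := hVdeg g hgV
      have hw' : (d + 1) - f.natDegree = (d + 1) - g.natDegree := hw
      have hdeq : f.natDegree = g.natDegree := by omega
      have hlcg : g.leadingCoeff ≠ 0 := leadingCoeff_ne_zero.2 hg0
      have hlcf : f.leadingCoeff ≠ 0 := leadingCoeff_ne_zero.2 hf0
      set c : ℂ := f.leadingCoeff / g.leadingCoeff with hc
      have hc0 : c ≠ 0 := div_ne_zero hlcf hlcg
      refine ⟨c, ?_⟩
      rcases eq_or_ne (f - c • g) 0 with h0 | h0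
      · exact Or.inl h0
      · refine Or.inr ⟨h0, ?_⟩
        have hdegcg : (c • g).degree = g.degree := by
          rw [smul_eq_C_mul, degree_C_mul hc0]
        have hlccg : (c • g).leadingCoeff = f.leadingCoeff := by
          rw [smul_eq_C_mul, leadingCoeff_mul, leadingCoeff_C, hc, div_mul_cancel₀ _ hlcg]
        have hdlt : (f - c • g).degree < f.degree := by
          refine degree_sub_lt ?_ hf0 hlccg.symm
          rw [hdegcg, degree_eq_natDegree hf0, degree_eq_natDegree hg0]
          exact_mod_cast hdeq
        have hnlt : (f - c • g).natDegree < f.natDegree :=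
          (natDegree_lt_natDegree_iff h0).2 hdlt
        show (d + 1) - f.natDegree < (d + 1) - (f - c • g).natDegree
        omega)
  -- reverse to get increasing degrees
  set q : Fin (r + 1) → Polynomial ℂ := fun j => qd j.rev with hqdef
  have hq0 : ∀ j, q j ≠ 0 := fun j => hqd0 _
  have hqV : ∀ j, q j ∈ Submodule.span ℂ (Set.range p) := fun j => hqdV _
  have hqdle : ∀ j, (qd j).natDegree ≤ d := fun j => hVdeg _ (hqdV j)
  have hqmono : StrictMono fun j => (q j).natDegree := by
    intro a b hab
    have hrev : b.rev < a.rev := by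
      rw [Fin.lt_def] at hab ⊢
      rw [Fin.val_rev, Fin.val_rev]
      omega
    have h3 : (d + 1) - (qd b.rev).natDegree < (d + 1) - (qd a.rev).natDegree := hqdmono hrev
    have h1 := hqdle b.rev
    have h2 := hqdle a.rev
    show (qd a.rev).natDegree < (qd b.rev).natDegree
    omega
  have hqLI : LinearIndependent ℂ q := hqdLI.comp _ (fun a b hab => by
    have : a.rev = b.rev := hab
    exact Fin.rev_injective this)
  -- relate Wr p and Wr q
  obtain ⟨c, hc0, hWq⟩ := wr_basis_change p q hind hqLI hqV
  have hWq0 : Wr (r + 1) q ≠ 0 := wr_ne_zero q hq0 hqmono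
  have hWp0 : Wr (r + 1) p ≠ 0 := by
    intro h
    rw [h, zero_mul] at hWq
    exact hWq0 hWq
  have hdegeq : (Wr (r + 1) q).natDegree = (Wr (r + 1) p).natDegree := by
    rw [hWq, natDegree_mul hWp0 (C_ne_zero.2 hc0), natDegree_C, add_zero]
  -- degree bound
  have hWdeg : (Wr (r + 1) p).natDegree ≤ (r + 1) * (d - r) := by
    rw [← hdegeq]
    have hbound : ∀ j : Fin (r + 1), (q j).natDegree ≤ (d - r) + (j : ℕ) := by
      intro j
      have hgap : (q j).natDegree + (r - (j : ℕ)) ≤ (q (Fin.last r)).natDegree :=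
        fin_strictMono_gap hqmono (r - (j : ℕ)) j (Fin.last r)
          (by rw [Fin.val_last]; omega)
      have hlast : (q (Fin.last r)).natDegree ≤ d := hVdeg _ (hqV _)
      have hj : (j : ℕ) ≤ r := Nat.lt_succ_iff.1 j.2
      omega
    have hsum : ∑ j, (q j).natDegree ≤ (r + 1) * (d - r) + ∑ j : Fin (r + 1), (j : ℕ) := by
      calc ∑ j, (q j).natDegree ≤ ∑ j : Fin (r + 1), ((d - r) + (j : ℕ)) :=
            Finset.sum_le_sum fun j _ => hbound j
        _ = (r + 1) * (d - r) + ∑ j : Fin (r + 1), (j : ℕ) := by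
            rw [Finset.sum_add_distrib, Finset.sum_const, Finset.card_univ, Fintype.card_fin,
              smul_eq_mul]
    exact le_trans (natDegree_wr_le q) (by omega)
  -- the cusp set
  set Cset : Set ℂ := {s : ℂ | ¬ LinearIndependent ℂ
      ![fun j => eval s (p j), fun j => eval s (derivative (p j))]} with hCset
  have hrm : ∀ s ∈ Cset, r ≤ rootMultiplicity s (Wr (r + 1) p) :=
    fun s hs => cusp_mult r d hr hd p hind hdeg s hs hWp0
  have hsub : Cset ⊆ ↑((Wr (r + 1) p).roots.toFinset) := by
    intro s hs
    rw [Finset.mem_coe, Multiset.mem_toFinset, mem_roots hWp0]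
    have := hrm s hs
    exact (rootMultiplicity_pos hWp0).1 (by omega)
  have hfinite : Cset.Finite := Set.Finite.subset (Finset.finite_toSet _) hsub
  refine ⟨hfinite, ?_⟩
  set F : Finset ℂ := hfinite.toFinset with hF
  have hFsub : F ⊆ (Wr (r + 1) p).roots.toFinset := by
    intro s hs
    exact hsub (hfinite.mem_toFinset.1 hs)
  have hNcard : Cset.ncard = F.card := Set.ncard_eq_toFinset_card Cset hfinite
  have step1 : r * Cset.ncard = ∑ _s ∈ F, r := by
    rw [Finset.sum_const, hNcard, smul_eq_mul, mul_comm]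
  have step2 : ∑ _s ∈ F, r ≤ ∑ s ∈ F, rootMultiplicity s (Wr (r + 1) p) :=
    Finset.sum_le_sum fun s hs => hrm s (hfinite.mem_toFinset.1 hs)
  have step3 : ∑ s ∈ F, rootMultiplicity s (Wr (r + 1) p) ≤
      Multiset.card ((Wr (r + 1) p).roots) := by
    calc ∑ s ∈ F, rootMultiplicity s (Wr (r + 1) p)
        = ∑ s ∈ F, ((Wr (r + 1) p).roots).count s := by
          refine Finset.sum_congr rfl fun s _ => ?_
          rw [count_roots]
      _ ≤ ∑ s ∈ (Wr (r + 1) p).roots.toFinset, ((Wr (r + 1) p).roots).count s :=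
          Finset.sum_le_sum_of_subset hFsub
      _ = Multiset.card ((Wr (r + 1) p).roots) := Multiset.toFinset_sum_count_eq _
  have step4 : Multiset.card ((Wr (r + 1) p).roots) ≤ (Wr (r + 1) p).natDegree :=
    card_roots' _
  omega
end
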